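/- arXiv:math/0205076 — 3 statements merged into one kernel-verified Lean document; each statement's English description precedes it below -/
import Mathlib

section
/- There exists a state ω on L^∞((0,∞)) satisfying all of the following: (1) ω(f) = 0 for every f having a representative in C₀((0,∞)) (continuous functions vanishing at infinity of the locally compact space (0,∞)); (2) for every real-valued f, ess liminf_{t→∞} f(t) ≤ ω(f) ≤ ess limsup_{t→∞} f(t); (3) ω(f) = 0 whenever f has compact essential support in (0,∞); (4) ω(D_c f) = ω(f) for all c > 0; (5) ω(P^a f) = ω(f) for all a > 0; (6) ω(M f) = ω(f) for all f. -/
open MeasureTheory Filter Set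
open Topology

noncomputable section

/-- Lebesgue measure on `(0,∞)`, i.e. Lebesgue measure on `ℝ` restricted to `Set.Ioi 0`. -/
def μ₀ : Measure ℝ := volume.restrict (Set.Ioi 0)

/-- `f` is (a representative of) an element of `L^∞(μ)`: essentially bounded and
(a.e.-strongly) measurable. -/
def MemLinf (μ : Measure ℝ) (f : ℝ → ℝ) : Prop := MeasureTheory.MemLp f ⊤ μ

/-- A state on `L^∞(μ)`, encoded as a real functional on representatives: it is linear on
essentially bounded measurable functions, depends only on the a.e.-equivalence class,
is positive (`f ≥ 0` a.e. implies `ω f ≥ 0`), and satisfies `ω(1) = 1`. -/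
structure LinfState (μ : Measure ℝ) where
  toFun : (ℝ → ℝ) → ℝ
  map_add : ∀ f g : ℝ → ℝ, MemLinf μ f → MemLinf μ g → toFun (f + g) = toFun f + toFun g
  map_smul : ∀ (c : ℝ) (f : ℝ → ℝ), MemLinf μ f → toFun (c • f) = c * toFun f
  congr_ae : ∀ f g : ℝ → ℝ, f =ᵐ[μ] g → toFun f = toFun g
  nonneg : ∀ f : ℝ → ℝ, MemLinf μ f → (0 ≤ᵐ[μ] f) → 0 ≤ toFun f
  map_one : toFun 1 = 1

/-- The Cesàro mean `M` on functions on `(0,∞)`: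
`M f (t) = (1/log t) ∫₁ᵗ f(s) ds/s` for `t > 1`, and `0` for `t ≤ 1`. -/
def cesaroMean (f : ℝ → ℝ) : ℝ → ℝ := fun t =>
  if 1 < t then (Real.log t)⁻¹ * ∫ s in Set.Ioc (1 : ℝ) t, f s / s else 0

namespace StateAux

/-- the weight `1/(s log s)` -/
def w0 (s : ℝ) : ℝ := (s * Real.log s)⁻¹

lemma one_lt_expOne : (1:ℝ) < Real.exp 1 := by
  have := Real.add_one_le_exp (1:ℝ); linarith

lemma expOne_pos : (0:ℝ) < Real.exp 1 := Real.exp_pos 1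

lemma log_expOne : Real.log (Real.exp 1) = 1 := Real.log_exp 1

lemma loglog_expOne : Real.log (Real.log (Real.exp 1)) = 0 := by
  rw [log_expOne, Real.log_one]

lemma loglog_pos {Y : ℝ} (hY : Real.exp 1 < Y) : 0 < Real.log (Real.log Y) :=
  Real.log_pos (by rw [← log_expOne]; exact Real.log_lt_log expOne_pos hY)

lemma measurable_w0 : Measurable w0 := (measurable_id.mul Real.measurable_log).inv

lemma hasDerivAt_loglog {x : ℝ} (hx : 1 < x) :
    HasDerivAt (fun y => Real.log (Real.log y)) (w0 x) x := by
  have hx0 : (0:ℝ) < x := by linarith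
  have h1 : HasDerivAt Real.log x⁻¹ x := Real.hasDerivAt_log hx0.ne'
  have h2 : HasDerivAt Real.log (Real.log x)⁻¹ (Real.log x) :=
    Real.hasDerivAt_log (Real.log_pos hx).ne'
  have := h2.comp x h1
  rw [show w0 x = (Real.log x)⁻¹ * x⁻¹ by rw [w0, mul_inv, mul_comm]]
  exact this

lemma hasDerivAt_neg_inv_log {x : ℝ} (hx : 1 < x) :
    HasDerivAt (fun y => -(Real.log y)⁻¹) (x * (Real.log x)^2)⁻¹ x := by
  have hx0 : (0:ℝ) < x := by linarith
  have hlog := Real.log_pos hx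
  have h1 : HasDerivAt Real.log x⁻¹ x := Real.hasDerivAt_log hx0.ne'
  have h2 := (h1.inv hlog.ne').neg
  rw [show (x * Real.log x ^ 2)⁻¹ = -(-x⁻¹ / Real.log x ^ 2) by
    rw [mul_inv, neg_div, neg_neg, div_eq_mul_inv, inv_mul_eq_div, div_eq_mul_inv, mul_comm]]
  exact h2

lemma w0_pos {x : ℝ} (hx : 1 < x) : 0 < w0 x := by
  have h := Real.log_pos hx
  have hx0 : (0:ℝ) < x := by linarith
  exact inv_pos.2 (mul_pos hx0 h)

lemma continuousOn_w0 {A B : ℝ} (hA : 1 < A) : ContinuousOn w0 (Icc A B) := by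
  apply ContinuousOn.inv₀
  · exact continuousOn_id.mul (Real.continuousOn_log.mono (by
      intro y hy
      simp only [mem_compl_iff, mem_singleton_iff]
      have : (0:ℝ) < y := by linarith [hy.1]
      exact this.ne'))
  · intro x hx
    have hx1 : 1 < x := lt_of_lt_of_le hA hx.1
    have h2 := Real.log_pos hx1
    have hx0 : (0:ℝ) < x := by linarith
    exact (mul_pos hx0 h2).ne'

lemma continuousOn_w2 {A B : ℝ} (hA : 1 < A) :
    ContinuousOn (fun s => (s * (Real.log s)^2)⁻¹) (Icc A B) := by
  apply ContinuousOn.inv₀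
  · exact continuousOn_id.mul ((Real.continuousOn_log.mono (by
      intro y hy
      simp only [mem_compl_iff, mem_singleton_iff]
      have : (0:ℝ) < y := by linarith [hy.1]
      exact this.ne')).pow 2)
  · intro x hx
    have hx1 : 1 < x := lt_of_lt_of_le hA hx.1
    have h2 := Real.log_pos hx1
    have hx0 : (0:ℝ) < x := by linarith
    positivity

lemma integral_w0 {A B : ℝ} (hA : 1 < A) (hAB : A ≤ B) :
    ∫ s in Ioc A B, w0 s = Real.log (Real.log B) - Real.log (Real.log A) := by
  rw [← intervalIntegral.integral_of_le hAB]
  have hc : ContinuousOn w0 (uIcc A B) := by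
    rw [uIcc_of_le hAB]; exact continuousOn_w0 hA
  exact intervalIntegral.integral_eq_sub_of_hasDerivAt
    (fun x hx => by
      rw [uIcc_of_le hAB] at hx
      exact hasDerivAt_loglog (lt_of_lt_of_le hA hx.1))
    hc.intervalIntegrable

lemma integral_w2 {A B : ℝ} (hA : 1 < A) (hAB : A ≤ B) :
    ∫ s in Ioc A B, (s * (Real.log s)^2)⁻¹ = (Real.log A)⁻¹ - (Real.log B)⁻¹ := by
  rw [← intervalIntegral.integral_of_le hAB]
  have hc : ContinuousOn (fun s => (s * (Real.log s)^2)⁻¹) (uIcc A B) := by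
    rw [uIcc_of_le hAB]; exact continuousOn_w2 hA
  have := intervalIntegral.integral_eq_sub_of_hasDerivAt
    (f := fun y => -(Real.log y)⁻¹)
    (fun x hx => by
      rw [uIcc_of_le hAB] at hx
      exact hasDerivAt_neg_inv_log (lt_of_lt_of_le hA hx.1))
    hc.intervalIntegrable
  rw [this]; ring

/-- boundedness/measurability data for a representative of `L^∞(μ₀)` -/
structure Bdd (f : ℝ → ℝ) (C : ℝ) : Prop where
  meas : AEStronglyMeasurable f μ₀
  nonneg : 0 ≤ C
  bound : ∀ᵐ x ∂μ₀, |f x| ≤ C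

lemma memLinf_bdd {f : ℝ → ℝ} (h : MeasureTheory.MemLp f ⊤ μ₀) : ∃ C, Bdd f C := by
  refine ⟨(eLpNormEssSup f μ₀).toReal, h.1, ENNReal.toReal_nonneg, ?_⟩
  have h2 : eLpNormEssSup f μ₀ < ⊤ := by
    have := h.2; rwa [eLpNorm_exponent_top] at this
  filter_upwards [enorm_ae_le_eLpNormEssSup f μ₀] with x hx
  rw [← Real.norm_eq_abs]
  have := ENNReal.toReal_mono h2.ne hx
  simpa using this

lemma restrict_Ioc_eq {a b : ℝ} (ha : 0 < a) :
    volume.restrict (Ioc a b) = μ₀.restrict (Ioc a b) := by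
  rw [μ₀, Measure.restrict_restrict measurableSet_Ioc]
  have h : Ioc a b ∩ Ioi 0 = Ioc a b := inter_eq_left.2 (fun x hx => lt_trans ha hx.1)
  rw [h]

lemma integrableOn_weighted {f : ℝ → ℝ} {C : ℝ} (hB : Bdd f C) {w : ℝ → ℝ}
    (hw : Measurable w) {a b D : ℝ} (ha : 0 < a)
    (hD : ∀ u ∈ Ioc a b, |w u| ≤ D) :
    IntegrableOn (fun u => f u * w u) (Ioc a b) := by
  have hmeas : AEStronglyMeasurable (fun u => f u * w u) (volume.restrict (Ioc a b)) := by
    rw [restrict_Ioc_eq ha]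
    exact (hB.meas.restrict).mul hw.aestronglyMeasurable.restrict
  have hae : ∀ᵐ x ∂(volume.restrict (Ioc a b)), |f x| ≤ C := by
    rw [restrict_Ioc_eq ha]; exact ae_restrict_of_ae hB.bound
  refine Integrable.mono' ((integrableOn_const_iff (C := C * D)).2 (Or.inr measure_Ioc_lt_top))
    hmeas ?_
  filter_upwards [hae,
    (ae_restrict_iff' measurableSet_Ioc).2 (Filter.Eventually.of_forall hD)] with x h1 h2
  rw [Real.norm_eq_abs, abs_mul]
  exact mul_le_mul h1 h2 (abs_nonneg _) hB.nonneg

lemma integrableOn_fw0 {f : ℝ → ℝ} {C : ℝ} (hB : Bdd f C) {a b : ℝ} (ha : 1 < a) :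
    IntegrableOn (fun u => f u * w0 u) (Ioc a b) := by
  refine integrableOn_weighted hB measurable_w0 (by linarith) (D := (a * Real.log a)⁻¹) ?_
  intro u hu
  have hu1 : 1 < u := lt_trans ha hu.1
  rw [abs_of_pos (w0_pos hu1)]
  have h1 := Real.log_pos ha
  have h2 : Real.log a ≤ Real.log u := Real.log_le_log (by linarith) hu.1.le
  have key : a * Real.log a ≤ u * Real.log u := by
    nlinarith [mul_nonneg (by linarith : (0:ℝ) ≤ u) (by linarith : (0:ℝ) ≤ Real.log u - Real.log a),
      mul_nonneg (by linarith [hu.1] : (0:ℝ) ≤ u - a) h1.le]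
  exact inv_anti₀ (by positivity) key

lemma split_fw0 {f : ℝ → ℝ} {C : ℝ} (hB : Bdd f C) {a m b : ℝ} (ha : 1 < a)
    (h1 : a ≤ m) (h2 : m ≤ b) :
    ∫ u in Ioc a b, f u * w0 u
      = (∫ u in Ioc a m, f u * w0 u) + ∫ u in Ioc m b, f u * w0 u := by
  rw [← Ioc_union_Ioc_eq_Ioc h1 h2]
  exact setIntegral_union (Ioc_disjoint_Ioc_of_le le_rfl) measurableSet_Ioc
    (integrableOn_fw0 hB ha) (integrableOn_fw0 hB (lt_of_lt_of_le ha h1))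

lemma abs_integral_fw0_le {f : ℝ → ℝ} {C : ℝ} (hB : Bdd f C) {a b : ℝ} (ha : 1 < a)
    (hab : a ≤ b) :
    |∫ u in Ioc a b, f u * w0 u| ≤ C * (Real.log (Real.log b) - Real.log (Real.log a)) := by
  have key : |∫ u in Ioc a b, f u * w0 u| ≤ ∫ u in Ioc a b, C * w0 u := by
    rw [← Real.norm_eq_abs]
    refine norm_integral_le_of_norm_le ((integrableOn_fw0 (C := C)
      ⟨aestronglyMeasurable_const, hB.nonneg, Filter.Eventually.of_forall (by
        intro x; rw [abs_of_nonneg hB.nonneg])⟩ ha) ) ?_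
    have hae : ∀ᵐ x ∂(volume.restrict (Ioc a b)), |f x| ≤ C := by
      rw [restrict_Ioc_eq (by linarith : (0:ℝ) < a)]; exact ae_restrict_of_ae hB.bound
    filter_upwards [hae,
      (ae_restrict_iff' measurableSet_Ioc).2 (Filter.Eventually.of_forall
        (fun u (hu : u ∈ Ioc a b) => w0_pos (lt_trans ha hu.1)))] with x hx1 hx2
    rw [Real.norm_eq_abs, abs_mul, abs_of_pos hx2]
    exact mul_le_mul_of_nonneg_right hx1 hx2.le
  calc |∫ u in Ioc a b, f u * w0 u| ≤ ∫ u in Ioc a b, C * w0 u := key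
    _ = C * (Real.log (Real.log b) - Real.log (Real.log a)) := by
        rw [integral_const_mul, integral_w0 ha hab]

/-- the log-log Cesàro integral `∫_{(e,Y]} f(s)/(s log s) ds`. -/
def J (f : ℝ → ℝ) (Y : ℝ) : ℝ := ∫ s in Ioc (Real.exp 1) Y, f s * w0 s

/-- the log-log Cesàro average. -/
def phi (f : ℝ → ℝ) (Y : ℝ) : ℝ :=
  if Real.exp 1 < Y then (Real.log (Real.log Y))⁻¹ * J f Y else 0

/-- a fixed ultrafilter refining `atTop` on `ℝ`. -/
def V : Ultrafilter ℝ := Ultrafilter.of atTop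

lemma V_le_atTop : (V : Filter ℝ) ≤ atTop := Ultrafilter.of_le _

/-- The state: ultrafilter limit of log-log Cesàro averages. -/
def omegaFun (f : ℝ → ℝ) : ℝ := limUnder (V : Filter ℝ) (phi f)

lemma Bdd.const (b : ℝ) : Bdd (fun _ => b) |b| :=
  ⟨aestronglyMeasurable_const, abs_nonneg b, Filter.Eventually.of_forall (fun _ => le_refl _)⟩

lemma Bdd.neg {f : ℝ → ℝ} {C : ℝ} (hB : Bdd f C) : Bdd (fun x => -f x) C :=
  ⟨hB.meas.neg, hB.nonneg, by filter_upwards [hB.bound] with x hx; rwa [abs_neg]⟩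

lemma Bdd.mul_w0 {b : ℝ} : ∀ x, b * w0 x = (fun _ => b) x * w0 x := fun _ => rfl

lemma abs_J_le {f : ℝ → ℝ} {C : ℝ} (hB : Bdd f C) {Y : ℝ} (hY : Real.exp 1 ≤ Y) :
    |J f Y| ≤ C * Real.log (Real.log Y) := by
  have := abs_integral_fw0_le hB one_lt_expOne hY
  rwa [loglog_expOne, sub_zero] at this

lemma abs_phi_le {f : ℝ → ℝ} {C : ℝ} (hB : Bdd f C) (Y : ℝ) : |phi f Y| ≤ C := by
  unfold phi
  split_ifs with h
  · have h1 := loglog_pos h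
    rw [abs_mul, abs_of_pos (inv_pos.2 h1)]
    calc (Real.log (Real.log Y))⁻¹ * |J f Y|
        ≤ (Real.log (Real.log Y))⁻¹ * (C * Real.log (Real.log Y)) :=
          mul_le_mul_of_nonneg_left (abs_J_le hB h.le) (inv_pos.2 h1).le
      _ = C := by field_simp
  · simpa using hB.nonneg

lemma omega_eq_of_tendsto {f : ℝ → ℝ} {L : ℝ} (h : Tendsto (phi f) (V : Filter ℝ) (𝓝 L)) :
    omegaFun f = L := h.limUnder_eq

lemma tendsto_phi {f : ℝ → ℝ} {C : ℝ} (hB : Bdd f C) :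
    Tendsto (phi f) (V : Filter ℝ) (𝓝 (omegaFun f)) := by
  have hmem : Icc (-C) C ∈ Ultrafilter.map (phi f) V :=
    Filter.mem_map.2 (Filter.univ_mem'
      (fun Y => by simpa using abs_le.1 (abs_phi_le hB Y)))
  obtain ⟨L, _, hle⟩ := isCompact_Icc.ultrafilter_le_nhds (V.map (phi f))
    (le_principal_iff.2 hmem)
  have ht : Tendsto (phi f) (V : Filter ℝ) (𝓝 L) := by
    rwa [Tendsto, ← Ultrafilter.coe_map]
  rw [omega_eq_of_tendsto ht]; exact ht

lemma tendsto_loglog_inv : Tendsto (fun Y => (Real.log (Real.log Y))⁻¹) atTop (𝓝 0) :=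
  (Real.tendsto_log_atTop.comp Real.tendsto_log_atTop).inv_tendsto_atTop

/-- Master comparison lemma: if the log-log Cesàro integrals of `g` and `f` differ by a
bounded amount, the states agree. -/
lemma omega_eq_of_bounded_diff {f g : ℝ → ℝ} {C K Y₀ : ℝ} (hB : Bdd f C)
    (h : ∀ Y, Y₀ ≤ Y → |J g Y - J f Y| ≤ K) : omegaFun g = omegaFun f := by
  have hK : 0 ≤ K := le_trans (abs_nonneg _) (h Y₀ le_rfl)
  have hdiff : Tendsto (fun Y => phi g Y - phi f Y) atTop (𝓝 0) := by
    apply squeeze_zero_norm' (a := fun Y => K * (Real.log (Real.log Y))⁻¹)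
    · filter_upwards [eventually_ge_atTop Y₀, eventually_gt_atTop (Real.exp 1)] with Y h1 h2
      have h3 := loglog_pos h2
      rw [phi, phi, if_pos h2, if_pos h2, ← mul_sub, Real.norm_eq_abs, abs_mul,
        abs_of_pos (inv_pos.2 h3), mul_comm]
      exact mul_le_mul_of_nonneg_right (h Y h1) (inv_pos.2 h3).le
    · simpa using tendsto_const_nhds.mul tendsto_loglog_inv
  have hf := tendsto_phi hB
  have hg : Tendsto (phi g) (V : Filter ℝ) (𝓝 (omegaFun f)) := by
    have := hf.add (hdiff.mono_left V_le_atTop)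
    simpa using this
  exact hg.limUnder_eq

lemma omega_le {f : ℝ → ℝ} {C b T : ℝ} (hB : Bdd f C) (hT : Real.exp 1 ≤ T)
    (hb : ∀ᵐ x ∂μ₀, T < x → f x ≤ b) : omegaFun f ≤ b := by
  set D := |J f T - b * Real.log (Real.log T)| with hD
  have key : ∀ Y, T < Y → phi f Y ≤ b + D * (Real.log (Real.log Y))⁻¹ := by
    intro Y hY
    have hEY : Real.exp 1 < Y := lt_of_le_of_lt hT hY
    have h1T : 1 < T := lt_of_lt_of_le one_lt_expOne hT
    have hll := loglog_pos hEY
    have hsplit : J f Y = J f T + ∫ u in Ioc T Y, f u * w0 u :=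
      split_fw0 hB one_lt_expOne hT hY.le
    have hmono : ∫ u in Ioc T Y, f u * w0 u ≤ ∫ u in Ioc T Y, b * w0 u := by
      apply integral_mono_ae (integrableOn_fw0 hB h1T)
        (by exact integrableOn_fw0 (Bdd.const b) h1T (b := Y))
      rw [restrict_Ioc_eq (by linarith : (0:ℝ) < T)]
      filter_upwards [ae_restrict_of_ae hb,
        (ae_restrict_iff' measurableSet_Ioc).2 (Filter.Eventually.of_forall
          (fun u (hu : u ∈ Ioc T Y) => hu.1))] with x hx1 hx2
      exact mul_le_mul_of_nonneg_right (hx1 hx2) (w0_pos (lt_trans h1T hx2)).le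
    have hint : ∫ u in Ioc T Y, b * w0 u
        = b * (Real.log (Real.log Y) - Real.log (Real.log T)) := by
      rw [integral_const_mul, integral_w0 h1T hY.le]
    have hJ : J f Y ≤ J f T + b * (Real.log (Real.log Y) - Real.log (Real.log T)) := by
      rw [hsplit]; linarith [hmono, hint.le, hint.ge]
    rw [phi, if_pos hEY]
    have h2 : (Real.log (Real.log Y))⁻¹ * J f Y
        ≤ (Real.log (Real.log Y))⁻¹ *
          (J f T + b * (Real.log (Real.log Y) - Real.log (Real.log T))) :=
      mul_le_mul_of_nonneg_left hJ (inv_pos.2 hll).le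
    calc (Real.log (Real.log Y))⁻¹ * J f Y
        ≤ (Real.log (Real.log Y))⁻¹ *
          (J f T + b * (Real.log (Real.log Y) - Real.log (Real.log T))) := h2
      _ = b + (J f T - b * Real.log (Real.log T)) * (Real.log (Real.log Y))⁻¹ := by
          field_simp; ring
      _ ≤ b + D * (Real.log (Real.log Y))⁻¹ := by
          have := le_abs_self (J f T - b * Real.log (Real.log T))
          have h3 := (inv_pos.2 hll).le
          nlinarith
  have hev : ∀ᶠ Y in (V : Filter ℝ), phi f Y ≤ b + D * (Real.log (Real.log Y))⁻¹ :=
    (eventually_gt_atTop T).mono key |>.filter_mono V_le_atTop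
  have h2 : Tendsto (fun Y => b + D * (Real.log (Real.log Y))⁻¹) (V : Filter ℝ) (𝓝 b) := by
    have : Tendsto (fun Y => b + D * (Real.log (Real.log Y))⁻¹) atTop (𝓝 (b + D * 0)) :=
      tendsto_const_nhds.add (tendsto_const_nhds.mul tendsto_loglog_inv)
    simpa using this.mono_left V_le_atTop
  exact le_of_tendsto_of_tendsto (tendsto_phi hB) h2 hev

lemma phi_neg (f : ℝ → ℝ) : phi (fun x => -f x) = fun Y => -phi f Y := by
  funext Y
  unfold phi J
  split_ifs with h
  · rw [← mul_neg, ← integral_neg]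
    congr 1
    apply integral_congr_ae (Filter.Eventually.of_forall (fun x => by ring))
  · simp

lemma omega_neg {f : ℝ → ℝ} {C : ℝ} (hB : Bdd f C) :
    omegaFun (fun x => -f x) = -omegaFun f := by
  have := (tendsto_phi hB).neg
  rw [← phi_neg f] at this
  exact this.limUnder_eq

lemma omega_ge {f : ℝ → ℝ} {C b T : ℝ} (hB : Bdd f C) (hT : Real.exp 1 ≤ T)
    (hb : ∀ᵐ x ∂μ₀, T < x → b ≤ f x) : b ≤ omegaFun f := by
  have h := omega_le (hB.neg) hT (by
    filter_upwards [hb] with x hx hTx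
    exact neg_le_neg (hx hTx))
  rw [omega_neg hB] at h
  linarith

lemma phi_congr {f g : ℝ → ℝ} (h : f =ᵐ[μ₀] g) : phi f = phi g := by
  funext Y
  unfold phi J
  split_ifs with hY
  · congr 1
    apply integral_congr_ae
    rw [restrict_Ioc_eq expOne_pos]
    filter_upwards [ae_restrict_of_ae h] with x hx
    rw [hx]
  · rfl

lemma omega_congr {f g : ℝ → ℝ} (h : f =ᵐ[μ₀] g) : omegaFun f = omegaFun g := by
  unfold omegaFun; rw [phi_congr h]

lemma phi_add {f g : ℝ → ℝ} {C D : ℝ} (hBf : Bdd f C) (hBg : Bdd g D) {Y : ℝ} :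
    phi (f + g) Y = phi f Y + phi g Y := by
  unfold phi J
  split_ifs with hY
  · rw [← mul_add, ← integral_add (integrableOn_fw0 hBf one_lt_expOne)
      (integrableOn_fw0 hBg one_lt_expOne)]
    congr 1
    apply integral_congr_ae (Filter.Eventually.of_forall (fun x => by simp [add_mul]))
  · simp

lemma omega_add {f g : ℝ → ℝ} {C D : ℝ} (hBf : Bdd f C) (hBg : Bdd g D) :
    omegaFun (f + g) = omegaFun f + omegaFun g := by
  have h := (tendsto_phi hBf).add (tendsto_phi hBg)
  have h2 : Tendsto (phi (f + g)) (V : Filter ℝ) (𝓝 (omegaFun f + omegaFun g)) := by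
    apply h.congr
    intro Y
    exact (phi_add hBf hBg).symm
  exact h2.limUnder_eq

lemma phi_smul (c : ℝ) (f : ℝ → ℝ) (Y : ℝ) : phi (c • f) Y = c * phi f Y := by
  unfold phi J
  split_ifs with hY
  · have h : (∫ s in Ioc (Real.exp 1) Y, (c • f) s * w0 s)
        = c * ∫ s in Ioc (Real.exp 1) Y, f s * w0 s := by
      rw [← integral_const_mul]
      exact integral_congr_ae (Filter.Eventually.of_forall (fun x => by
        simp only [Pi.smul_apply, smul_eq_mul]; ring))
    rw [h]; ring
  · simp

lemma omega_smul (c : ℝ) {f : ℝ → ℝ} {C : ℝ} (hB : Bdd f C) :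
    omegaFun (c • f) = c * omegaFun f := by
  have h := (tendsto_phi hB).const_mul c
  have h2 : Tendsto (phi (c • f)) (V : Filter ℝ) (𝓝 (c * omegaFun f)) :=
    h.congr (fun Y => (phi_smul c f Y).symm)
  exact h2.limUnder_eq

lemma phi_nonneg {f : ℝ → ℝ} (h : 0 ≤ᵐ[μ₀] f) (Y : ℝ) : 0 ≤ phi f Y := by
  unfold phi J
  split_ifs with hY
  · apply mul_nonneg (inv_pos.2 (loglog_pos hY)).le
    apply integral_nonneg_of_ae
    rw [restrict_Ioc_eq expOne_pos]
    filter_upwards [ae_restrict_of_ae h,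
      (ae_restrict_iff' measurableSet_Ioc).2 (Filter.Eventually.of_forall
        (fun u (hu : u ∈ Ioc (Real.exp 1) Y) => hu.1))] with x hx1 hx2
    exact mul_nonneg hx1 (w0_pos (lt_trans one_lt_expOne hx2)).le
  · exact le_refl 0

lemma omega_nonneg {f : ℝ → ℝ} {C : ℝ} (hB : Bdd f C) (h : 0 ≤ᵐ[μ₀] f) :
    0 ≤ omegaFun f :=
  ge_of_tendsto (tendsto_phi hB) (Filter.Eventually.of_forall (phi_nonneg h))

lemma phi_one {Y : ℝ} (hY : Real.exp 1 < Y) : phi (fun _ => (1:ℝ)) Y = 1 := by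
  have h1 : J (fun _ => (1:ℝ)) Y = Real.log (Real.log Y) := by
    unfold J
    rw [show (fun s => (fun _ => (1:ℝ)) s * w0 s) = w0 by funext s; simp,
      integral_w0 one_lt_expOne hY.le, loglog_expOne, sub_zero]
  rw [phi, if_pos hY, h1, inv_mul_cancel₀ (loglog_pos hY).ne']

lemma omega_one : omegaFun (fun _ => (1:ℝ)) = 1 := by
  have h : Tendsto (phi (fun _ => (1:ℝ))) (V : Filter ℝ) (𝓝 1) := by
    apply Tendsto.congr' _ tendsto_const_nhds
    filter_upwards [V_le_atTop (eventually_gt_atTop (Real.exp 1))] with Y hY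
    exact (phi_one hY).symm
  exact h.limUnder_eq

/-- substitution `u = c s` in the log-log Cesàro integral -/
lemma integral_dilation (f : ℝ → ℝ) {c : ℝ} (hc : 0 < c) {A B : ℝ} (hA : 0 < A) :
    (∫ s in Ioc A B, f (c * s) * w0 s)
      = ∫ u in Ioc (c * A) (c * B), f u * (u * (Real.log u - Real.log c))⁻¹ := by
  set G : ℝ → ℝ :=
    indicator (Ioc (c * A) (c * B)) (fun u => c * (f u * (u * (Real.log u - Real.log c))⁻¹))
    with hG
  have claim : ∀ s, indicator (Ioc A B) (fun s => f (c * s) * w0 s) s = G (c * s) := by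
    intro s
    have hmem : c * s ∈ Ioc (c * A) (c * B) ↔ s ∈ Ioc A B := by
      constructor
      · rintro ⟨h1, h2⟩
        exact ⟨lt_of_mul_lt_mul_left (by linarith) hc.le,
          le_of_mul_le_mul_left (by linarith) hc⟩
      · rintro ⟨h1, h2⟩
        exact ⟨by nlinarith, by nlinarith⟩
    by_cases hs : s ∈ Ioc A B
    · rw [indicator_of_mem hs, hG, indicator_of_mem (hmem.2 hs)]
      have hs0 : 0 < s := lt_trans hA hs.1
      have hlog : Real.log (c * s) - Real.log c = Real.log s := by
        rw [Real.log_mul hc.ne' hs0.ne']; ring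
      rw [hlog, w0]
      field_simp
    · rw [indicator_of_notMem hs, hG, indicator_of_notMem (fun h => hs (hmem.1 h))]
  calc (∫ s in Ioc A B, f (c * s) * w0 s)
      = ∫ s, indicator (Ioc A B) (fun s => f (c * s) * w0 s) s :=
        (integral_indicator measurableSet_Ioc).symm
    _ = ∫ s, G (c * s) := by simp_rw [claim]
    _ = |c⁻¹| • ∫ u, G u := MeasureTheory.Measure.integral_comp_mul_left G c
    _ = c⁻¹ * ∫ u in Ioc (c * A) (c * B),
          c * (f u * (u * (Real.log u - Real.log c))⁻¹) := by
        rw [hG, integral_indicator measurableSet_Ioc, abs_of_pos (inv_pos.2 hc), smul_eq_mul]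
    _ = ∫ u in Ioc (c * A) (c * B), f u * (u * (Real.log u - Real.log c))⁻¹ := by
        rw [integral_const_mul]
        field_simp

lemma abs_helper {x1 y1 x2 y2 : ℝ} : |x1 + x2 - (y1 + y2)| ≤ |x1| + |y1| + |x2 - y2| := by
  have h1 : x1 + x2 - (y1 + y2) = x1 + (-y1) + (x2 - y2) := by ring
  rw [h1]
  calc |x1 + -y1 + (x2 - y2)| ≤ |x1 + -y1| + |x2 - y2| := abs_add_le _ _
    _ ≤ |x1| + |y1| + |x2 - y2| := by
        have := abs_add_le x1 (-y1); rw [abs_neg] at this; linarith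

lemma integrableOn_w2 {A B : ℝ} (hA : 1 < A) :
    IntegrableOn (fun s => (s * (Real.log s)^2)⁻¹) (Ioc A B) :=
  ((continuousOn_w2 hA).integrableOn_Icc).mono_set Ioc_subset_Icc_self

lemma abs_integral_le_const {f w : ℝ → ℝ} {C : ℝ} (hB : Bdd f C) (hw : Measurable w)
    {a b D : ℝ} (ha : 0 < a) (hab : a ≤ b) (hD : 0 ≤ D)
    (hbd : ∀ u ∈ Ioc a b, |w u| ≤ D) :
    |∫ u in Ioc a b, f u * w u| ≤ C * D * (b - a) := by
  have hae : ∀ᵐ x ∂(volume.restrict (Ioc a b)), |f x| ≤ C := by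
    rw [restrict_Ioc_eq ha]; exact ae_restrict_of_ae hB.bound
  have key : ‖∫ u in Ioc a b, f u * w u‖ ≤ ∫ _u in Ioc a b, C * D := by
    refine norm_integral_le_of_norm_le ((integrableOn_const_iff (C := C * D)).2 (Or.inr measure_Ioc_lt_top)) ?_
    filter_upwards [hae, (ae_restrict_iff' measurableSet_Ioc).2
      (Filter.Eventually.of_forall hbd)] with x h1 h2
    rw [Real.norm_eq_abs, abs_mul]
    exact mul_le_mul h1 h2 (abs_nonneg _) hB.nonneg
  rw [Real.norm_eq_abs] at key
  calc |∫ u in Ioc a b, f u * w u| ≤ ∫ _u in Ioc a b, C * D := key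
    _ = (b - a) * (C * D) := by
        rw [setIntegral_const, measureReal_def, Real.volume_Ioc, smul_eq_mul, ENNReal.toReal_ofReal (by linarith)]
    _ = C * D * (b - a) := by ring

set_option maxHeartbeats 1000000 in
lemma dilation_bounded_diff {f : ℝ → ℝ} {C : ℝ} (hB : Bdd f C) {c : ℝ} (hc : 0 < c) :
    ∃ K Y₀ : ℝ, ∀ Y, Y₀ ≤ Y → |J (fun x => f (c * x)) Y - J f Y| ≤ K := by
  classical
  set E := Real.exp 1 with hE
  have hE1 : 1 < E := one_lt_expOne
  have hE0 : 0 < E := expOne_pos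
  set L := |Real.log c| with hLdef
  have hL0 : 0 ≤ L := abs_nonneg _
  set T₀ := max (c * E) (Real.exp (2*L + 2)) with hT₀def
  have hlogT₀ : 2*L + 2 ≤ Real.log T₀ := by
    rw [← Real.log_exp (2*L+2)]
    exact Real.log_le_log (Real.exp_pos _) (le_max_right _ _)
  have hT₀cE : c * E ≤ T₀ := le_max_left _ _
  have hT₀pos : 0 < T₀ := lt_of_lt_of_le (Real.exp_pos _) (le_max_right _ _)
  have hT₀E : E ≤ T₀ :=
    le_trans (by rw [hE]; exact Real.exp_le_exp.2 (by linarith)) (le_max_right _ _)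
  have hT₀1 : 1 < T₀ := lt_of_lt_of_le hE1 hT₀E
  have hcE0 : 0 < c * E := mul_pos hc hE0
  set w1 : ℝ → ℝ := fun u => (u * (Real.log u - Real.log c))⁻¹ with hw1def
  have hw1meas : Measurable w1 :=
    (measurable_id.mul (Real.measurable_log.sub measurable_const)).inv
  -- pointwise facts
  have hfact : ∀ u, c * E < u → 1 ≤ Real.log u - Real.log c := by
    intro u hu
    have h1 : Real.log (c * E) ≤ Real.log u := Real.log_le_log hcE0 hu.le
    rw [Real.log_mul hc.ne' hE0.ne', log_expOne] at h1
    linarith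
  have hfactT : ∀ u, T₀ < u →
      L + 1 ≤ Real.log u - Real.log c ∧ 2*L + 2 ≤ Real.log u := by
    intro u hu
    have h1 : Real.log T₀ ≤ Real.log u := Real.log_le_log hT₀pos hu.le
    have h2 : Real.log c ≤ L := le_abs_self _
    exact ⟨by linarith, by linarith⟩
  refine ⟨C * (c*E)⁻¹ * (T₀ - c*E) + C * E⁻¹ * (T₀ - E)
      + C * (2*L) * (Real.log T₀)⁻¹ + C * Real.log 2,
    max (T₀+1) ((T₀+1) * (1 + c⁻¹)), ?_⟩
  intro Y hY
  have hYT₀ : T₀ < Y := by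
    have := le_trans (le_max_left (T₀+1) ((T₀+1) * (1 + c⁻¹))) hY; linarith
  have hcYT₀ : T₀ < c * Y := by
    have h1 : (T₀+1) * (1 + c⁻¹) ≤ Y := le_trans (le_max_right _ _) hY
    have h2 : c * ((T₀+1) * (1 + c⁻¹)) ≤ c * Y :=
      mul_le_mul_of_nonneg_left h1 hc.le
    have h3 : c * ((T₀+1) * (1 + c⁻¹)) = (T₀+1) * (c + 1) := by
      have : c * (1 + c⁻¹) = c + 1 := by
        rw [mul_add, mul_inv_cancel₀ hc.ne', mul_one]
      rw [show c * ((T₀+1) * (1 + c⁻¹)) = (T₀+1) * (c * (1 + c⁻¹)) by ring, this]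
    nlinarith
  have hEY : E ≤ Y := le_trans hT₀E (by linarith)
  -- substitution
  have hsub : J (fun x => f (c * x)) Y
      = ∫ u in Ioc (c * E) (c * Y), f u * w1 u := by
    rw [J]
    exact integral_dilation f hc hE0
  -- integrability pieces for w1
  have hint1 : IntegrableOn (fun u => f u * w1 u) (Ioc (c*E) T₀) := by
    refine integrableOn_weighted hB hw1meas hcE0 (D := (c*E)⁻¹) ?_
    intro u hu
    obtain ⟨hua, hub⟩ := hu
    have h1 := hfact u hua
    have hu0 : 0 < u := lt_trans hcE0 hua
    have hpos : 0 < u * (Real.log u - Real.log c) := mul_pos hu0 (by linarith)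
    rw [abs_of_pos (inv_pos.2 hpos)]
    exact inv_anti₀ hcE0 (le_trans hua.le (le_mul_of_one_le_right hu0.le h1))
  have hint2 : ∀ {Z : ℝ}, IntegrableOn (fun u => f u * w1 u) (Ioc T₀ Z) := by
    intro Z
    refine integrableOn_weighted hB hw1meas hT₀pos (D := T₀⁻¹) ?_
    intro u hu
    obtain ⟨hua, hub⟩ := hu
    have h1 := (hfactT u hua).1
    have hu0 : 0 < u := lt_trans hT₀pos hua
    have hpos : 0 < u * (Real.log u - Real.log c) := mul_pos hu0 (by linarith)
    rw [abs_of_pos (inv_pos.2 hpos)]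
    exact inv_anti₀ hT₀pos (le_trans hua.le (le_mul_of_one_le_right hu0.le (by linarith)))
  -- split the substituted integral
  have hsplitA : (∫ u in Ioc (c*E) (c*Y), f u * w1 u)
      = (∫ u in Ioc (c*E) T₀, f u * w1 u) + ∫ u in Ioc T₀ (c*Y), f u * w1 u := by
    rw [← Ioc_union_Ioc_eq_Ioc hT₀cE hcYT₀.le]
    exact setIntegral_union (Ioc_disjoint_Ioc_of_le le_rfl) measurableSet_Ioc hint1 hint2
  have hsplitB : J f Y = (∫ u in Ioc E T₀, f u * w0 u) + ∫ u in Ioc T₀ Y, f u * w0 u :=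
    split_fw0 hB hE1 hT₀E (by linarith)
  -- head bounds
  have hhead1 : |∫ u in Ioc (c*E) T₀, f u * w1 u| ≤ C * (c*E)⁻¹ * (T₀ - c*E) := by
    refine abs_integral_le_const hB hw1meas hcE0 hT₀cE (inv_pos.2 hcE0).le ?_
    intro u hu
    obtain ⟨hua, hub⟩ := hu
    have h1 := hfact u hua
    have hu0 : 0 < u := lt_trans hcE0 hua
    have hpos : 0 < u * (Real.log u - Real.log c) := mul_pos hu0 (by linarith)
    rw [abs_of_pos (inv_pos.2 hpos)]
    exact inv_anti₀ hcE0 (le_trans hua.le (le_mul_of_one_le_right hu0.le h1))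
  have hhead2 : |∫ u in Ioc E T₀, f u * w0 u| ≤ C * E⁻¹ * (T₀ - E) := by
    refine abs_integral_le_const hB (by
      exact (measurable_id.mul Real.measurable_log).inv) hE0 hT₀E (inv_pos.2 hE0).le ?_
    intro u hu
    obtain ⟨hua, hub⟩ := hu
    have hu1 : 1 < u := lt_trans hE1 hua
    have hlogu : 1 ≤ Real.log u := by
      rw [← log_expOne]; exact Real.log_le_log hE0 hua.le
    have hu0 : 0 < u := by linarith
    have hpos : 0 < u * Real.log u := mul_pos hu0 (by linarith)
    rw [w0, abs_of_pos (inv_pos.2 hpos)]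
    exact inv_anti₀ hE0 (le_trans hua.le (le_mul_of_one_le_right hu0.le hlogu))
  -- middle: compare w1 with w0 on (T₀, cY]
  have hmid1 : |(∫ u in Ioc T₀ (c*Y), f u * w1 u) - ∫ u in Ioc T₀ (c*Y), f u * w0 u|
      ≤ C * (2*L) * (Real.log T₀)⁻¹ := by
    have hintw0 : IntegrableOn (fun u => f u * w0 u) (Ioc T₀ (c*Y)) :=
      integrableOn_fw0 hB hT₀1
    rw [← integral_sub hint2 hintw0]
    have hrw : ∀ u, f u * w1 u - f u * w0 u = f u * (w1 u - w0 u) := fun u => by ring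
    simp_rw [hrw]
    have hae : ∀ᵐ x ∂(volume.restrict (Ioc T₀ (c*Y))), |f x| ≤ C := by
      rw [restrict_Ioc_eq hT₀pos]; exact ae_restrict_of_ae hB.bound
    have key : ‖∫ u in Ioc T₀ (c*Y), f u * (w1 u - w0 u)‖
        ≤ ∫ u in Ioc T₀ (c*Y), C * (2*L) * (u * (Real.log u)^2)⁻¹ := by
      refine norm_integral_le_of_norm_le
        (((integrableOn_w2 hT₀1)).const_mul (C * (2*L))) ?_
      filter_upwards [hae, (ae_restrict_iff' measurableSet_Ioc).2
        (Filter.Eventually.of_forall (fun u (hu : u ∈ Ioc T₀ (c*Y)) => hu.1))] with x h1 h2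
      have hx0 : 0 < x := lt_trans hT₀pos h2
      obtain ⟨hfa, hfb⟩ := hfactT x h2
      have hlx : 0 < Real.log x := by linarith
      have hlc : |Real.log c| ≤ L := le_refl _
      have hsub0 : 0 < Real.log x - Real.log c := by linarith
      have hwdiff : w1 x - w0 x
          = Real.log c / (x * Real.log x * (Real.log x - Real.log c)) := by
        rw [hw1def, w0]
        field_simp
        ring
      have habs : |w1 x - w0 x| ≤ 2*L * (x * (Real.log x)^2)⁻¹ := by
        have hden1 : (0:ℝ) < x * Real.log x * (Real.log x - Real.log c) :=
          mul_pos (mul_pos hx0 hlx) hsub0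
        have hden2 : (0:ℝ) < x * (Real.log x)^2 := mul_pos hx0 (pow_pos hlx 2)
        rw [hwdiff, abs_div, abs_of_pos hden1]
        rw [div_le_iff₀ hden1]
        have hb1 : Real.log x / 2 ≤ Real.log x - Real.log c := by
          have := le_abs_self (Real.log c)
          have := neg_abs_le (Real.log c)
          linarith
        have h2L : |Real.log c| ≤ L := le_refl _
        have hinv : (x * (Real.log x)^2)⁻¹ * (x * Real.log x * (Real.log x - Real.log c))
            = (Real.log x - Real.log c) / Real.log x := by
          field_simp
        rw [mul_assoc, hinv]
        have hfrac : (1:ℝ)/2 ≤ (Real.log x - Real.log c) / Real.log x := by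
          rw [le_div_iff₀ hlx]; linarith
        calc |Real.log c| ≤ L := h2L
          _ = 2*L * (1/2) := by ring
          _ ≤ 2*L * ((Real.log x - Real.log c) / Real.log x) := by
              apply mul_le_mul_of_nonneg_left hfrac (by linarith)
      rw [Real.norm_eq_abs, abs_mul]
      calc |f x| * |w1 x - w0 x| ≤ C * (2*L * (x * (Real.log x)^2)⁻¹) :=
            mul_le_mul h1 habs (abs_nonneg _) hB.nonneg
        _ = C * (2*L) * (x * (Real.log x)^2)⁻¹ := by ring
    rw [Real.norm_eq_abs] at key
    calc |∫ u in Ioc T₀ (c*Y), f u * (w1 u - w0 u)|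
        ≤ ∫ u in Ioc T₀ (c*Y), C * (2*L) * (u * (Real.log u)^2)⁻¹ := key
      _ = C * (2*L) * ((Real.log T₀)⁻¹ - (Real.log (c*Y))⁻¹) := by
          rw [integral_const_mul, integral_w2 hT₀1 hcYT₀.le]
      _ ≤ C * (2*L) * (Real.log T₀)⁻¹ := by
          have hlcy : 0 < Real.log (c*Y) := by
            have := (hfactT (c*Y) hcYT₀).2; linarith
          have hCL : 0 ≤ C * (2*L) := mul_nonneg hB.nonneg (by linarith)
          nlinarith [inv_pos.2 hlcy]
  -- middle: change of endpoint from cY to Y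
  have hmid2 : |(∫ u in Ioc T₀ (c*Y), f u * w0 u) - ∫ u in Ioc T₀ Y, f u * w0 u|
      ≤ C * Real.log 2 := by
    have hlogY : 2*L + 2 ≤ Real.log Y := (hfactT Y hYT₀).2
    have hlogcY : 2*L + 2 ≤ Real.log (c*Y) := (hfactT (c*Y) hcYT₀).2
    have hY1 : 1 < Y := by
      have := (hfactT Y hYT₀).2
      nlinarith [Real.log_nonpos_iff (show 0 ≤ Y from (lt_trans hT₀pos hYT₀).le)]
    have hlogmul : Real.log (c*Y) = Real.log c + Real.log Y :=
      Real.log_mul hc.ne' (by positivity : Y ≠ 0)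
    rcases le_total Y (c*Y) with hcmp | hcmp
    · have hsp := split_fw0 hB hT₀1 hYT₀.le hcmp
      rw [hsp]
      have h1 : |∫ u in Ioc Y (c*Y), f u * w0 u|
          ≤ C * (Real.log (Real.log (c*Y)) - Real.log (Real.log Y)) :=
        abs_integral_fw0_le hB (lt_trans hT₀1 hYT₀) hcmp
      have h2 : Real.log (Real.log (c*Y)) ≤ Real.log 2 + Real.log (Real.log Y) := by
        have hax : Real.log (c*Y) ≤ 2 * Real.log Y := by
          have := le_abs_self (Real.log c); rw [hlogmul]; linarith
        calc Real.log (Real.log (c*Y)) ≤ Real.log (2 * Real.log Y) :=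
              Real.log_le_log (by linarith) hax
          _ = Real.log 2 + Real.log (Real.log Y) :=
              Real.log_mul two_ne_zero (by nlinarith)
      have := abs_nonneg (∫ u in Ioc Y (c*Y), f u * w0 u)
      rw [show (∫ u in Ioc T₀ Y, f u * w0 u) + (∫ u in Ioc Y (c*Y), f u * w0 u)
          - ∫ u in Ioc T₀ Y, f u * w0 u = ∫ u in Ioc Y (c*Y), f u * w0 u by ring]
      nlinarith [hB.nonneg]
    · have hsp := split_fw0 hB hT₀1 hcYT₀.le hcmp
      rw [hsp]
      have h1 : |∫ u in Ioc (c*Y) Y, f u * w0 u|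
          ≤ C * (Real.log (Real.log Y) - Real.log (Real.log (c*Y))) :=
        abs_integral_fw0_le hB (lt_trans hT₀1 hcYT₀) hcmp
      have h2 : Real.log (Real.log Y) ≤ Real.log 2 + Real.log (Real.log (c*Y)) := by
        have hax : Real.log Y ≤ 2 * Real.log (c*Y) := by
          have := neg_abs_le (Real.log c); rw [hlogmul]; linarith
        calc Real.log (Real.log Y) ≤ Real.log (2 * Real.log (c*Y)) :=
              Real.log_le_log (by linarith) hax
          _ = Real.log 2 + Real.log (Real.log (c*Y)) :=
              Real.log_mul two_ne_zero (by nlinarith)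
      rw [show (∫ u in Ioc T₀ (c*Y), f u * w0 u) - ((∫ u in Ioc T₀ (c*Y), f u * w0 u)
          + (∫ u in Ioc (c*Y) Y, f u * w0 u)) = -(∫ u in Ioc (c*Y) Y, f u * w0 u) by ring,
        abs_neg]
      nlinarith [hB.nonneg, abs_nonneg (∫ u in Ioc (c*Y) Y, f u * w0 u)]
  -- assemble
  rw [hsub, hsplitA, hsplitB]
  have hstep := abs_helper (x1 := ∫ u in Ioc (c*E) T₀, f u * w1 u)
    (y1 := ∫ u in Ioc E T₀, f u * w0 u)
    (x2 := ∫ u in Ioc T₀ (c*Y), f u * w1 u)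
    (y2 := ∫ u in Ioc T₀ Y, f u * w0 u)
  have htri : |(∫ u in Ioc T₀ (c*Y), f u * w1 u) - ∫ u in Ioc T₀ Y, f u * w0 u|
      ≤ |(∫ u in Ioc T₀ (c*Y), f u * w1 u) - ∫ u in Ioc T₀ (c*Y), f u * w0 u|
        + |(∫ u in Ioc T₀ (c*Y), f u * w0 u) - ∫ u in Ioc T₀ Y, f u * w0 u| :=
    abs_sub_le _ _ _
  linarith

/-- substitution `u = s ^ a` in the log-log Cesàro integral -/
lemma integral_power (f : ℝ → ℝ) {a : ℝ} (ha : 0 < a) {A B : ℝ} (hA : 1 < A) (hAB : A ≤ B) :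
    (∫ s in Ioc A B, f (s ^ a) * w0 s)
      = ∫ u in Ioc (A ^ a) (B ^ a), f u * w0 u := by
  have hA0 : (0:ℝ) < A := by linarith
  have hB0 : (0:ℝ) < B := by linarith
  have hAa : 0 < A ^ a := Real.rpow_pos_of_pos hA0 a
  set g : ℝ → ℝ := indicator (Ioc (A ^ a) (B ^ a)) (fun u => f u * w0 u) with hg
  have key := integral_comp_rpow_Ioi g ha.ne'
  have hRHS : (∫ y in Ioi (0:ℝ), g y) = ∫ u in Ioc (A ^ a) (B ^ a), f u * w0 u := by
    rw [hg, setIntegral_indicator measurableSet_Ioc]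
    have hinter : Ioi (0:ℝ) ∩ Ioc (A ^ a) (B ^ a) = Ioc (A ^ a) (B ^ a) :=
      inter_eq_right.2 (fun x hx => lt_trans hAa hx.1)
    rw [hinter]
  have hLHS : (∫ x in Ioi (0:ℝ), (|a| * x ^ (a - 1)) • g (x ^ a))
      = ∫ s in Ioc A B, f (s ^ a) * w0 s := by
    have hstep : (∫ s in Ioc A B, f (s ^ a) * w0 s)
        = ∫ x in Ioi (0:ℝ), indicator (Ioc A B) (fun s => f (s ^ a) * w0 s) x := by
      rw [setIntegral_indicator measurableSet_Ioc]
      have hinter : Ioi (0:ℝ) ∩ Ioc A B = Ioc A B :=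
        inter_eq_right.2 (fun x hx => lt_trans hA0 hx.1)
      rw [hinter]
    rw [hstep]
    symm
    apply setIntegral_congr_fun measurableSet_Ioi
    intro x hx
    have hx0 : (0:ℝ) < x := hx
    show indicator (Ioc A B) (fun s => f (s ^ a) * w0 s) x = (|a| * x ^ (a - 1)) • g (x ^ a)
    have hmem : x ^ a ∈ Ioc (A ^ a) (B ^ a) ↔ x ∈ Ioc A B := by
      constructor
      · rintro ⟨h1, h2⟩
        constructor
        · by_contra hcon
          push_neg at hcon
          exact absurd (Real.rpow_le_rpow hx0.le hcon ha.le) (not_le.2 h1)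
        · by_contra hcon
          push_neg at hcon
          exact absurd (Real.rpow_lt_rpow hB0.le hcon ha) (not_lt.2 h2)
      · rintro ⟨h1, h2⟩
        exact ⟨Real.rpow_lt_rpow hA0.le h1 ha, Real.rpow_le_rpow hx0.le h2 ha.le⟩
    by_cases hxs : x ∈ Ioc A B
    · rw [indicator_of_mem hxs, hg, indicator_of_mem (hmem.2 hxs)]
      have hx1 : 1 < x := lt_trans hA hxs.1
      have hlx : 0 < Real.log x := Real.log_pos hx1
      have hxa : 0 < x ^ a := Real.rpow_pos_of_pos hx0 a
      rw [smul_eq_mul, w0, w0, Real.log_rpow hx0, Real.rpow_sub hx0, Real.rpow_one,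
        abs_of_pos ha]
      field_simp
    · rw [indicator_of_notMem hxs, hg, indicator_of_notMem (fun h => hxs (hmem.1 h)),
        smul_zero]
  rw [← hLHS, key, hRHS]

lemma power_bounded_diff {f : ℝ → ℝ} {C : ℝ} (hB : Bdd f C) {a : ℝ} (ha : 0 < a) :
    ∃ K Y₀ : ℝ, ∀ Y, Y₀ ≤ Y → |J (fun x => f (x ^ a)) Y - J f Y| ≤ K := by
  set E := Real.exp 1 with hE
  have hE1 : 1 < E := one_lt_expOne
  have hE0 : 0 < E := expOne_pos
  have hEa : E ^ a = Real.exp a := Real.exp_one_rpow a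
  refine ⟨2 * C * |Real.log a|, max E (Real.exp a⁻¹), ?_⟩
  intro Y hY
  have hYE : E ≤ Y := le_trans (le_max_left _ _) hY
  have hY1 : 1 < Y := lt_of_lt_of_le hE1 hYE
  have hY0 : (0:ℝ) < Y := by linarith
  have hlogY : 1 ≤ Real.log Y := by rw [← log_expOne]; exact Real.log_le_log hE0 hYE
  have hlogYa : Real.log (Y ^ a) = a * Real.log Y := Real.log_rpow hY0 a
  have hloglogYa : Real.log (Real.log (Y ^ a)) = Real.log a + Real.log (Real.log Y) := by
    rw [hlogYa, Real.log_mul ha.ne' (by linarith)]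
  have hsub : J (fun x => f (x ^ a)) Y = ∫ u in Ioc (E ^ a) (Y ^ a), f u * w0 u := by
    rw [J]; exact integral_power f ha hE1 hYE
  have hllE : Real.log (Real.log (E ^ a)) = Real.log a := by
    rw [hEa, Real.log_exp]
  rcases le_total 1 a with hcase | hcase
  · -- a ≥ 1 : E ≤ E^a ≤ Y^a  and Y ≤ Y^a
    have hloga : 0 ≤ Real.log a := Real.log_nonneg hcase
    have hEEa : E ≤ E ^ a := by
      rw [hEa]; exact Real.exp_le_exp.2 hcase
    have hYYa : Y ≤ Y ^ a := by
      nth_rewrite 1 [← Real.rpow_one Y]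
      exact Real.rpow_le_rpow_of_exponent_le hY1.le hcase
    have hEaYa : E ^ a ≤ Y ^ a := Real.rpow_le_rpow hE0.le hYE ha.le
    have h1 := split_fw0 hB hE1 hEEa hEaYa   -- J over (E, Y^a] split at E^a
    have h2 := split_fw0 hB hE1 hYE hYYa     -- J over (E, Y^a] split at Y
    rw [hsub]
    have hkey : (∫ u in Ioc (E ^ a) (Y ^ a), f u * w0 u) - J f Y
        = (∫ u in Ioc Y (Y ^ a), f u * w0 u) - ∫ u in Ioc E (E ^ a), f u * w0 u := by
      rw [J]
      have := h1.symm.trans h2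
      linarith
    rw [hkey]
    have hb1 : |∫ u in Ioc E (E ^ a), f u * w0 u| ≤ C * Real.log a := by
      have := abs_integral_fw0_le hB hE1 hEEa
      rwa [hllE, loglog_expOne, sub_zero] at this
    have hb2 : |∫ u in Ioc Y (Y ^ a), f u * w0 u| ≤ C * Real.log a := by
      have := abs_integral_fw0_le hB hY1 hYYa
      rwa [hloglogYa, add_sub_cancel_right] at this
    have habs : |Real.log a| = Real.log a := abs_of_nonneg hloga
    rw [habs]
    calc |(∫ u in Ioc Y (Y ^ a), f u * w0 u) - ∫ u in Ioc E (E ^ a), f u * w0 u|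
        ≤ |∫ u in Ioc Y (Y ^ a), f u * w0 u| + |∫ u in Ioc E (E ^ a), f u * w0 u| :=
          abs_sub _ _
      _ ≤ 2 * C * Real.log a := by linarith
  · -- a ≤ 1 : E^a ≤ E, Y^a ≤ Y, and E ≤ Y^a
    have hloga : Real.log a ≤ 0 := Real.log_nonpos ha.le hcase
    have hEaE : E ^ a ≤ E := by
      rw [hEa]; exact Real.exp_le_exp.2 hcase
    have hEa1 : 1 < E ^ a := by
      rw [hEa]; exact Real.one_lt_exp_iff.2 ha
    have hYaY : Y ^ a ≤ Y := by
      nth_rewrite 2 [← Real.rpow_one Y]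
      exact Real.rpow_le_rpow_of_exponent_le hY1.le hcase
    have hEYa : E ≤ Y ^ a := by
      have h1 : Real.exp a⁻¹ ≤ Y := le_trans (le_max_right _ _) hY
      have h2 : (Real.exp a⁻¹) ^ a ≤ Y ^ a :=
        Real.rpow_le_rpow (Real.exp_pos _).le h1 ha.le
      have h3 : (Real.exp a⁻¹) ^ a = E := by
        rw [Real.rpow_def_of_pos (Real.exp_pos _), Real.log_exp, inv_mul_cancel₀ ha.ne']
      linarith
    have h1 := split_fw0 hB hEa1 hEaE (le_trans hEYa hYaY)  -- (E^a, Y] split at E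
    have h2 := split_fw0 hB hEa1 (le_trans hEaE hEYa) hYaY  -- (E^a, Y] split at Y^a
    rw [hsub]
    have hkey : (∫ u in Ioc (E ^ a) (Y ^ a), f u * w0 u) - J f Y
        = (∫ u in Ioc (E ^ a) E, f u * w0 u) - ∫ u in Ioc (Y ^ a) Y, f u * w0 u := by
      rw [J]
      have := h1.symm.trans h2
      linarith
    rw [hkey]
    have hb1 : |∫ u in Ioc (E ^ a) E, f u * w0 u| ≤ C * (-Real.log a) := by
      have := abs_integral_fw0_le hB hEa1 hEaE
      rwa [hllE, loglog_expOne, zero_sub] at this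
    have hb2 : |∫ u in Ioc (Y ^ a) Y, f u * w0 u| ≤ C * (-Real.log a) := by
      have hYa1 : 1 < Y ^ a := lt_of_lt_of_le hE1 hEYa
      have := abs_integral_fw0_le hB hYa1 hYaY
      rwa [hloglogYa, show Real.log (Real.log Y) - (Real.log a + Real.log (Real.log Y))
        = -Real.log a by ring] at this
    have habs : |Real.log a| = -Real.log a := abs_of_nonpos hloga
    rw [habs]
    calc |(∫ u in Ioc (E ^ a) E, f u * w0 u) - ∫ u in Ioc (Y ^ a) Y, f u * w0 u|
        ≤ |∫ u in Ioc (E ^ a) E, f u * w0 u| + |∫ u in Ioc (Y ^ a) Y, f u * w0 u| :=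
          abs_sub _ _
      _ ≤ 2 * C * (-Real.log a) := by linarith

lemma measurable_w2 : Measurable (fun s : ℝ => (s * (Real.log s)^2)⁻¹) :=
  (measurable_id.mul (Real.measurable_log.pow_const 2)).inv

lemma integral_inv_Ioc {A B : ℝ} (hA : 0 < A) (hAB : A ≤ B) :
    ∫ u in Ioc A B, u⁻¹ = Real.log B - Real.log A := by
  rw [← intervalIntegral.integral_of_le hAB]
  have hc : ContinuousOn (fun u : ℝ => u⁻¹) (uIcc A B) := by
    rw [uIcc_of_le hAB]
    exact continuousOn_id.inv₀ (fun x hx => (lt_of_lt_of_le hA hx.1).ne')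
  exact intervalIntegral.integral_eq_sub_of_hasDerivAt
    (fun x hx => by
      rw [uIcc_of_le hAB] at hx
      exact Real.hasDerivAt_log (lt_of_lt_of_le hA hx.1).ne')
    hc.intervalIntegrable

lemma abs_integral_finv_le {f : ℝ → ℝ} {C : ℝ} (hB : Bdd f C) {a b : ℝ} (ha : 0 < a)
    (hab : a ≤ b) :
    |∫ u in Ioc a b, f u * u⁻¹| ≤ C * (Real.log b - Real.log a) := by
  have hae : ∀ᵐ x ∂(volume.restrict (Ioc a b)), |f x| ≤ C := by
    rw [restrict_Ioc_eq ha]; exact ae_restrict_of_ae hB.bound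
  have hint : IntegrableOn (fun u : ℝ => C * u⁻¹) (Ioc a b) := by
    apply Integrable.const_mul
    apply ContinuousOn.integrableOn_Icc (continuousOn_id.inv₀
      (fun x hx => (lt_of_lt_of_le ha hx.1).ne')) |>.mono_set Ioc_subset_Icc_self
  have key : ‖∫ u in Ioc a b, f u * u⁻¹‖ ≤ ∫ u in Ioc a b, C * u⁻¹ := by
    refine norm_integral_le_of_norm_le hint ?_
    filter_upwards [hae, (ae_restrict_iff' measurableSet_Ioc).2
      (Filter.Eventually.of_forall (fun u (hu : u ∈ Ioc a b) => hu.1))] with x h1 h2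
    have hx0 : 0 < x := lt_trans ha h2
    rw [Real.norm_eq_abs, abs_mul, abs_of_pos (inv_pos.2 hx0)]
    exact mul_le_mul_of_nonneg_right h1 (inv_pos.2 hx0).le
  rw [Real.norm_eq_abs] at key
  rwa [integral_const_mul, integral_inv_Ioc ha hab] at key

set_option maxHeartbeats 1600000 in
lemma cesaro_bounded_diff {f : ℝ → ℝ} {C : ℝ} (hB : Bdd f C) :
    ∃ K Y₀ : ℝ, ∀ Y, Y₀ ≤ Y → |J (cesaroMean f) Y - J f Y| ≤ K := by
  classical
  set E := Real.exp 1 with hE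
  have hE1 : 1 < E := one_lt_expOne
  have hE0 : 0 < E := expOne_pos
  refine ⟨C * 1 * (E - 1) + C, E + 1, ?_⟩
  intro Y hY
  have hEY : E < Y := by linarith
  have hY1 : 1 < Y := by linarith
  have hY0 : (0:ℝ) < Y := by linarith
  have hlogY : 1 ≤ Real.log Y := by
    rw [← log_expOne]; exact Real.log_le_log hE0 hEY.le
  have hlogY0 : 0 < Real.log Y := by linarith
  set w2 : ℝ → ℝ := fun s => (s * (Real.log s)^2)⁻¹ with hw2
  set ν₁ := volume.restrict (Ioc E Y) with hν₁
  set ν₂ := volume.restrict (Ioc (1:ℝ) Y) with hν₂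
  -- the combined weight appearing after Fubini
  set g : ℝ → ℝ := fun u => u⁻¹ * ((Real.log (max u E))⁻¹ - (Real.log Y)⁻¹) with hg
  have hgmeas : Measurable g :=
    measurable_inv.mul
      (((Real.measurable_log.comp (measurable_id.max measurable_const)).inv).sub
        measurable_const)
  -- Step 1: rewrite the Cesàro-mean integral as a double integral
  have step1 : J (cesaroMean f) Y
      = ∫ s in Ioc E Y, ∫ u in Ioc (1:ℝ) Y,
          w2 s * indicator (Iic s) (fun v => f v / v) u := by
    rw [J]
    apply setIntegral_congr_fun measurableSet_Ioc
    intro s hs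
    have hs1 : 1 < s := lt_trans hE1 hs.1
    have hs0 : 0 < s := by linarith
    have hlogs : 0 < Real.log s := Real.log_pos hs1
    have hH : (∫ u in Ioc (1:ℝ) Y, indicator (Iic s) (fun v => f v / v) u)
        = ∫ u in Ioc (1:ℝ) s, f u / u := by
      rw [setIntegral_indicator measurableSet_Iic, Ioc_inter_Iic, min_eq_right hs.2]
    calc cesaroMean f s * w0 s
        = (Real.log s)⁻¹ * (∫ u in Ioc (1:ℝ) s, f u / u) * (s * Real.log s)⁻¹ := by
          rw [cesaroMean, if_pos hs1, w0]
      _ = w2 s * ∫ u in Ioc (1:ℝ) s, f u / u := by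
          show _ = (s * (Real.log s)^2)⁻¹ * _
          rw [show (s * (Real.log s)^2)⁻¹ = (Real.log s)⁻¹ * (s * Real.log s)⁻¹ by
            rw [mul_inv, mul_inv, sq, mul_inv]; ring]
          ring
      _ = w2 s * ∫ u in Ioc (1:ℝ) Y, indicator (Iic s) (fun v => f v / v) u := by rw [hH]
      _ = ∫ u in Ioc (1:ℝ) Y, w2 s * indicator (Iic s) (fun v => f v / v) u := by
          rw [integral_const_mul]
  -- Step 2: Fubini
  have hintprod : Integrable
      (Function.uncurry fun s u => w2 s * indicator (Iic s) (fun v => f v / v) u)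
      (ν₁.prod ν₂) := by
    have hmeasf : AEStronglyMeasurable f ν₂ := by
      rw [hν₂, restrict_Ioc_eq one_pos]; exact hB.meas.restrict
    have haesm : AEStronglyMeasurable
        (Function.uncurry fun s u => w2 s * indicator (Iic s) (fun v => f v / v) u)
        (ν₁.prod ν₂) := by
      have h1 : AEStronglyMeasurable (fun p : ℝ × ℝ => f p.2 / p.2) (ν₁.prod ν₂) := by
        simp only [div_eq_mul_inv]
        exact (hmeasf.comp_snd).mul ((measurable_snd.inv).aestronglyMeasurable)
      have h2 : MeasurableSet {p : ℝ × ℝ | p.2 ≤ p.1} :=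
        measurableSet_le measurable_snd measurable_fst
      have h3 : AEStronglyMeasurable
          (indicator {p : ℝ × ℝ | p.2 ≤ p.1} (fun p => f p.2 / p.2)) (ν₁.prod ν₂) :=
        h1.indicator h2
      have heq : (Function.uncurry fun s u => w2 s * indicator (Iic s) (fun v => f v / v) u)
          = fun p : ℝ × ℝ => w2 p.1 *
            indicator {p : ℝ × ℝ | p.2 ≤ p.1} (fun p => f p.2 / p.2) p := by
        funext p
        simp only [Function.uncurry, indicator, mem_Iic, mem_setOf_eq]
      rw [heq]
      exact ((measurable_w2.comp measurable_fst).aestronglyMeasurable).mul h3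
    haveI : IsFiniteMeasure ν₁ := by
      constructor; rw [hν₁, Measure.restrict_apply_univ]; exact measure_Ioc_lt_top
    haveI : IsFiniteMeasure ν₂ := by
      constructor; rw [hν₂, Measure.restrict_apply_univ]; exact measure_Ioc_lt_top
    refine Integrable.mono' (integrable_const C) haesm ?_
    have haef : ∀ᵐ u ∂ν₂, |f u| ≤ C ∧ u ∈ Ioc (1:ℝ) Y := by
      have h1 : ∀ᵐ u ∂ν₂, |f u| ≤ C := by
        rw [hν₂, restrict_Ioc_eq one_pos]; exact ae_restrict_of_ae hB.bound
      exact h1.and (ae_restrict_mem measurableSet_Ioc)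
    have haes : ∀ᵐ s ∂ν₁, s ∈ Ioc E Y := ae_restrict_mem measurableSet_Ioc
    filter_upwards [Measure.quasiMeasurePreserving_fst.ae haes,
      Measure.quasiMeasurePreserving_snd.ae haef] with p hp1 hp2
    obtain ⟨hpf, hpu⟩ := hp2
    have hp11 : 1 < p.1 := lt_trans hE1 hp1.1
    have hp10 : (0:ℝ) < p.1 := by linarith
    have hlogp1 : 1 ≤ Real.log p.1 := by
      rw [← log_expOne]; exact Real.log_le_log hE0 hp1.1.le
    have hw2bd : 0 ≤ w2 p.1 ∧ w2 p.1 ≤ 1 := by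
      have hpos : (0:ℝ) < p.1 * (Real.log p.1)^2 := by nlinarith
      constructor
      · exact (inv_pos.2 hpos).le
      · have h1 : (1:ℝ) ≤ p.1 * (Real.log p.1)^2 := by nlinarith
        exact inv_le_one_of_one_le₀ h1
    have hind : |indicator (Iic p.1) (fun v => f v / v) p.2| ≤ C := by
      by_cases h : p.2 ≤ p.1
      · rw [indicator_of_mem (mem_Iic.2 h)]
        have hp20 : (0:ℝ) < p.2 := lt_trans one_pos hpu.1
        rw [abs_div, abs_of_pos hp20, div_le_iff₀ hp20]
        have hstep : C * 1 ≤ C * p.2 := mul_le_mul_of_nonneg_left hpu.1.le hB.nonneg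
        linarith
      · rw [indicator_of_notMem (by simpa using h), abs_zero]; exact hB.nonneg
    show ‖Function.uncurry (fun s u => w2 s * indicator (Iic s) (fun v => f v / v) u) p‖ ≤ C
    rw [show p = (p.1, p.2) from rfl, Function.uncurry_apply_pair, Real.norm_eq_abs, abs_mul,
      abs_of_nonneg hw2bd.1]
    calc w2 p.1 * |indicator (Iic p.1) (fun v => f v / v) p.2|
        ≤ 1 * C := mul_le_mul hw2bd.2 hind (abs_nonneg _) one_pos.le
      _ = C := one_mul C
  have step2 : (∫ s in Ioc E Y, ∫ u in Ioc (1:ℝ) Y,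
        w2 s * indicator (Iic s) (fun v => f v / v) u)
      = ∫ u in Ioc (1:ℝ) Y, ∫ s in Ioc E Y,
        w2 s * indicator (Iic s) (fun v => f v / v) u :=
    integral_integral_swap hintprod
  -- Step 3: compute the inner integral
  have step3 : ∀ u ∈ Ioc (1:ℝ) Y,
      (∫ s in Ioc E Y, w2 s * indicator (Iic s) (fun v => f v / v) u) = f u * g u := by
    intro u hu
    have h1 : ∀ s : ℝ, w2 s * indicator (Iic s) (fun v => f v / v) u
        = (f u / u) * indicator (Ici u) w2 s := by
      intro s
      by_cases h : u ≤ s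
      · rw [indicator_of_mem (mem_Iic.2 h), indicator_of_mem (mem_Ici.2 h)]; ring
      · rw [indicator_of_notMem (by simpa using h), indicator_of_notMem (by simpa using h)]
        ring
    simp_rw [h1]
    rw [integral_const_mul, setIntegral_indicator measurableSet_Ici]
    have hval : (∫ s in Ioc E Y ∩ Ici u, w2 s)
        = (Real.log (max u E))⁻¹ - (Real.log Y)⁻¹ := by
      rcases le_or_gt u E with hcase | hcase
      · have hset : Ioc E Y ∩ Ici u = Ioc E Y :=
          inter_eq_left.2 (fun x hx => le_trans hcase hx.1.le)
        rw [hset, hw2, integral_w2 hE1 hEY.le, max_eq_right hcase]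
      · have hset : Ioc E Y ∩ Ici u = Icc u Y := by
          ext x
          constructor
          · rintro ⟨⟨_, hx2⟩, hx3⟩; exact ⟨hx3, hx2⟩
          · rintro ⟨hx1, hx2⟩; exact ⟨⟨lt_of_lt_of_le hcase hx1, hx2⟩, hx1⟩
        rw [hset, integral_Icc_eq_integral_Ioc, hw2,
          integral_w2 (lt_trans hE1 hcase) hu.2, max_eq_left hcase.le]
    rw [hval, hg]
    have hu0 : (0:ℝ) < u := lt_trans one_pos hu.1
    field_simp
  have step3' : (∫ u in Ioc (1:ℝ) Y, ∫ s in Ioc E Y,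
        w2 s * indicator (Iic s) (fun v => f v / v) u)
      = ∫ u in Ioc (1:ℝ) Y, f u * g u :=
    setIntegral_congr_fun measurableSet_Ioc step3
  -- Step 4: split at E and estimate
  have hgbd : ∀ u ∈ Ioc (1:ℝ) Y, |g u| ≤ 1 := by
    intro u hu
    have hu0 : (0:ℝ) < u := lt_trans one_pos hu.1
    have hmax1 : 1 ≤ Real.log (max u E) := by
      rw [← log_expOne]
      exact Real.log_le_log hE0 (le_max_right u E)
    have hmaxY : Real.log (max u E) ≤ Real.log Y := by
      apply Real.log_le_log (by positivity)
      exact max_le hu.2 hEY.le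
    have h1 : 0 < Real.log (max u E) := by linarith
    have hW : 0 ≤ (Real.log (max u E))⁻¹ - (Real.log Y)⁻¹ ∧
        (Real.log (max u E))⁻¹ - (Real.log Y)⁻¹ ≤ 1 := by
      constructor
      · have := inv_anti₀ h1 hmaxY
        linarith
      · have h2 : (Real.log (max u E))⁻¹ ≤ 1 := inv_le_one_of_one_le₀ hmax1
        have h3 : 0 < (Real.log Y)⁻¹ := inv_pos.2 hlogY0
        linarith
    rw [hg, abs_mul, abs_of_pos (inv_pos.2 hu0), abs_of_nonneg hW.1]
    have hu1 : u⁻¹ ≤ 1 := inv_le_one_of_one_le₀ hu.1.le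
    calc u⁻¹ * ((Real.log (max u E))⁻¹ - (Real.log Y)⁻¹) ≤ 1 * 1 :=
          mul_le_mul hu1 hW.2 hW.1 one_pos.le
      _ = 1 := one_mul 1
  have hint1E : IntegrableOn (fun u => f u * g u) (Ioc (1:ℝ) E) :=
    integrableOn_weighted hB hgmeas one_pos (D := 1)
      (fun u hu => hgbd u ⟨hu.1, le_trans hu.2 hEY.le⟩)
  have hint2E : IntegrableOn (fun u => f u * g u) (Ioc E Y) :=
    integrableOn_weighted hB hgmeas hE0 (D := 1)
      (fun u hu => hgbd u ⟨lt_trans hE1 hu.1, hu.2⟩)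
  have hsplit : (∫ u in Ioc (1:ℝ) Y, f u * g u)
      = (∫ u in Ioc (1:ℝ) E, f u * g u) + ∫ u in Ioc E Y, f u * g u := by
    rw [← Ioc_union_Ioc_eq_Ioc hE1.le hEY.le]
    exact setIntegral_union (Ioc_disjoint_Ioc_of_le le_rfl) measurableSet_Ioc hint1E hint2E
  -- on (E, Y] the weight g is w0 - (log Y)⁻¹ / u
  have hpiece2 : (∫ u in Ioc E Y, f u * g u)
      = J f Y - (Real.log Y)⁻¹ * ∫ u in Ioc E Y, f u * u⁻¹ := by
    have hptwise : ∀ u ∈ Ioc E Y, f u * g u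
        = f u * w0 u - (Real.log Y)⁻¹ * (f u * u⁻¹) := by
      intro u hu
      have hu1 : 1 < u := lt_trans hE1 hu.1
      have hu0 : (0:ℝ) < u := by linarith
      have hmax : max u E = u := max_eq_left hu.1.le
      show f u * (u⁻¹ * ((Real.log (max u E))⁻¹ - (Real.log Y)⁻¹)) = _
      rw [hmax, w0, mul_inv]
      ring
    rw [setIntegral_congr_fun measurableSet_Ioc hptwise]
    rw [integral_sub (integrableOn_fw0 hB hE1)
      (((integrableOn_weighted hB measurable_inv hE0 (D := E⁻¹) (fun u hu => by
        have hu0 : (0:ℝ) < u := lt_trans hE0 hu.1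
        rw [abs_of_pos (inv_pos.2 hu0)]
        exact inv_anti₀ hE0 hu.1.le)).const_mul ((Real.log Y)⁻¹)))]
    rw [integral_const_mul, J]
  have hbound1 : |∫ u in Ioc (1:ℝ) E, f u * g u| ≤ C * 1 * (E - 1) :=
    abs_integral_le_const hB hgmeas one_pos hE1.le one_pos.le
      (fun u hu => hgbd u ⟨hu.1, le_trans hu.2 hEY.le⟩)
  have hbound2 : |(Real.log Y)⁻¹ * ∫ u in Ioc E Y, f u * u⁻¹| ≤ C := by
    have h1 := abs_integral_finv_le hB hE0 hEY.le
    rw [log_expOne] at h1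
    rw [abs_mul, abs_of_pos (inv_pos.2 hlogY0)]
    calc (Real.log Y)⁻¹ * |∫ u in Ioc E Y, f u * u⁻¹|
        ≤ (Real.log Y)⁻¹ * (C * (Real.log Y - 1)) :=
          mul_le_mul_of_nonneg_left h1 (inv_pos.2 hlogY0).le
      _ ≤ C := by
          have h2 : (Real.log Y)⁻¹ * (C * (Real.log Y - 1))
              = C * (Real.log Y * (Real.log Y)⁻¹) - C * (Real.log Y)⁻¹ := by ring
          rw [mul_inv_cancel₀ hlogY0.ne', mul_one] at h2
          rw [h2]
          have h3 : 0 ≤ C * (Real.log Y)⁻¹ :=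
            mul_nonneg hB.nonneg (inv_pos.2 hlogY0).le
          linarith
  -- assemble
  rw [step1, step2, step3', hsplit, hpiece2]
  rw [show (∫ u in Ioc (1:ℝ) E, f u * g u)
      + (J f Y - (Real.log Y)⁻¹ * ∫ u in Ioc E Y, f u * u⁻¹) - J f Y
      = (∫ u in Ioc (1:ℝ) E, f u * g u)
        - (Real.log Y)⁻¹ * ∫ u in Ioc E Y, f u * u⁻¹ by ring]
  calc |(∫ u in Ioc (1:ℝ) E, f u * g u)
        - (Real.log Y)⁻¹ * ∫ u in Ioc E Y, f u * u⁻¹|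
      ≤ |∫ u in Ioc (1:ℝ) E, f u * g u|
        + |(Real.log Y)⁻¹ * ∫ u in Ioc E Y, f u * u⁻¹| := abs_sub _ _
    _ ≤ C * 1 * (E - 1) + C := by linarith

lemma bddUnder_le {f : ℝ → ℝ} {C : ℝ} (hB : Bdd f C) :
    IsBoundedUnder (· ≤ ·) ((ae μ₀) ⊓ atTop) f :=
  ⟨C, (hB.bound.mono (fun x h => (abs_le.1 h).2)).filter_mono inf_le_left⟩

lemma bddUnder_ge {f : ℝ → ℝ} {C : ℝ} (hB : Bdd f C) :
    IsBoundedUnder (· ≥ ·) ((ae μ₀) ⊓ atTop) f :=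
  ⟨-C, (hB.bound.mono (fun x h => (abs_le.1 h).1)).filter_mono inf_le_left⟩

/-- from an eventual bound on the inf filter to an a.e. bound beyond a threshold -/
lemma exists_ae_bound_of_eventually {p : ℝ → Prop}
    (h : ∀ᶠ x in (ae μ₀) ⊓ atTop, p x) :
    ∃ T : ℝ, Real.exp 1 ≤ T ∧ ∀ᵐ x ∂μ₀, T < x → p x := by
  rw [eventually_inf] at h
  obtain ⟨s, hs, t, ht, hst⟩ := h
  obtain ⟨T, hT⟩ := mem_atTop_sets.1 ht
  refine ⟨max T (Real.exp 1), le_max_right T (Real.exp 1), ?_⟩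
  have hsae : ∀ᵐ x ∂μ₀, x ∈ s := hs
  filter_upwards [hsae] with x hx hTx
  exact hst x (Set.mem_inter hx (hT x (le_of_lt (lt_of_le_of_lt (le_max_left _ _) hTx))))

lemma omega_le_limsup {f : ℝ → ℝ} {C : ℝ} (hB : Bdd f C) :
    omegaFun f ≤ limsup f ((ae μ₀) ⊓ atTop) := by
  apply le_of_forall_gt_imp_ge_of_dense
  intro b hb
  have hev : ∀ᶠ x in (ae μ₀) ⊓ atTop, f x < b :=
    eventually_lt_of_limsup_lt hb (bddUnder_le hB)
  obtain ⟨T, hT, hae⟩ := exists_ae_bound_of_eventually hev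
  exact omega_le hB hT (hae.mono (fun x h hx => (h hx).le))

lemma liminf_le_omega {f : ℝ → ℝ} {C : ℝ} (hB : Bdd f C) :
    liminf f ((ae μ₀) ⊓ atTop) ≤ omegaFun f := by
  apply le_of_forall_lt_imp_le_of_dense
  intro b hb
  have hev : ∀ᶠ x in (ae μ₀) ⊓ atTop, b < f x :=
    eventually_lt_of_lt_liminf hb (bddUnder_ge hB)
  obtain ⟨T, hT, hae⟩ := exists_ae_bound_of_eventually hev
  exact omega_ge hB hT (hae.mono (fun x h hx => (h hx).le))

/-- vanishing on functions with compact essential support -/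
lemma omega_zero_of_compact_support {f : ℝ → ℝ}
    (h : ∃ K : Set ℝ, IsCompact K ∧ ∀ᵐ x ∂μ₀, x ∉ K → f x = 0) : omegaFun f = 0 := by
  obtain ⟨K, hK, hf⟩ := h
  obtain ⟨R, hR⟩ : ∃ R, ∀ x ∈ K, x ≤ R := by
    rcases K.eq_empty_or_nonempty with he | hne
    · exact ⟨0, by simp [he]⟩
    · obtain ⟨R, hR⟩ := hK.bddAbove
      exact ⟨R, fun x hx => hR hx⟩
  set E := Real.exp 1 with hE
  have hE1 : 1 < E := one_lt_expOne
  set R' := max R E with hR'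
  have hconst : ∀ Y, R' ≤ Y → J f Y = J f R' := by
    intro Y hY
    have hcong : (fun s => f s * w0 s)
        =ᵐ[volume.restrict (Ioc E Y)]
          (indicator (Ioc E R') (fun s => f s * w0 s)) := by
      have hae2 : ∀ᵐ x ∂(volume.restrict (Ioc E Y)), x ∉ K → f x = 0 := by
        rw [restrict_Ioc_eq expOne_pos]; exact ae_restrict_of_ae hf
      filter_upwards [hae2, ae_restrict_mem measurableSet_Ioc] with x hx1 hx2
      by_cases hcase : x ≤ R'
      · exact (indicator_of_mem (show x ∈ Ioc E R' from ⟨hx2.1, hcase⟩) (fun s => f s * w0 s)).symm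
      · push_neg at hcase
        rw [indicator_of_notMem (fun hmem => absurd hmem.2 (not_le.2 hcase))]
        have hxK : x ∉ K := fun hxK =>
          absurd (le_trans (hR x hxK) (le_max_left R E)) (not_le.2 hcase)
        rw [hx1 hxK, zero_mul]
    rw [J, integral_congr_ae hcong, setIntegral_indicator measurableSet_Ioc]
    have hset : Ioc E Y ∩ Ioc E R' = Ioc E R' :=
      inter_eq_right.2 (fun x hx => ⟨hx.1, le_trans hx.2 hY⟩)
    rw [hset, J]
  have htend : Tendsto (phi f) atTop (𝓝 0) := by
    have h1 : Tendsto (fun Y => (Real.log (Real.log Y))⁻¹ * J f R') atTop (𝓝 0) := by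
      simpa using tendsto_loglog_inv.mul_const (J f R')
    apply h1.congr'
    filter_upwards [eventually_gt_atTop E, eventually_ge_atTop R'] with Y h1 h2
    rw [phi, if_pos h1, hconst Y h2]
  have : Tendsto (phi f) (V : Filter ℝ) (𝓝 0) := htend.mono_left V_le_atTop
  exact this.limUnder_eq

/-- vanishing on C₀ functions -/
lemma omega_zero_of_c0 {f : ℝ → ℝ}
    (h : ∃ g : ZeroAtInftyContinuousMap (Set.Ioi (0 : ℝ)) ℝ,
      ∀ᵐ x ∂μ₀, ∀ hx : x ∈ Set.Ioi (0 : ℝ), f x = g ⟨x, hx⟩) : omegaFun f = 0 := by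
  classical
  obtain ⟨g, hfg⟩ := h
  set gt : ℝ → ℝ := fun x => if hx : x ∈ Set.Ioi (0:ℝ) then g ⟨x, hx⟩ else 0 with hgt
  have hmem : ∀ᵐ x ∂μ₀, x ∈ Set.Ioi (0:ℝ) := by
    rw [μ₀]; exact ae_restrict_mem measurableSet_Ioi
  have hae : f =ᵐ[μ₀] gt := by
    filter_upwards [hfg, hmem] with x hx1 hx2
    rw [hgt]
    simp only [dif_pos hx2]
    exact hx1 hx2
  have hcont : ContinuousOn gt (Set.Ioi (0:ℝ)) := by
    rw [continuousOn_iff_continuous_restrict]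
    have heq : (Set.Ioi (0:ℝ)).domRestrict gt = ⇑g := by
      funext y
      simp only [domRestrict_apply, hgt, dif_pos y.2, Subtype.coe_eta]
    rw [heq]
    exact map_continuous g
  have hmeas : AEStronglyMeasurable gt μ₀ := by
    rw [μ₀]; exact hcont.aestronglyMeasurable measurableSet_Ioi
  set Cb := ‖g.toBCF‖ with hCb
  have hbd : ∀ x, |gt x| ≤ Cb := by
    intro x
    rw [hgt]
    by_cases hx : x ∈ Set.Ioi (0:ℝ)
    · simp only [dif_pos hx]
      exact g.toBCF.norm_coe_le_norm ⟨x, hx⟩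
    · simp only [dif_neg hx, abs_zero]
      exact norm_nonneg _
  have hB : Bdd f Cb := ⟨hmeas.congr hae.symm, le_trans (abs_nonneg _) (hbd 0),
    by filter_upwards [hae] with x hx; rw [hx]; exact hbd x⟩
  have hsmall : ∀ ε : ℝ, 0 < ε → ∃ T, Real.exp 1 ≤ T ∧ ∀ x, T < x → |gt x| ≤ ε := by
    intro ε hε
    have hz := zero_at_infty g
    have hmem2 : ⇑g ⁻¹' Metric.ball 0 ε ∈ cocompact (Set.Ioi (0:ℝ)) :=
      hz (Metric.ball_mem_nhds 0 hε)
    obtain ⟨K, hKc, hKs⟩ := mem_cocompact.1 hmem2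
    have himg : IsCompact (Subtype.val '' K) := hKc.image continuous_subtype_val
    obtain ⟨R, hR⟩ : ∃ R, ∀ y ∈ Subtype.val '' K, y ≤ R := by
      rcases (Subtype.val '' K).eq_empty_or_nonempty with he | hne
      · exact ⟨0, by simp [he]⟩
      · obtain ⟨R, hR⟩ := himg.bddAbove
        exact ⟨R, fun y hy => hR hy⟩
    refine ⟨max R (Real.exp 1), le_max_right _ _, ?_⟩
    intro x hx
    have hx0 : (0:ℝ) < x :=
      lt_trans (lt_of_lt_of_le expOne_pos (le_max_right R (Real.exp 1))) hx
    have hzK : (⟨x, hx0⟩ : Set.Ioi (0:ℝ)) ∉ K := by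
      intro hmemK
      have : x ≤ R := hR x ⟨⟨x, hx0⟩, hmemK, rfl⟩
      exact absurd (lt_of_le_of_lt (le_max_left R (Real.exp 1)) hx) (not_lt.2 this)
    have h5 := hKs hzK
    rw [mem_preimage, Metric.mem_ball, dist_zero_right, Real.norm_eq_abs] at h5
    rw [hgt]
    simp only [dif_pos (mem_Ioi.2 hx0)]
    exact le_of_lt h5
  have hboth : ∀ ε : ℝ, 0 < ε → |omegaFun f| ≤ ε := by
    intro ε hε
    obtain ⟨T, hT, hsm⟩ := hsmall ε hε
    rw [abs_le]
    constructor
    · refine omega_ge hB hT ?_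
      filter_upwards [hae] with x hx hTx
      rw [hx]
      exact neg_le_of_abs_le (hsm x hTx)
    · refine omega_le hB hT ?_
      filter_upwards [hae] with x hx hTx
      rw [hx]
      exact le_of_abs_le (hsm x hTx)
  have : |omegaFun f| ≤ 0 := le_of_forall_gt_imp_ge_of_dense (fun ε hε => hboth ε hε)
  have h0 : |omegaFun f| = 0 := le_antisymm this (abs_nonneg _)
  exact abs_eq_zero.1 h0

end StateAux

/-- There exists a state `ω` on `L^∞((0,∞))` which (1) vanishes on (classes of) functions in
`C₀((0,∞))`, (2) lies between the essential liminf and essential limsup at `+∞`,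
(3) vanishes on functions with compact essential support, (4) is dilation invariant,
(5) is invariant under the power maps `P^a`, and (6) is invariant under the Cesàro mean `M`. -/
theorem exists_state_on_Linf_Ioi :
    ∃ ω : LinfState μ₀,
      (∀ f : ℝ → ℝ,
        (∃ g : ZeroAtInftyContinuousMap (Set.Ioi (0 : ℝ)) ℝ,
          ∀ᵐ x ∂μ₀, ∀ hx : x ∈ Set.Ioi (0 : ℝ), f x = g ⟨x, hx⟩) → ω.toFun f = 0) ∧
      (∀ f : ℝ → ℝ, MemLinf μ₀ f →
        Filter.liminf f ((ae μ₀) ⊓ atTop) ≤ ω.toFun f ∧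
          ω.toFun f ≤ Filter.limsup f ((ae μ₀) ⊓ atTop)) ∧
      (∀ f : ℝ → ℝ,
        (∃ K : Set ℝ, IsCompact K ∧ ∀ᵐ x ∂μ₀, x ∉ K → f x = 0) → ω.toFun f = 0) ∧
      (∀ c : ℝ, 0 < c → ∀ f : ℝ → ℝ, MemLinf μ₀ f →
        ω.toFun (fun x => f (c * x)) = ω.toFun f) ∧
      (∀ a : ℝ, 0 < a → ∀ f : ℝ → ℝ, MemLinf μ₀ f →
        ω.toFun (fun x => f (x ^ a)) = ω.toFun f) ∧
      (∀ f : ℝ → ℝ, MemLinf μ₀ f → ω.toFun (cesaroMean f) = ω.toFun f) := by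
  classical
  refine ⟨⟨StateAux.omegaFun, ?_, ?_, ?_, ?_, ?_⟩, ?_, ?_, ?_, ?_, ?_, ?_⟩
  · intro f g hf hg
    obtain ⟨C, hBf⟩ := StateAux.memLinf_bdd hf
    obtain ⟨D, hBg⟩ := StateAux.memLinf_bdd hg
    exact StateAux.omega_add hBf hBg
  · intro c f hf
    obtain ⟨C, hBf⟩ := StateAux.memLinf_bdd hf
    exact StateAux.omega_smul c hBf
  · intro f g h
    exact StateAux.omega_congr h
  · intro f hf h
    obtain ⟨C, hBf⟩ := StateAux.memLinf_bdd hf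
    exact StateAux.omega_nonneg hBf h
  · exact StateAux.omega_one
  · intro f h
    exact StateAux.omega_zero_of_c0 h
  · intro f hf
    obtain ⟨C, hBf⟩ := StateAux.memLinf_bdd hf
    exact ⟨StateAux.liminf_le_omega hBf, StateAux.omega_le_limsup hBf⟩
  · intro f h
    exact StateAux.omega_zero_of_compact_support h
  · intro c hc f hf
    obtain ⟨C, hBf⟩ := StateAux.memLinf_bdd hf
    obtain ⟨K, Y₀, hK⟩ := StateAux.dilation_bounded_diff hBf hc
    exact StateAux.omega_eq_of_bounded_diff hBf hK
  · intro a ha f hf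
    obtain ⟨C, hBf⟩ := StateAux.memLinf_bdd hf
    obtain ⟨K, Y₀, hK⟩ := StateAux.power_bounded_diff hBf ha
    exact StateAux.omega_eq_of_bounded_diff hBf hK
  · intro f hf
    obtain ⟨C, hBf⟩ := StateAux.memLinf_bdd hf
    obtain ⟨K, Y₀, hK⟩ := StateAux.cesaro_bounded_diff hBf
    exact StateAux.omega_eq_of_bounded_diff hBf hK
end
end

section
/- There exists a state ω̃ on L^∞(ℝ) satisfying all of the following: (1) ω̃(f) = 0 for every f having a representative in C₀(ℝ) (continuous functions on ℝ vanishing at ±∞); (2) for every real-valued f, ess liminf_{t→∞} f(t) ≤ ω̃(f) ≤ ess limsup_{t→∞} f(t); (3) ω̃(f) = 0 whenever f has compact essential support; (4) ω̃(T_c f) = ω̃(f) for all c ∈ ℝ; (5) ω̃(D_a f) = ω̃(f) for all a > 0; (6) ω̃(H f) = ω̃(f) for all f. -/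
open MeasureTheory Filter Set Topology

noncomputable section

/-- The Hardy mean `H` on functions on `ℝ`:
`H f (u) = (1/u) ∫₀ᵘ f(v) dv` for `u > 0`, and `0` for `u ≤ 0`. -/
def hardyMean (f : ℝ → ℝ) : ℝ → ℝ := fun u =>
  if 0 < u then u⁻¹ * ∫ v in Set.Ioc (0 : ℝ) u, f v else 0

namespace OmegaAux

lemma norm_setIntegral_le_of_norm_le_const' {μ : Measure ℝ} {s : Set ℝ} {f : ℝ → ℝ} {C : ℝ}
    (hs : μ s < ⊤) (_hsm : MeasurableSet s) (hC : ∀ x ∈ s, ‖f x‖ ≤ C) :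
    ‖∫ x in s, f x ∂μ‖ ≤ C * (μ s).toReal :=
  norm_setIntegral_le_of_norm_le_const hs hC


def UF : Ultrafilter ℝ := Ultrafilter.of atTop

lemma UF_le : (UF : Filter ℝ) ≤ atTop := Ultrafilter.of_le _

lemma eventually_UF {p : ℝ → Prop} (h : ∀ᶠ x in atTop, p x) : ∀ᶠ x in (UF : Filter ℝ), p x :=
  h.filter_mono UF_le

def ulim (g : ℝ → ℝ) : ℝ := limsup g UF

lemma tendsto_ulim {g : ℝ → ℝ} {K : ℝ} (h : ∀ᶠ x in (UF : Filter ℝ), |g x| ≤ K) :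
    Tendsto g UF (𝓝 (ulim g)) := by
  have hmem : (Ultrafilter.map g UF : Filter ℝ) ≤ 𝓟 (Icc (-K) K) := by
    rw [le_principal_iff]
    exact h.mono fun x hx => by
      rcases abs_le.mp hx with ⟨h1, h2⟩; exact ⟨h1, h2⟩
  obtain ⟨a, -, ha⟩ := (isCompact_Icc : IsCompact (Icc (-K) K)).ultrafilter_le_nhds
    (Ultrafilter.map g UF) hmem
  have ht : Tendsto g UF (𝓝 a) := ha
  rw [ulim, ht.limsup_eq]; exact ht

lemma ulim_eq {g : ℝ → ℝ} {a : ℝ} (h : Tendsto g UF (𝓝 a)) : ulim g = a := h.limsup_eq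

lemma ulim_congr {g h : ℝ → ℝ} (e : ∀ᶠ x in (UF : Filter ℝ), g x = h x) : ulim g = ulim h :=
  limsup_congr e

lemma ulim_const (c : ℝ) : ulim (fun _ => c) = c := ulim_eq tendsto_const_nhds

lemma ulim_dist_le {g h : ℝ → ℝ} {a b C : ℝ} (hg : Tendsto g UF (𝓝 a))
    (hh : Tendsto h UF (𝓝 b)) (hd : ∀ᶠ x in (UF : Filter ℝ), |g x - h x| ≤ C) :
    |a - b| ≤ C := by
  have ht : Tendsto (fun x => |g x - h x|) UF (𝓝 |a - b|) := (hg.sub hh).abs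
  exact le_of_tendsto ht hd

lemma ulim_eq_ulim {g h : ℝ → ℝ} {a b : ℝ} (hg : Tendsto g UF (𝓝 a))
    (hh : Tendsto h UF (𝓝 b))
    (hd : ∀ ε : ℝ, 0 < ε → ∀ᶠ x in (UF : Filter ℝ), |g x - h x| ≤ ε) : a = b := by
  have h0 : ∀ ε : ℝ, 0 < ε → |a - b| ≤ ε := fun ε hε => ulim_dist_le hg hh (hd ε hε)
  have : |a - b| ≤ 0 := by
    by_contra hc
    push_neg at hc
    linarith [h0 (|a - b| / 2) (by linarith)]
  have := le_antisymm this (abs_nonneg _)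
  rw [abs_eq_zero, sub_eq_zero] at this
  exact this



def KK (f : ℝ → ℝ) : ℝ := (eLpNorm f ⊤ volume).toReal

lemma KK_nonneg (f : ℝ → ℝ) : 0 ≤ KK f := ENNReal.toReal_nonneg

open scoped Classical in
def rep (f : ℝ → ℝ) : ℝ → ℝ :=
  if h : MemLinf volume f then fun x => max (-(KK f)) (min (KK f) (h.1.mk f x)) else 0

lemma rep_meas (f : ℝ → ℝ) : Measurable (rep f) := by
  rw [rep]
  split
  · rename_i h
    exact measurable_const.max (measurable_const.min h.1.stronglyMeasurable_mk.measurable)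
  · exact measurable_const

lemma rep_bound (f : ℝ → ℝ) : ∀ x, |rep f x| ≤ KK f := by
  intro x
  rw [rep]
  split
  · rw [abs_le]
    constructor
    · exact le_max_left _ _
    · exact max_le (neg_le_self (KK_nonneg f)) (min_le_left _ _)
  · simpa using KK_nonneg f

lemma ae_abs_le (f : ℝ → ℝ) (h : MemLinf volume f) : ∀ᵐ x ∂(volume : Measure ℝ), |f x| ≤ KK f := by
  have h1 : ∀ᵐ x ∂(volume : Measure ℝ), (‖f x‖₊ : ENNReal) ≤ eLpNormEssSup f volume :=
    ae_le_eLpNormEssSup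
  filter_upwards [h1] with x hx
  have hne : eLpNormEssSup f volume ≠ ⊤ := by
    rw [← eLpNorm_exponent_top]; exact h.2.ne
  have := ENNReal.toReal_mono hne hx
  rw [ENNReal.coe_toReal, coe_nnnorm, Real.norm_eq_abs] at this
  show |f x| ≤ (eLpNorm f ⊤ volume).toReal
  rw [eLpNorm_exponent_top]
  exact this

lemma rep_ae {f : ℝ → ℝ} (h : MemLinf volume f) : rep f =ᵐ[volume] f := by
  have h2 := ae_abs_le f h
  have h3 : f =ᵐ[volume] h.1.mk f := h.1.ae_eq_mk
  filter_upwards [h2, h3] with x hx hx3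
  classical
  rw [rep, dif_pos h, ← hx3]
  rcases abs_le.mp hx with ⟨ha, hb⟩
  rw [min_eq_right hb, max_eq_right ha]

lemma rep_of_not {f : ℝ → ℝ} (h : ¬ MemLinf volume f) : rep f = 0 := by
  classical
  rw [rep, dif_neg h]

lemma memLinf_congr {f g : ℝ → ℝ} (h : f =ᵐ[volume] g) (hf : MemLinf volume f) :
    MemLinf volume g := hf.ae_eq h

lemma memLinf_of_bound {g : ℝ → ℝ} (hm : AEStronglyMeasurable g volume) (K : ℝ)
    (h : ∀ᵐ x ∂(volume : Measure ℝ), |g x| ≤ K) : MemLinf volume g :=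
  memLp_top_of_bound hm K (h.mono fun x hx => by rwa [Real.norm_eq_abs])

/-- null sets pull back under multiplication by a nonzero constant -/
lemma ae_comp_mul {y : ℝ} (hy : y ≠ 0) {g h : ℝ → ℝ} (he : g =ᵐ[volume] h) :
    (fun t => g (t * y)) =ᵐ[volume] fun t => h (t * y) := by
  have h0 : volume {x | g x ≠ h x} = 0 := he
  have h1 : {t : ℝ | g (t * y) ≠ h (t * y)} = (· * y) ⁻¹' {x | g x ≠ h x} := rfl
  show volume {t : ℝ | ¬ g (t * y) = h (t * y)} = 0
  rw [show {t : ℝ | ¬ g (t * y) = h (t * y)} = (· * y) ⁻¹' {x | g x ≠ h x} from rfl,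
    Real.volume_preimage_mul_right hy, h0, mul_zero]

lemma ae_comp_add {c : ℝ} {g h : ℝ → ℝ} (he : g =ᵐ[volume] h) :
    (fun t => g (t + c)) =ᵐ[volume] fun t => h (t + c) := by
  have h0 : volume {x | g x ≠ h x} = 0 := he
  show volume {t : ℝ | ¬ g (t + c) = h (t + c)} = 0
  rw [show {t : ℝ | ¬ g (t + c) = h (t + c)} = (· + c) ⁻¹' {x | g x ≠ h x} from rfl]
  exact (measurePreserving_add_right volume c).quasiMeasurePreserving.preimage_null h0

/-- bounded measurable functions are integrable on finite-measure sets -/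
lemma integrableOn_bdd {g : ℝ → ℝ} (hm : Measurable g) {K : ℝ} (hb : ∀ x, |g x| ≤ K)
    {S : Set ℝ} (hS : volume S < ⊤) : IntegrableOn g S volume := by
  refine Integrable.mono' (g := fun _ => K) ((integrableOn_const_iff).mpr (Or.inr hS))
    hm.aestronglyMeasurable.restrict ?_
  exact ae_of_all _ fun x => by rw [Real.norm_eq_abs]; exact hb x


/-- dilation average over `t ∈ (1,2]` -/
def Bop (f : ℝ → ℝ) (y : ℝ) : ℝ := ∫ t in Ioc (1:ℝ) 2, f (t * y)

/-- geometric (log-scale) average of `Bop f` over dilations `e^s`, `s ∈ (0,T]` -/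
def Aop (f : ℝ → ℝ) (T x : ℝ) : ℝ := T⁻¹ * ∫ s in Ioc (0:ℝ) T, Bop f (Real.exp s * x)

lemma volume_Ioc12 : (volume (Ioc (1:ℝ) 2)).toReal = 1 := by
  rw [Real.volume_Ioc]; norm_num

lemma integrableOn_comp_mul {f : ℝ → ℝ} (hm : Measurable f) {K : ℝ} (hb : ∀ x, |f x| ≤ K)
    (y : ℝ) {S : Set ℝ} (hS : volume S < ⊤) :
    IntegrableOn (fun t => f (t * y)) S volume := by
  refine Integrable.mono' (g := fun _ => K) ((integrableOn_const_iff).mpr (Or.inr hS))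
    ((hm.comp (measurable_id.mul_const y)).aestronglyMeasurable.restrict) ?_
  exact ae_of_all _ fun x => by rw [Real.norm_eq_abs]; exact hb _

lemma integrableOn_bdd' {g : ℝ → ℝ} (hm : Measurable g) {K : ℝ} (hb : ∀ x, |g x| ≤ K)
    {S : Set ℝ} (hS : volume S < ⊤) : IntegrableOn g S volume := by
  refine Integrable.mono' (g := fun _ => K) ((integrableOn_const_iff).mpr (Or.inr hS))
    hm.aestronglyMeasurable.restrict ?_
  exact ae_of_all _ fun x => by rw [Real.norm_eq_abs]; exact hb x

lemma Bop_meas {f : ℝ → ℝ} (hm : Measurable f) : Measurable (Bop f) := by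
  have h : StronglyMeasurable (fun p : ℝ × ℝ => f (p.2 * p.1)) :=
    (hm.comp (measurable_snd.mul measurable_fst)).stronglyMeasurable
  exact h.integral_prod_right'.measurable

lemma Bop_bound {f : ℝ → ℝ} {K : ℝ} (hb : ∀ x, |f x| ≤ K) :
    ∀ y, |Bop f y| ≤ K := by
  intro y
  have h := norm_setIntegral_le_of_norm_le_const' (μ := volume) (s := Ioc (1:ℝ) 2)
    (f := fun t => f (t * y)) (C := K)
    (by rw [Real.volume_Ioc]; exact ENNReal.ofReal_lt_top) measurableSet_Ioc
    (fun x _ => by rw [Real.norm_eq_abs]; exact hb _)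
  rw [Real.norm_eq_abs] at h
  calc |Bop f y| ≤ K * (volume (Ioc (1:ℝ) 2)).toReal := h
    _ = K := by rw [volume_Ioc12, mul_one]

lemma Bop_add {f g : ℝ → ℝ} (hmf : Measurable f) (hmg : Measurable g)
    {Kf Kg : ℝ} (hbf : ∀ x, |f x| ≤ Kf) (hbg : ∀ x, |g x| ≤ Kg) (y : ℝ) :
    Bop (fun x => f x + g x) y = Bop f y + Bop g y := by
  unfold Bop
  exact integral_add (integrableOn_comp_mul hmf hbf y (by rw [Real.volume_Ioc]; exact ENNReal.ofReal_lt_top))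
    (integrableOn_comp_mul hmg hbg y (by rw [Real.volume_Ioc]; exact ENNReal.ofReal_lt_top))

lemma Bop_smul (c : ℝ) (f : ℝ → ℝ) (y : ℝ) :
    Bop (fun x => c * f x) y = c * Bop f y := by
  unfold Bop; exact integral_const_mul c _

lemma Bop_congr {f g : ℝ → ℝ} (he : f =ᵐ[volume] g) {y : ℝ} (hy : y ≠ 0) :
    Bop f y = Bop g y :=
  integral_congr_ae (ae_restrict_of_ae (ae_comp_mul hy he))

lemma Bop_le {f : ℝ → ℝ} (hm : Measurable f) {K M R : ℝ} (hb : ∀ x, |f x| ≤ K) (hR : 0 ≤ R)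
    (hM : ∀ᵐ u ∂(volume : Measure ℝ), u ∈ Ioi R → f u ≤ M) :
    ∀ y, R < y → Bop f y ≤ M := by
  intro y hy
  have hy0 : 0 < y := lt_of_le_of_lt hR hy
  have hnull : volume {u : ℝ | ¬ (u ∈ Ioi R → f u ≤ M)} = 0 := by
    rw [← ae_iff]; exact hM
  have hpre : volume ((· * y) ⁻¹' {u : ℝ | ¬ (u ∈ Ioi R → f u ≤ M)}) = 0 := by
    rw [Real.volume_preimage_mul_right hy0.ne', hnull, mul_zero]
  have hae : ∀ᵐ t ∂(volume : Measure ℝ), t ∈ Ioc (1:ℝ) 2 → f (t * y) ≤ M := by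
    rw [ae_iff]
    refine measure_mono_null ?_ hpre
    intro t ht
    simp only [mem_setOf_eq, not_forall] at ht
    obtain ⟨ht12, hnot⟩ := ht
    have h1t : (1:ℝ) < t := ht12.1
    have hty : y < t * y := by nlinarith
    show t * y ∈ {u : ℝ | ¬ (u ∈ Ioi R → f u ≤ M)}
    simp only [mem_setOf_eq, not_forall]
    exact ⟨mem_Ioi.mpr (lt_trans hy hty), hnot⟩
  have hint : IntegrableOn (fun t => f (t * y)) (Ioc (1:ℝ) 2) volume :=
    integrableOn_comp_mul hm hb y (by rw [Real.volume_Ioc]; exact ENNReal.ofReal_lt_top)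
  have hmono := integral_mono_ae (μ := volume.restrict (Ioc (1:ℝ) 2)) hint
    ((integrableOn_const_iff).mpr (Or.inr (by rw [Real.volume_Ioc]; exact ENNReal.ofReal_lt_top)))
    ((ae_restrict_iff' measurableSet_Ioc).mpr hae)
  calc Bop f y ≤ ∫ _ in Ioc (1:ℝ) 2, M ∂volume := hmono
    _ = M := by rw [setIntegral_const, measureReal_def, volume_Ioc12, smul_eq_mul, one_mul]

lemma Bop_meas_exp {f : ℝ → ℝ} (hm : Measurable f) (x : ℝ) :
    Measurable (fun s => Bop f (Real.exp s * x)) :=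
  (Bop_meas hm).comp (Real.measurable_exp.mul_const x)

lemma Aop_zero {f : ℝ → ℝ} {T : ℝ} (hT : T ≤ 0) (x : ℝ) : Aop f T x = 0 := by
  unfold Aop
  rw [Set.Ioc_eq_empty (by exact fun h => absurd hT (not_le.mpr h)), Measure.restrict_empty,
    integral_zero_measure, mul_zero]

lemma Aop_bound {f : ℝ → ℝ} {K : ℝ} (hK : 0 ≤ K) (hb : ∀ x, |f x| ≤ K) :
    ∀ T x, |Aop f T x| ≤ K := by
  intro T x
  rcases le_or_gt T 0 with hT | hT
  · rw [Aop_zero hT]; simpa using hK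
  · have hB := Bop_bound hb
    have h := norm_setIntegral_le_of_norm_le_const' (μ := volume) (s := Ioc (0:ℝ) T)
      (f := fun s => Bop f (Real.exp s * x)) (C := K)
      (by rw [Real.volume_Ioc]; exact ENNReal.ofReal_lt_top) measurableSet_Ioc
      (fun s _ => by rw [Real.norm_eq_abs]; exact hB _)
    rw [Real.norm_eq_abs, Real.volume_Ioc, ENNReal.toReal_ofReal (by linarith)] at h
    rw [Aop, abs_mul, abs_inv, abs_of_pos hT]
    calc T⁻¹ * |∫ s in Ioc (0:ℝ) T, Bop f (Real.exp s * x)| ≤ T⁻¹ * (K * (T - 0)) := by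
          exact mul_le_mul_of_nonneg_left h (by positivity)
      _ = K := by field_simp; ring
lemma integrableOn_Bop_exp {f : ℝ → ℝ} (hm : Measurable f) {K : ℝ} (hb : ∀ x, |f x| ≤ K)
    (x : ℝ) {S : Set ℝ} (hS : volume S < ⊤) :
    IntegrableOn (fun s => Bop f (Real.exp s * x)) S volume :=
  integrableOn_bdd' (Bop_meas_exp hm x) (fun s => Bop_bound hb _) hS

lemma Aop_add {f g : ℝ → ℝ} (hmf : Measurable f) (hmg : Measurable g)
    {Kf Kg : ℝ} (hbf : ∀ x, |f x| ≤ Kf) (hbg : ∀ x, |g x| ≤ Kg) (T x : ℝ) :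
    Aop (fun x => f x + g x) T x = Aop f T x + Aop g T x := by
  unfold Aop
  rw [← mul_add, ← integral_add
    (integrableOn_Bop_exp hmf hbf x (by rw [Real.volume_Ioc]; exact ENNReal.ofReal_lt_top))
    (integrableOn_Bop_exp hmg hbg x (by rw [Real.volume_Ioc]; exact ENNReal.ofReal_lt_top))]
  congr 1
  apply setIntegral_congr_fun measurableSet_Ioc
  intro s _
  exact Bop_add hmf hmg hbf hbg _

lemma Aop_smul (c : ℝ) (f : ℝ → ℝ) (T x : ℝ) :
    Aop (fun x => c * f x) T x = c * Aop f T x := by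
  unfold Aop
  rw [show (fun s => Bop (fun x => c * f x) (Real.exp s * x)) =
      fun s => c * Bop f (Real.exp s * x) from funext fun s => Bop_smul c f _,
    integral_const_mul]
  ring

lemma Aop_neg (f : ℝ → ℝ) (T x : ℝ) : Aop (fun x => - f x) T x = - Aop f T x := by
  have h := Aop_smul (-1) f T x
  simp only [neg_one_mul] at h
  exact h

lemma Aop_congr {f g : ℝ → ℝ} (he : f =ᵐ[volume] g) {x : ℝ} (hx : 0 < x) (T : ℝ) :
    Aop f T x = Aop g T x := by
  unfold Aop
  congr 1
  apply setIntegral_congr_fun measurableSet_Ioc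
  intro s _
  exact Bop_congr he (ne_of_gt (mul_pos (Real.exp_pos s) hx))

lemma Aop_le {f : ℝ → ℝ} (hm : Measurable f) {K M R : ℝ} (hb : ∀ x, |f x| ≤ K) (hR : 0 ≤ R)
    (hM : ∀ᵐ u ∂(volume : Measure ℝ), u ∈ Ioi R → f u ≤ M) :
    ∀ T, 0 < T → ∀ x, R < x → Aop f T x ≤ M := by
  intro T hT x hx
  have hx0 : 0 < x := lt_of_le_of_lt hR hx
  have hB := Bop_le hm hb hR hM
  have hpt : ∀ s ∈ Ioc (0:ℝ) T, Bop f (Real.exp s * x) ≤ M := by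
    intro s hs
    apply hB
    have h1 : (1:ℝ) ≤ Real.exp s := Real.one_le_exp hs.1.le
    nlinarith
  have hmono := setIntegral_mono_on
    (integrableOn_Bop_exp hm hb x (by rw [Real.volume_Ioc]; exact ENNReal.ofReal_lt_top))
    ((integrableOn_const_iff).mpr (Or.inr (by rw [Real.volume_Ioc]; exact ENNReal.ofReal_lt_top)))
    measurableSet_Ioc hpt
  rw [setIntegral_const, measureReal_def, Real.volume_Ioc, ENNReal.toReal_ofReal (by linarith), smul_eq_mul] at hmono
  rw [Aop]
  calc T⁻¹ * ∫ s in Ioc (0:ℝ) T, Bop f (Real.exp s * x)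
      ≤ T⁻¹ * ((T - 0) * M) := mul_le_mul_of_nonneg_left hmono (by positivity)
    _ = M := by field_simp; ring

lemma Aop_ge {f : ℝ → ℝ} (hm : Measurable f) {K M R : ℝ} (hb : ∀ x, |f x| ≤ K) (hR : 0 ≤ R)
    (hM : ∀ᵐ u ∂(volume : Measure ℝ), u ∈ Ioi R → M ≤ f u) :
    ∀ T, 0 < T → ∀ x, R < x → M ≤ Aop f T x := by
  intro T hT x hx
  have hneg := Aop_le (f := fun u => - f u) (M := -M) hm.neg (K := K)
    (fun u => by rw [abs_neg]; exact hb u) hR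
    (hM.mono fun u hu hmem => neg_le_neg (hu hmem)) T hT x hx
  rw [Aop_neg] at hneg
  linarith

/-- translation change of variables for `Ioc` set integrals -/
lemma setIntegral_shift (h : ℝ → ℝ) {a b : ℝ} (δ : ℝ) (hab : a ≤ b) :
    ∫ t in Ioc a b, h (t + δ) = ∫ t in Ioc (a + δ) (b + δ), h t := by
  rw [← intervalIntegral.integral_of_le hab, ← intervalIntegral.integral_of_le (by linarith),
    intervalIntegral.integral_comp_add_right]

/-- scaling change of variables -/
lemma setIntegral_scale (h : ℝ → ℝ) {w : ℝ} (hw : 0 < w) :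
    ∫ σ in Ioc (0:ℝ) 1, h (σ * w) = w⁻¹ * ∫ u in Ioc 0 w, h u := by
  rw [← intervalIntegral.integral_of_le zero_le_one,
    intervalIntegral.integral_comp_mul_right h hw.ne']
  rw [zero_mul, one_mul, smul_eq_mul, intervalIntegral.integral_of_le hw.le]

/-- key estimate: integrals of a bounded function over two shifted intervals differ
by at most `2 K |δ|`. -/
lemma shift_bound {h : ℝ → ℝ} (hm : Measurable h) {K : ℝ} (hK : 0 ≤ K)
    (hb : ∀ t, |h t| ≤ K) (a δ L : ℝ) (hL : 0 ≤ L) :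
    |(∫ t in Ioc (a + δ) (a + δ + L), h t) - ∫ t in Ioc a (a + L), h t| ≤ 2 * K * |δ| := by
  have main : ∀ a' δ' : ℝ, 0 ≤ δ' →
      |(∫ t in Ioc (a' + δ') (a' + δ' + L), h t) - ∫ t in Ioc a' (a' + L), h t|
        ≤ 2 * K * δ' := by
    intro a' δ' hδ'
    have hIoc : ∀ c d : ℝ, volume (Ioc c d) < ⊤ := fun c d => by
      rw [Real.volume_Ioc]; exact ENNReal.ofReal_lt_top
    have hint : ∀ c d : ℝ, IntegrableOn h (Ioc c d) volume :=
      fun c d => integrableOn_bdd' hm hb (hIoc c d)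
    have hbnd : ∀ c d : ℝ, c ≤ d → |∫ t in Ioc c d, h t| ≤ K * (d - c) := by
      intro c d hcd
      have := norm_setIntegral_le_of_norm_le_const' (μ := volume) (s := Ioc c d)
        (f := h) (C := K) (hIoc c d) measurableSet_Ioc
        (fun t _ => by rw [Real.norm_eq_abs]; exact hb t)
      rw [Real.norm_eq_abs, Real.volume_Ioc, ENNReal.toReal_ofReal (by linarith)] at this
      exact this
    rcases le_or_gt δ' L with hcase | hcase
    · -- split the two intervals
      have e1 : Ioc a' (a' + L) = Ioc a' (a' + δ') ∪ Ioc (a' + δ') (a' + L) :=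
        (Ioc_union_Ioc_eq_Ioc (by linarith) (by linarith)).symm
      have e2 : Ioc (a' + δ') (a' + δ' + L) = Ioc (a' + δ') (a' + L) ∪ Ioc (a' + L) (a' + δ' + L) :=
        (Ioc_union_Ioc_eq_Ioc (by linarith) (by linarith)).symm
      have d1 : Disjoint (Ioc a' (a' + δ')) (Ioc (a' + δ') (a' + L)) :=
        Set.Ioc_disjoint_Ioc.mpr (by rw [min_def, max_def]; split <;> split <;> linarith)
      have d2 : Disjoint (Ioc (a' + δ') (a' + L)) (Ioc (a' + L) (a' + δ' + L)) :=
        Set.Ioc_disjoint_Ioc.mpr (by rw [min_def, max_def]; split <;> split <;> linarith)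
      rw [e1, e2, setIntegral_union d1 measurableSet_Ioc (hint _ _) (hint _ _),
        setIntegral_union d2 measurableSet_Ioc (hint _ _) (hint _ _)]
      have b1 := hbnd a' (a' + δ') (by linarith)
      have b2 := hbnd (a' + L) (a' + δ' + L) (by linarith)
      have habs : |(∫ t in Ioc (a' + L) (a' + δ' + L), h t) - ∫ t in Ioc a' (a' + δ'), h t|
          ≤ K * δ' + K * δ' := by
        calc |(∫ t in Ioc (a' + L) (a' + δ' + L), h t) - ∫ t in Ioc a' (a' + δ'), h t|
            ≤ |∫ t in Ioc (a' + L) (a' + δ' + L), h t| + |∫ t in Ioc a' (a' + δ'), h t| :=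
              abs_sub _ _
          _ ≤ K * δ' + K * δ' := by
              apply add_le_add
              · calc |∫ t in Ioc (a' + L) (a' + δ' + L), h t| ≤ K * ((a' + δ' + L) - (a' + L)) := b2
                  _ = K * δ' := by ring_nf
              · calc |∫ t in Ioc a' (a' + δ'), h t| ≤ K * ((a' + δ') - a') := b1
                  _ = K * δ' := by ring_nf
      calc |((∫ t in Ioc (a' + δ') (a' + L), h t) + ∫ t in Ioc (a' + L) (a' + δ' + L), h t) -
            ((∫ t in Ioc a' (a' + δ'), h t) + ∫ t in Ioc (a' + δ') (a' + L), h t)|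
          = |(∫ t in Ioc (a' + L) (a' + δ' + L), h t) - ∫ t in Ioc a' (a' + δ'), h t| := by
            ring_nf
        _ ≤ K * δ' + K * δ' := habs
        _ = 2 * K * δ' := by ring
    · -- intervals are far apart; crude bound
      have b1 := hbnd a' (a' + L) (by linarith)
      have b2 := hbnd (a' + δ') (a' + δ' + L) (by linarith)
      calc |(∫ t in Ioc (a' + δ') (a' + δ' + L), h t) - ∫ t in Ioc a' (a' + L), h t|
          ≤ |∫ t in Ioc (a' + δ') (a' + δ' + L), h t| + |∫ t in Ioc a' (a' + L), h t| :=
            abs_sub _ _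
        _ ≤ K * ((a' + δ' + L) - (a' + δ')) + K * ((a' + L) - a') := add_le_add b2 b1
        _ = 2 * K * L := by ring
        _ ≤ 2 * K * δ' := by nlinarith
  rcases le_or_gt 0 δ with hδ | hδ
  · rw [abs_of_nonneg hδ]; exact main a δ hδ
  · have h2 := main (a + δ) (-δ) (by linarith)
    rw [abs_of_neg hδ]
    have e1 : a + δ + -δ = a := by ring
    rw [e1] at h2
    rw [abs_sub_comm]
    exact h2
def Jay (f : ℝ → ℝ) (T : ℝ) : ℝ := ulim (fun x => Aop f T x)

def omegaFun (f : ℝ → ℝ) : ℝ := ulim (Jay (rep f))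

lemma tendsto_Jay {f : ℝ → ℝ} {K : ℝ} (hK : 0 ≤ K) (hb : ∀ x, |f x| ≤ K) (T : ℝ) :
    Tendsto (fun x => Aop f T x) UF (𝓝 (Jay f T)) :=
  tendsto_ulim (Eventually.of_forall fun x => Aop_bound hK hb T x)

lemma Jay_bound {f : ℝ → ℝ} {K : ℝ} (hK : 0 ≤ K) (hb : ∀ x, |f x| ≤ K) (T : ℝ) :
    |Jay f T| ≤ K :=
  le_of_tendsto (tendsto_Jay hK hb T).abs (Eventually.of_forall fun x => Aop_bound hK hb T x)

lemma tendsto_omega (f : ℝ → ℝ) : Tendsto (Jay (rep f)) UF (𝓝 (omegaFun f)) :=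
  tendsto_ulim (Eventually.of_forall fun T => Jay_bound (KK_nonneg f) (rep_bound f) T)

lemma Jay_congr {g h : ℝ → ℝ} (hae : g =ᵐ[volume] h) (T : ℝ) : Jay g T = Jay h T :=
  ulim_congr ((eventually_UF (eventually_gt_atTop 0)).mono fun x hx => Aop_congr hae hx T)

lemma omega_zero_of_not {f : ℝ → ℝ} (hf : ¬ MemLinf volume f) : omegaFun f = 0 := by
  have h0 : ∀ T x, Aop (rep f) T x = 0 := by
    intro T x
    rw [rep_of_not hf]
    have hB : ∀ y, Bop (0 : ℝ → ℝ) y = 0 := fun y => by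
      unfold Bop; simp
    unfold Aop
    rw [show (fun s => Bop (0 : ℝ → ℝ) (Real.exp s * x)) = fun _ => (0:ℝ) from
      funext fun s => hB _]
    simp
  have h1 : ∀ T, Jay (rep f) T = 0 := by
    intro T
    rw [Jay, show (fun x => Aop (rep f) T x) = fun _ => (0:ℝ) from funext fun x => h0 T x]
    exact ulim_const 0
  rw [omegaFun, show Jay (rep f) = fun _ => (0:ℝ) from funext h1]
  exact ulim_const 0

lemma omega_congr {f g : ℝ → ℝ} (h : f =ᵐ[volume] g) : omegaFun f = omegaFun g := by
  by_cases hf : MemLinf volume f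
  · have hg : MemLinf volume g := memLinf_congr h hf
    have hae : rep f =ᵐ[volume] rep g := (rep_ae hf).trans (h.trans (rep_ae hg).symm)
    rw [omegaFun, omegaFun, show Jay (rep f) = Jay (rep g) from funext fun T => Jay_congr hae T]
  · have hg : ¬ MemLinf volume g := fun hg => hf (memLinf_congr h.symm hg)
    rw [omega_zero_of_not hf, omega_zero_of_not hg]

lemma omega_add {f g : ℝ → ℝ} (hf : MemLinf volume f) (hg : MemLinf volume g) :
    omegaFun (f + g) = omegaFun f + omegaFun g := by
  have hfg : MemLinf volume (f + g) := MemLp.add hf hg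
  have hae : rep (f + g) =ᵐ[volume] fun x => rep f x + rep g x := by
    filter_upwards [rep_ae hfg, rep_ae hf, rep_ae hg] with x h1 h2 h3
    rw [h1, Pi.add_apply, h2, h3]
  have hJ : ∀ T, Jay (rep (f + g)) T = Jay (rep f) T + Jay (rep g) T := by
    intro T
    have h1 : Jay (rep (f + g)) T = ulim (fun x => Aop (rep f) T x + Aop (rep g) T x) := by
      rw [Jay]
      apply ulim_congr
      refine (eventually_UF (eventually_gt_atTop 0)).mono fun x hx => ?_
      rw [Aop_congr hae hx T,
        Aop_add (rep_meas f) (rep_meas g) (rep_bound f) (rep_bound g) T x]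
    rw [h1]
    exact ulim_eq (((tendsto_Jay (KK_nonneg f) (rep_bound f) T)).add
      (tendsto_Jay (KK_nonneg g) (rep_bound g) T))
  rw [omegaFun, show Jay (rep (f + g)) = fun T => Jay (rep f) T + Jay (rep g) T from funext hJ]
  exact ulim_eq ((tendsto_omega f).add (tendsto_omega g))

lemma omega_smul (c : ℝ) {f : ℝ → ℝ} (hf : MemLinf volume f) :
    omegaFun (c • f) = c * omegaFun f := by
  have hcf : MemLinf volume (c • f) := MemLp.const_smul hf c
  have hae : rep (c • f) =ᵐ[volume] fun x => c * rep f x := by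
    filter_upwards [rep_ae hcf, rep_ae hf] with x h1 h2
    rw [h1, Pi.smul_apply, smul_eq_mul, h2]
  have hJ : ∀ T, Jay (rep (c • f)) T = c * Jay (rep f) T := by
    intro T
    have h1 : Jay (rep (c • f)) T = ulim (fun x => c * Aop (rep f) T x) := by
      rw [Jay]
      apply ulim_congr
      refine (eventually_UF (eventually_gt_atTop 0)).mono fun x hx => ?_
      rw [Aop_congr hae hx T, Aop_smul c (rep f) T x]
    rw [h1]
    exact ulim_eq ((tendsto_Jay (KK_nonneg f) (rep_bound f) T).const_mul c)
  rw [omegaFun, show Jay (rep (c • f)) = fun T => c * Jay (rep f) T from funext hJ]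
  exact ulim_eq ((tendsto_omega f).const_mul c)

lemma claim_le {f : ℝ → ℝ} (hf : MemLinf volume f) {a : ℝ}
    (h : ∀ᶠ x in (ae (volume : Measure ℝ) ⊓ atTop), f x ≤ a) : omegaFun f ≤ a := by
  obtain ⟨s, hs, t, ht, hst⟩ := eventually_inf.mp h
  obtain ⟨R, hR⟩ := mem_atTop_sets.mp ht
  have hs' : ∀ᵐ u ∂(volume : Measure ℝ), u ∈ s := hs
  have hM : ∀ᵐ u ∂(volume : Measure ℝ), u ∈ Ioi (max R 0) → rep f u ≤ a := by
    filter_upwards [rep_ae hf, hs'] with u hrep hu hmem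
    have hut : u ∈ t := hR u (le_of_lt (lt_of_le_of_lt (le_max_left R 0) hmem))
    rw [hrep]
    exact hst u ⟨hu, hut⟩
  have hA := Aop_le (rep_meas f) (rep_bound f) (le_max_right R 0) hM
  have hJ : ∀ T, 0 < T → Jay (rep f) T ≤ a := by
    intro T hT
    refine le_of_tendsto (tendsto_Jay (KK_nonneg f) (rep_bound f) T) ?_
    exact (eventually_UF (eventually_gt_atTop (max R 0))).mono fun x hx => hA T hT x hx
  refine le_of_tendsto (tendsto_omega f) ?_
  exact (eventually_UF (eventually_gt_atTop 0)).mono fun T hT => hJ T hT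

lemma claim_ge {f : ℝ → ℝ} (hf : MemLinf volume f) {a : ℝ}
    (h : ∀ᶠ x in (ae (volume : Measure ℝ) ⊓ atTop), a ≤ f x) : a ≤ omegaFun f := by
  obtain ⟨s, hs, t, ht, hst⟩ := eventually_inf.mp h
  obtain ⟨R, hR⟩ := mem_atTop_sets.mp ht
  have hs' : ∀ᵐ u ∂(volume : Measure ℝ), u ∈ s := hs
  have hM : ∀ᵐ u ∂(volume : Measure ℝ), u ∈ Ioi (max R 0) → a ≤ rep f u := by
    filter_upwards [rep_ae hf, hs'] with u hrep hu hmem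
    have hut : u ∈ t := hR u (le_of_lt (lt_of_le_of_lt (le_max_left R 0) hmem))
    rw [hrep]
    exact hst u ⟨hu, hut⟩
  have hA := Aop_ge (rep_meas f) (rep_bound f) (le_max_right R 0) hM
  have hJ : ∀ T, 0 < T → a ≤ Jay (rep f) T := by
    intro T hT
    refine ge_of_tendsto (tendsto_Jay (KK_nonneg f) (rep_bound f) T) ?_
    exact (eventually_UF (eventually_gt_atTop (max R 0))).mono fun x hx => hA T hT x hx
  refine ge_of_tendsto (tendsto_omega f) ?_
  exact (eventually_UF (eventually_gt_atTop 0)).mono fun T hT => hJ T hT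

lemma omega_le_limsup {f : ℝ → ℝ} (hf : MemLinf volume f) :
    omegaFun f ≤ limsup f (ae (volume : Measure ℝ) ⊓ atTop) := by
  rw [limsup_eq]
  apply le_csInf
  · refine ⟨KK f, ?_⟩
    have : ∀ᶠ x in ae (volume : Measure ℝ), f x ≤ KK f :=
      (ae_abs_le f hf).mono fun x hx => (abs_le.mp hx).2
    exact this.filter_mono inf_le_left
  · intro b hb
    exact claim_le hf hb

lemma liminf_le_omega {f : ℝ → ℝ} (hf : MemLinf volume f) :
    liminf f (ae (volume : Measure ℝ) ⊓ atTop) ≤ omegaFun f := by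
  rw [liminf_eq]
  apply csSup_le
  · refine ⟨-KK f, ?_⟩
    have : ∀ᶠ x in ae (volume : Measure ℝ), -KK f ≤ f x :=
      (ae_abs_le f hf).mono fun x hx => (abs_le.mp hx).1
    exact this.filter_mono inf_le_left
  · intro b hb
    exact claim_ge hf hb

lemma omega_one : omegaFun 1 = 1 := by
  have h1 : MemLinf volume 1 :=
    memLinf_of_bound aestronglyMeasurable_const 1 (ae_of_all _ fun x => by simp)
  have hle : omegaFun 1 ≤ 1 :=
    claim_le h1 (Eventually.of_forall fun x => le_refl 1)
  have hge : (1:ℝ) ≤ omegaFun 1 :=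
    claim_ge h1 (Eventually.of_forall fun x => le_refl 1)
  linarith

lemma omega_nonneg {f : ℝ → ℝ} (hf : MemLinf volume f)
    (h : 0 ≤ᵐ[(volume : Measure ℝ)] f) : 0 ≤ omegaFun f := by
  refine claim_ge hf ?_
  exact (h.mono fun x hx => hx).filter_mono inf_le_left

instance aeInfAtTop_neBot : NeBot ((ae (volume : Measure ℝ)) ⊓ atTop) := by
  rw [inf_neBot_iff]
  intro s hs t ht
  obtain ⟨R, hR⟩ := mem_atTop_sets.mp ht
  by_contra hemp
  rw [not_nonempty_iff_eq_empty] at hemp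
  have hsub : Ici R ⊆ sᶜ := by
    intro x hx
    intro hxs
    have : x ∈ s ∩ t := ⟨hxs, hR x hx⟩
    rw [hemp] at this
    exact this
  have h0 : volume (Ici R) = 0 :=
    le_antisymm (le_trans (measure_mono hsub) (le_of_eq (mem_ae_iff.mp hs))) zero_le
  rw [Real.volume_Ici] at h0
  exact ENNReal.top_ne_zero h0
lemma ae_comp_mul_left {a : ℝ} (ha : a ≠ 0) {g h : ℝ → ℝ} (he : g =ᵐ[volume] h) :
    (fun t => g (a * t)) =ᵐ[volume] fun t => h (a * t) := by
  have h0 : volume {x | g x ≠ h x} = 0 := he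
  show volume {t : ℝ | ¬ g (a * t) = h (a * t)} = 0
  rw [show {t : ℝ | ¬ g (a * t) = h (a * t)} = (a * ·) ⁻¹' {x | g x ≠ h x} from rfl,
    Real.volume_preimage_mul_left ha, h0, mul_zero]

lemma Ioc_vol_lt_top (c d : ℝ) : volume (Ioc c d) < ⊤ := by
  rw [Real.volume_Ioc]; exact ENNReal.ofReal_lt_top

/-- key translation estimate at the `Bop` level -/
lemma Bop_translate_est {f : ℝ → ℝ} (hm : Measurable f) {K : ℝ} (hK : 0 ≤ K)
    (hb : ∀ x, |f x| ≤ K) (c : ℝ) {y : ℝ} (hy : 0 < y) :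
    |Bop (fun u => f (u + c)) y - Bop f y| ≤ 2 * K * |c| / y := by
  have hmg : Measurable (fun t => f (t * y)) := hm.comp (measurable_id.mul_const y)
  have hbg : ∀ t, |f (t * y)| ≤ K := fun t => hb _
  have h1 : Bop (fun u => f (u + c)) y = ∫ t in Ioc (1 + c / y) (2 + c / y), f (t * y) := by
    rw [Bop]
    have he : ∀ t : ℝ, f (t * y + c) = f ((t + c / y) * y) := by
      intro t
      congr 1
      field_simp
    rw [show (fun t => f (t * y + c)) = fun t => f ((t + c / y) * y) from funext he]
    exact setIntegral_shift (fun t => f (t * y)) (c / y) one_le_two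
  have h2 := shift_bound hmg hK hbg 1 (c / y) 1 zero_le_one
  rw [show (1:ℝ) + c / y + 1 = 2 + c / y by ring, show (1:ℝ) + 1 = 2 by norm_num] at h2
  rw [h1, Bop]
  calc |(∫ t in Ioc (1 + c / y) (2 + c / y), f (t * y)) - ∫ t in Ioc (1:ℝ) 2, f (t * y)|
      ≤ 2 * K * |c / y| := h2
    _ = 2 * K * |c| / y := by rw [abs_div, abs_of_pos hy]; ring

/-- key translation estimate at the `Aop` level -/
lemma Aop_translate_est {f : ℝ → ℝ} (hm : Measurable f) {K : ℝ} (hK : 0 ≤ K)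
    (hb : ∀ x, |f x| ≤ K) (c : ℝ) {T x : ℝ} (hT : 0 < T) (hx : 0 < x) :
    |Aop (fun u => f (u + c)) T x - Aop f T x| ≤ 2 * K * |c| / x := by
  have hmc : Measurable (fun u => f (u + c)) := hm.comp (measurable_add_const c)
  have hbc : ∀ u, |f (u + c)| ≤ K := fun u => hb _
  have hint1 := integrableOn_Bop_exp hmc hbc x (Ioc_vol_lt_top 0 T)
  have hint2 := integrableOn_Bop_exp hm hb x (Ioc_vol_lt_top 0 T)
  have hsub : Aop (fun u => f (u + c)) T x - Aop f T x
      = T⁻¹ * ∫ s in Ioc (0:ℝ) T,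
          (Bop (fun u => f (u + c)) (Real.exp s * x) - Bop f (Real.exp s * x)) := by
    rw [Aop, Aop, ← mul_sub, ← integral_sub hint1 hint2]
  have hptbd : ∀ s ∈ Ioc (0:ℝ) T,
      |Bop (fun u => f (u + c)) (Real.exp s * x) - Bop f (Real.exp s * x)|
        ≤ 2 * K * |c| / x := by
    intro s hs
    have hex : (0:ℝ) < Real.exp s * x := mul_pos (Real.exp_pos s) hx
    have h1 := Bop_translate_est hm hK hb c hex
    have hxe : x ≤ Real.exp s * x := by
      have := Real.one_le_exp hs.1.le
      nlinarith
    calc |Bop (fun u => f (u + c)) (Real.exp s * x) - Bop f (Real.exp s * x)|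
        ≤ 2 * K * |c| / (Real.exp s * x) := h1
      _ ≤ 2 * K * |c| / x := by
          apply div_le_div_of_nonneg_left _ hx hxe
          positivity
  have hnorm := norm_setIntegral_le_of_norm_le_const' (μ := volume) (s := Ioc (0:ℝ) T)
    (f := fun s => Bop (fun u => f (u + c)) (Real.exp s * x) - Bop f (Real.exp s * x))
    (C := 2 * K * |c| / x) (Ioc_vol_lt_top 0 T) measurableSet_Ioc
    (fun s hs => by rw [Real.norm_eq_abs]; exact hptbd s hs)
  rw [Real.norm_eq_abs, Real.volume_Ioc, ENNReal.toReal_ofReal (by linarith)] at hnorm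
  rw [hsub, abs_mul, abs_inv, abs_of_pos hT]
  calc T⁻¹ * |∫ s in Ioc (0:ℝ) T,
        (Bop (fun u => f (u + c)) (Real.exp s * x) - Bop f (Real.exp s * x))|
      ≤ T⁻¹ * (2 * K * |c| / x * (T - 0)) := mul_le_mul_of_nonneg_left hnorm (by positivity)
    _ = 2 * K * |c| / x := by field_simp; ring

lemma omega_translate (c : ℝ) {f : ℝ → ℝ} (hf : MemLinf volume f) :
    omegaFun (fun x => f (x + c)) = omegaFun f := by
  set K := KK f with hKdef
  have hK : 0 ≤ K := KK_nonneg f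
  have hTc_ae : (fun x => f (x + c)) =ᵐ[volume] fun x => rep f (x + c) :=
    ae_comp_add (Filter.EventuallyEq.symm (rep_ae hf))
  have hTmem : MemLinf volume (fun x => f (x + c)) := by
    refine memLinf_of_bound ?_ K ?_
    · exact (((rep_meas f).comp (measurable_add_const c)).aestronglyMeasurable).congr
        hTc_ae.symm
    · filter_upwards [hTc_ae] with x hx
      rw [hx]; exact rep_bound f _
  have hrepT : rep (fun x => f (x + c)) =ᵐ[volume] fun x => rep f (x + c) :=
    (rep_ae hTmem).trans hTc_ae
  have hbT : ∀ u, |rep f (u + c)| ≤ K := fun u => rep_bound f _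
  -- inner limits agree for every T > 0
  have hJ : ∀ T, 0 < T → Jay (rep (fun x => f (x + c))) T = Jay (rep f) T := by
    intro T hT
    rw [Jay_congr hrepT T]
    refine ulim_eq_ulim (tendsto_Jay hK hbT T) (tendsto_Jay hK (rep_bound f) T) ?_
    intro ε hε
    refine (eventually_UF (eventually_gt_atTop (max (2 * K * |c| / ε) 0))).mono fun x hx => ?_
    have hx0 : 0 < x := lt_of_le_of_lt (le_max_right _ _) hx
    have hx1 : 2 * K * |c| / ε < x := lt_of_le_of_lt (le_max_left _ _) hx
    have hest := Aop_translate_est (rep_meas f) hK (rep_bound f) c hT hx0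
    have hfinal : 2 * K * |c| / x ≤ ε := by
      rw [div_le_iff₀ hx0]
      have := (div_lt_iff₀ hε).mp hx1
      linarith
    exact le_trans hest hfinal
  refine ulim_eq_ulim (tendsto_omega _) (tendsto_omega f) ?_
  intro ε hε
  refine (eventually_UF (eventually_gt_atTop 0)).mono fun T hT => ?_
  rw [hJ T hT, sub_self, abs_zero]
  exact hε.le

lemma omega_dilate {a : ℝ} (ha : 0 < a) {f : ℝ → ℝ} (hf : MemLinf volume f) :
    omegaFun (fun x => f (a * x)) = omegaFun f := by
  set K := KK f with hKdef
  have hK : 0 ≤ K := KK_nonneg f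
  have hDa_ae : (fun x => f (a * x)) =ᵐ[volume] fun x => rep f (a * x) :=
    ae_comp_mul_left ha.ne' (Filter.EventuallyEq.symm (rep_ae hf))
  have hDmem : MemLinf volume (fun x => f (a * x)) := by
    refine memLinf_of_bound ?_ K ?_
    · exact (((rep_meas f).comp (measurable_const_mul a)).aestronglyMeasurable).congr
        hDa_ae.symm
    · filter_upwards [hDa_ae] with x hx
      rw [hx]; exact rep_bound f _
  have hrepD : rep (fun x => f (a * x)) =ᵐ[volume] fun x => rep f (a * x) :=
    (rep_ae hDmem).trans hDa_ae
  have hbD : ∀ u, |rep f (a * u)| ≤ K := fun u => rep_bound f _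
  -- the key estimate, uniform in x
  have hest : ∀ T, 0 < T → ∀ x : ℝ,
      |Aop (fun u => rep f (a * u)) T x - Aop (rep f) T x| ≤ 2 * K * |Real.log a| / T := by
    intro T hT x
    have hBD : ∀ y : ℝ, Bop (fun u => rep f (a * u)) y = Bop (rep f) (a * y) := by
      intro y
      rw [Bop, Bop]
      apply setIntegral_congr_fun measurableSet_Ioc
      intro t _
      congr 1
      ring
    have hg : ∀ s : ℝ, Bop (rep f) (a * (Real.exp s * x))
        = Bop (rep f) (Real.exp (s + Real.log a) * x) := by
      intro s
      congr 1
      rw [Real.exp_add, Real.exp_log ha]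
      ring
    have hmg : Measurable fun s => Bop (rep f) (Real.exp s * x) :=
      Bop_meas_exp (rep_meas f) x
    have hbg : ∀ s, |Bop (rep f) (Real.exp s * x)| ≤ K := fun s => Bop_bound (rep_bound f) _
    have hA1 : Aop (fun u => rep f (a * u)) T x
        = T⁻¹ * ∫ s in Ioc (0 + Real.log a) (T + Real.log a), Bop (rep f) (Real.exp s * x) := by
      rw [Aop]
      congr 1
      rw [show (fun s => Bop (fun u => rep f (a * u)) (Real.exp s * x))
          = fun s => Bop (rep f) (Real.exp (s + Real.log a) * x) from
          funext fun s => by rw [hBD, hg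
          ]]
      rw [setIntegral_shift (fun s => Bop (rep f) (Real.exp s * x)) (Real.log a) hT.le]
    have h2 := shift_bound hmg hK hbg 0 (Real.log a) T hT.le
    simp only [zero_add] at h2
    rw [add_comm (Real.log a) T] at h2
    rw [hA1, Aop, ← mul_sub, abs_mul, abs_inv, abs_of_pos hT]
    simp only [zero_add]
    calc T⁻¹ * |(∫ s in Ioc (Real.log a) (T + Real.log a), Bop (rep f) (Real.exp s * x))
          - ∫ s in Ioc (0:ℝ) T, Bop (rep f) (Real.exp s * x)|
        ≤ T⁻¹ * (2 * K * |Real.log a|) := mul_le_mul_of_nonneg_left h2 (by positivity)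
      _ = 2 * K * |Real.log a| / T := by ring
  have hJ : ∀ T, 0 < T →
      |Jay (rep (fun x => f (a * x))) T - Jay (rep f) T| ≤ 2 * K * |Real.log a| / T := by
    intro T hT
    rw [Jay_congr hrepD T]
    exact ulim_dist_le (tendsto_Jay hK hbD T) (tendsto_Jay hK (rep_bound f) T)
      (Eventually.of_forall fun x => hest T hT x)
  refine ulim_eq_ulim (tendsto_omega _) (tendsto_omega f) ?_
  intro ε hε
  refine (eventually_UF (eventually_gt_atTop (max (2 * K * |Real.log a| / ε) 0))).mono
    fun T hT => ?_
  have hT0 : 0 < T := lt_of_le_of_lt (le_max_right _ _) hT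
  have hT1 : 2 * K * |Real.log a| / ε < T := lt_of_le_of_lt (le_max_left _ _) hT
  refine le_trans (hJ T hT0) ?_
  rw [div_le_iff₀ hT0]
  have := (div_lt_iff₀ hε).mp hT1
  linarith
lemma hardy_scale (h : ℝ → ℝ) {w : ℝ} (hw : 0 < w) :
    hardyMean h w = ∫ σ in Ioc (0:ℝ) 1, h (σ * w) := by
  simp only [hardyMean]
  rw [if_pos hw]
  exact (setIntegral_scale h hw).symm

lemma integrable_uncurry_of_bdd {F : ℝ → ℝ → ℝ}
    (hm : Measurable (fun p : ℝ × ℝ => F p.1 p.2)) {K : ℝ} (hb : ∀ p q, |F p q| ≤ K)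
    (μ ν : Measure ℝ) [IsFiniteMeasure μ] [IsFiniteMeasure ν] :
    Integrable (Function.uncurry F) (μ.prod ν) := by
  refine Integrable.mono' (g := fun _ => K) (integrable_const K)
    hm.aestronglyMeasurable ?_
  exact ae_of_all _ fun p => by rw [Real.norm_eq_abs]; exact hb p.1 p.2

lemma hardy_meas {f : ℝ → ℝ} (hm : Measurable f) : Measurable (hardyMean f) := by
  have hind : Measurable fun p : ℝ × ℝ => (Ioc (0:ℝ) p.1).indicator f p.2 := by
    have hset : MeasurableSet {p : ℝ × ℝ | p.2 ∈ Ioc (0:ℝ) p.1} := by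
      apply MeasurableSet.inter
      · exact measurableSet_lt measurable_const measurable_snd
      · exact measurableSet_le measurable_snd measurable_fst
    have : (fun p : ℝ × ℝ => (Ioc (0:ℝ) p.1).indicator f p.2)
        = fun p : ℝ × ℝ => if p.2 ∈ Ioc (0:ℝ) p.1 then f p.2 else 0 := by
      funext p
      rw [indicator_apply]
    rw [this]
    exact Measurable.ite hset (hm.comp measurable_snd) measurable_const
  have hI : Measurable fun u : ℝ => ∫ v, (Ioc (0:ℝ) u).indicator f v ∂volume :=
    (hind.stronglyMeasurable.integral_prod_right').measurable
  have heq : hardyMean f = fun u =>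
      if 0 < u then u⁻¹ * ∫ v, (Ioc (0:ℝ) u).indicator f v ∂volume else 0 := by
    funext u
    simp only [hardyMean]
    congr 1
    rw [integral_indicator measurableSet_Ioc]
  rw [heq]
  exact Measurable.ite measurableSet_Ioi (measurable_inv.mul hI) measurable_const

lemma hardy_bound {f : ℝ → ℝ} {K : ℝ} (hK : 0 ≤ K) (hb : ∀ x, |f x| ≤ K) :
    ∀ u, |hardyMean f u| ≤ K := by
  intro u
  simp only [hardyMean]
  split
  · rename_i hu
    have h := norm_setIntegral_le_of_norm_le_const' (μ := volume) (s := Ioc (0:ℝ) u)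
      (f := f) (C := K) (Ioc_vol_lt_top 0 u) measurableSet_Ioc
      (fun v _ => by rw [Real.norm_eq_abs]; exact hb v)
    rw [Real.norm_eq_abs, Real.volume_Ioc, ENNReal.toReal_ofReal (by linarith)] at h
    rw [abs_mul, abs_inv, abs_of_pos hu]
    calc u⁻¹ * |∫ v in Ioc (0:ℝ) u, f v| ≤ u⁻¹ * (K * (u - 0)) :=
          mul_le_mul_of_nonneg_left h (by positivity)
      _ = K := by field_simp; ring
  · simpa using hK

lemma omega_hardy {f : ℝ → ℝ} (hf : MemLinf volume f) :
    omegaFun (hardyMean f) = omegaFun f := by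
  set K := KK f with hKdef
  have hK : 0 ≤ K := KK_nonneg f
  set g := rep f with hgdef
  have hgm : Measurable g := rep_meas f
  have hgb : ∀ x, |g x| ≤ K := rep_bound f
  -- hardyMean f equals hardyMean g as functions
  have h0 : hardyMean f = hardyMean g := by
    funext u
    simp only [hardyMean]
    by_cases hu : 0 < u
    · rw [if_pos hu, if_pos hu]
      congr 1
      exact integral_congr_ae (ae_restrict_of_ae (Filter.EventuallyEq.symm (rep_ae hf)))
    · rw [if_neg hu, if_neg hu]
  have hHMm : Measurable (hardyMean g) := hardy_meas hgm
  have hHMb : ∀ u, |hardyMean g u| ≤ K := hardy_bound hK hgb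
  have hHmem : MemLinf volume (hardyMean f) := by
    rw [h0]
    exact memLinf_of_bound hHMm.aestronglyMeasurable K (ae_of_all _ hHMb)
  have hrepH : rep (hardyMean f) =ᵐ[volume] hardyMean g := by
    refine (rep_ae hHmem).trans ?_
    rw [h0]
  -- Step H1 : Bop of the Hardy mean
  have hH1 : ∀ y : ℝ, 0 < y → Bop (hardyMean g) y = ∫ σ in Ioc (0:ℝ) 1, Bop g (σ * y) := by
    intro y hy
    have e1 : Bop (hardyMean g) y
        = ∫ t in Ioc (1:ℝ) 2, ∫ σ in Ioc (0:ℝ) 1, g (σ * (t * y)) := by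
      rw [Bop]
      apply setIntegral_congr_fun measurableSet_Ioc
      intro t ht
      have hty : 0 < t * y := mul_pos (lt_trans one_pos ht.1) hy
      exact hardy_scale g hty
    have hFm : Measurable fun p : ℝ × ℝ => g (p.2 * (p.1 * y)) :=
      hgm.comp ((measurable_snd.mul (measurable_fst.mul_const y)))
    have hFint : Integrable (Function.uncurry fun t σ => g (σ * (t * y)))
        ((volume.restrict (Ioc (1:ℝ) 2)).prod (volume.restrict (Ioc (0:ℝ) 1))) :=
      integrable_uncurry_of_bdd hFm (fun p q => hgb _) _ _
    have e2 := MeasureTheory.integral_integral_swap hFint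
    rw [e1]
    rw [e2]
    apply setIntegral_congr_fun measurableSet_Ioc
    intro σ _
    show ∫ t in Ioc (1:ℝ) 2, g (σ * (t * y)) = Bop g (σ * y)
    rw [Bop]
    apply setIntegral_congr_fun measurableSet_Ioc
    intro t _
    congr 1
    ring
  -- main quantitative estimate
  have hEst : ∀ T, 0 < T → ∀ x, 0 < x → ∀ δ : ℝ, 0 < δ → δ ≤ 1 →
      |Aop (hardyMean g) T x - Aop g T x| ≤ 2 * K * δ + 2 * K * |Real.log δ| / T := by
    intro T hT x hx δ hδ0 hδ1
    set I : ℝ := ∫ s in Ioc (0:ℝ) T, Bop g (Real.exp s * x) with hIdef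
    set Inn : ℝ → ℝ := fun σ => ∫ s in Ioc (0:ℝ) T, Bop g (σ * (Real.exp s * x)) with hInndef
    have hmInn : Measurable Inn := by
      have : Measurable fun p : ℝ × ℝ => Bop g (p.2 * (Real.exp p.1 * x)) :=
        (Bop_meas hgm).comp (measurable_snd.mul ((Real.measurable_exp.comp measurable_fst).mul_const x))
      have hsw : Measurable fun p : ℝ × ℝ => Bop g (p.1 * (Real.exp p.2 * x)) :=
        (Bop_meas hgm).comp (measurable_fst.mul ((Real.measurable_exp.comp measurable_snd).mul_const x))
      exact (hsw.stronglyMeasurable.integral_prod_right').measurable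
    have hInnb : ∀ σ, |Inn σ| ≤ K * T := by
      intro σ
      have h := norm_setIntegral_le_of_norm_le_const' (μ := volume) (s := Ioc (0:ℝ) T)
        (f := fun s => Bop g (σ * (Real.exp s * x))) (C := K) (Ioc_vol_lt_top 0 T)
        measurableSet_Ioc (fun s _ => by rw [Real.norm_eq_abs]; exact Bop_bound hgb _)
      rw [Real.norm_eq_abs, Real.volume_Ioc, ENNReal.toReal_ofReal (by linarith)] at h
      calc |Inn σ| ≤ K * (T - 0) := h
        _ = K * T := by ring
    have hIb : |I| ≤ K * T := by
      have h := norm_setIntegral_le_of_norm_le_const' (μ := volume) (s := Ioc (0:ℝ) T)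
        (f := fun s => Bop g (Real.exp s * x)) (C := K) (Ioc_vol_lt_top 0 T)
        measurableSet_Ioc (fun s _ => by rw [Real.norm_eq_abs]; exact Bop_bound hgb _)
      rw [Real.norm_eq_abs, Real.volume_Ioc, ENNReal.toReal_ofReal (by linarith)] at h
      calc |I| ≤ K * (T - 0) := h
        _ = K * T := by ring
    -- sharp bound for σ ∈ Ioc 0 1
    have hInn_est : ∀ σ : ℝ, 0 < σ → σ ≤ 1 → |Inn σ - I| ≤ 2 * K * |Real.log σ| := by
      intro σ hσ0 hσ1
      have he : ∀ s : ℝ, Bop g (σ * (Real.exp s * x))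
          = Bop g (Real.exp (s + Real.log σ) * x) := by
        intro s
        congr 1
        rw [Real.exp_add, Real.exp_log hσ0]
        ring
      have hInnσ : Inn σ = ∫ s in Ioc (Real.log σ) (T + Real.log σ), Bop g (Real.exp s * x) := by
        rw [hInndef]
        simp only []
        rw [show (fun s => Bop g (σ * (Real.exp s * x)))
            = fun s => Bop g (Real.exp (s + Real.log σ) * x) from funext he]
        have := setIntegral_shift (fun s => Bop g (Real.exp s * x)) (Real.log σ) hT.le
        rw [this, zero_add]
      have h2 := shift_bound (Bop_meas_exp hgm x) hK (fun s => Bop_bound hgb _)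
        0 (Real.log σ) T hT.le
      simp only [zero_add] at h2
      rw [add_comm (Real.log σ) T] at h2
      rw [hInnσ, hIdef]
      exact h2
    -- express the difference as an integral over σ
    have hsplit : Aop (hardyMean g) T x - Aop g T x
        = T⁻¹ * ∫ σ in Ioc (0:ℝ) 1, (Inn σ - I) := by
      have hA1 : Aop (hardyMean g) T x = T⁻¹ * ∫ σ in Ioc (0:ℝ) 1, Inn σ := by
        rw [Aop]
        congr 1
        have e1 : ∀ s ∈ Ioc (0:ℝ) T, Bop (hardyMean g) (Real.exp s * x)
            = ∫ σ in Ioc (0:ℝ) 1, Bop g (σ * (Real.exp s * x)) := by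
          intro s _
          exact hH1 _ (mul_pos (Real.exp_pos s) hx)
        rw [setIntegral_congr_fun measurableSet_Ioc e1]
        have hGm : Measurable fun p : ℝ × ℝ => Bop g (p.2 * (Real.exp p.1 * x)) :=
          (Bop_meas hgm).comp (measurable_snd.mul ((Real.measurable_exp.comp measurable_fst).mul_const x))
        have hGint : Integrable (Function.uncurry fun s σ => Bop g (σ * (Real.exp s * x)))
            ((volume.restrict (Ioc (0:ℝ) T)).prod (volume.restrict (Ioc (0:ℝ) 1))) :=
          integrable_uncurry_of_bdd hGm (fun p q => Bop_bound hgb _) _ _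
        exact MeasureTheory.integral_integral_swap hGint
      have hIconst : ∫ σ in Ioc (0:ℝ) 1, I = I := by
        rw [setIntegral_const, measureReal_def, Real.volume_Ioc, ENNReal.toReal_ofReal (by norm_num),
          smul_eq_mul]
        norm_num
      have hints : IntegrableOn Inn (Ioc (0:ℝ) 1) volume :=
        integrableOn_bdd' hmInn hInnb (Ioc_vol_lt_top 0 1)
      rw [hA1, Aop, ← hIdef, ← mul_sub]
      congr 1
      rw [integral_sub hints ((integrableOn_const_iff).mpr (Or.inr (Ioc_vol_lt_top 0 1))), hIconst]
    -- split the σ-integral at δ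
    have hIoc_split : Ioc (0:ℝ) 1 = Ioc 0 δ ∪ Ioc δ 1 :=
      (Ioc_union_Ioc_eq_Ioc hδ0.le hδ1).symm
    have hdisj : Disjoint (Ioc (0:ℝ) δ) (Ioc δ 1) :=
      Set.Ioc_disjoint_Ioc.mpr (by rw [min_def, max_def]; split <;> split <;> linarith)
    have hintd : ∀ c d : ℝ, IntegrableOn (fun σ => Inn σ - I) (Ioc c d) volume :=
      fun c d => integrableOn_bdd' (hmInn.sub measurable_const)
        (fun σ => by
          calc |Inn σ - I| ≤ |Inn σ| + |I| := abs_sub _ _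
            _ ≤ K * T + K * T := add_le_add (hInnb σ) hIb
            _ = 2 * (K * T) := by ring)
        (Ioc_vol_lt_top c d)
    have hb1 : |∫ σ in Ioc (0:ℝ) δ, (Inn σ - I)| ≤ 2 * (K * T) * δ := by
      have h := norm_setIntegral_le_of_norm_le_const' (μ := volume) (s := Ioc (0:ℝ) δ)
        (f := fun σ => Inn σ - I) (C := 2 * (K * T)) (Ioc_vol_lt_top 0 δ) measurableSet_Ioc
        (fun σ _ => by
          rw [Real.norm_eq_abs]
          calc |Inn σ - I| ≤ |Inn σ| + |I| := abs_sub _ _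
            _ ≤ K * T + K * T := add_le_add (hInnb σ) hIb
            _ = 2 * (K * T) := by ring)
      rw [Real.norm_eq_abs, Real.volume_Ioc, ENNReal.toReal_ofReal (by linarith)] at h
      calc |∫ σ in Ioc (0:ℝ) δ, (Inn σ - I)| ≤ 2 * (K * T) * (δ - 0) := h
        _ = 2 * (K * T) * δ := by ring
    have hb2 : |∫ σ in Ioc δ 1, (Inn σ - I)| ≤ 2 * K * |Real.log δ| := by
      have hlog : ∀ σ ∈ Ioc δ 1, |Inn σ - I| ≤ 2 * K * |Real.log δ| := by
        intro σ hσ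
        have hσ0 : 0 < σ := lt_of_lt_of_le hδ0 hσ.1.le
        have h1 := hInn_est σ hσ0 hσ.2
        have hlogσ : |Real.log σ| ≤ |Real.log δ| := by
          have hσle : Real.log σ ≤ 0 := Real.log_nonpos hσ0.le hσ.2
          have hδle : Real.log δ ≤ 0 := Real.log_nonpos hδ0.le hδ1
          have : Real.log δ ≤ Real.log σ := Real.log_le_log hδ0 hσ.1.le
          rw [abs_of_nonpos hσle, abs_of_nonpos hδle]
          linarith
        calc |Inn σ - I| ≤ 2 * K * |Real.log σ| := h1
          _ ≤ 2 * K * |Real.log δ| := by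
              apply mul_le_mul_of_nonneg_left hlogσ (by positivity)
      have h := norm_setIntegral_le_of_norm_le_const' (μ := volume) (s := Ioc δ 1)
        (f := fun σ => Inn σ - I) (C := 2 * K * |Real.log δ|) (Ioc_vol_lt_top δ 1)
        measurableSet_Ioc
        (fun σ hσ => by rw [Real.norm_eq_abs]; exact hlog σ hσ)
      rw [Real.norm_eq_abs, Real.volume_Ioc, ENNReal.toReal_ofReal (by linarith)] at h
      calc |∫ σ in Ioc δ 1, (Inn σ - I)| ≤ 2 * K * |Real.log δ| * (1 - δ) := h
        _ ≤ 2 * K * |Real.log δ| * 1 := by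
            apply mul_le_mul_of_nonneg_left (by linarith) (by positivity)
        _ = 2 * K * |Real.log δ| := by ring
    rw [hsplit, hIoc_split,
      setIntegral_union hdisj measurableSet_Ioc (hintd 0 δ) (hintd δ 1)]
    rw [abs_mul, abs_inv, abs_of_pos hT]
    calc T⁻¹ * |(∫ σ in Ioc (0:ℝ) δ, (Inn σ - I)) + ∫ σ in Ioc δ 1, (Inn σ - I)|
        ≤ T⁻¹ * (2 * (K * T) * δ + 2 * K * |Real.log δ|) := by
          apply mul_le_mul_of_nonneg_left _ (by positivity)
          calc |(∫ σ in Ioc (0:ℝ) δ, (Inn σ - I)) + ∫ σ in Ioc δ 1, (Inn σ - I)|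
              ≤ |∫ σ in Ioc (0:ℝ) δ, (Inn σ - I)| + |∫ σ in Ioc δ 1, (Inn σ - I)| :=
                abs_add_le _ _
            _ ≤ 2 * (K * T) * δ + 2 * K * |Real.log δ| := add_le_add hb1 hb2
      _ = 2 * K * δ + 2 * K * |Real.log δ| / T := by field_simp
  -- inner-limit estimate
  have hJ : ∀ T, 0 < T → ∀ δ : ℝ, 0 < δ → δ ≤ 1 →
      |Jay (rep (hardyMean f)) T - Jay g T| ≤ 2 * K * δ + 2 * K * |Real.log δ| / T := by
    intro T hT δ hδ0 hδ1
    rw [Jay_congr hrepH T]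
    refine ulim_dist_le (tendsto_Jay hK hHMb T) (tendsto_Jay hK hgb T) ?_
    refine (eventually_UF (eventually_gt_atTop 0)).mono fun x hx => ?_
    exact hEst T hT x hx δ hδ0 hδ1
  -- outer limit
  refine ulim_eq_ulim (tendsto_omega _) (tendsto_omega f) ?_
  intro ε hε
  set δ : ℝ := min 1 (ε / (4 * K + 2)) with hδdef
  have hδ0 : 0 < δ := lt_min one_pos (by positivity)
  have hδ1 : δ ≤ 1 := min_le_left _ _
  have hδ2 : 2 * K * δ ≤ ε / 2 := by
    have h1 : δ ≤ ε / (4 * K + 2) := min_le_right _ _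
    have h2 : δ * (4 * K + 2) ≤ ε := by
      rw [← le_div_iff₀ (by positivity)]
      exact h1
    nlinarith
  refine (eventually_UF (eventually_gt_atTop (max 0 (4 * K * |Real.log δ| / ε)))).mono
    fun T hT => ?_
  have hT0 : 0 < T := lt_of_le_of_lt (le_max_left _ _) hT
  have hT1 : 4 * K * |Real.log δ| / ε < T := lt_of_le_of_lt (le_max_right _ _) hT
  have hT2 : 2 * K * |Real.log δ| / T ≤ ε / 2 := by
    rw [div_le_iff₀ hT0]
    have := (div_lt_iff₀ hε).mp hT1
    nlinarith
  calc |Jay (rep (hardyMean f)) T - Jay (rep f) T|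
      ≤ 2 * K * δ + 2 * K * |Real.log δ| / T := hJ T hT0 δ hδ0 hδ1
    _ ≤ ε / 2 + ε / 2 := add_le_add hδ2 hT2
    _ = ε := by ring
lemma omega_c0 {f : ℝ → ℝ}
    (hex : ∃ g : ZeroAtInftyContinuousMap ℝ ℝ, ∀ᵐ x ∂(volume : Measure ℝ), f x = g x) :
    omegaFun f = 0 := by
  obtain ⟨g, hg⟩ := hex
  obtain ⟨C, hC⟩ := ZeroAtInftyContinuousMap.bounded g
  set M : ℝ := C + |g 0| with hMdef
  have hgb : ∀ x, |g x| ≤ M := by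
    intro x
    have h1 : dist (g x) (g 0) ≤ C := hC x 0
    have h2 : |g x| - |g 0| ≤ |g x - g 0| := abs_sub_abs_le_abs_sub _ _
    rw [Real.dist_eq] at h1
    linarith
  have hfae : f =ᵐ[volume] fun x => g x := hg
  have hf : MemLinf volume f := by
    refine memLinf_of_bound ?_ M ?_
    · exact (map_continuous g).measurable.aestronglyMeasurable.congr hfae.symm
    · filter_upwards [hfae] with x hx
      rw [hx]; exact hgb x
  have hgt : Tendsto (fun x : ℝ => g x) atTop (𝓝 0) :=
    (zero_at_infty g).mono_left atTop_le_cocompact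
  have hft : Tendsto f ((ae (volume : Measure ℝ)) ⊓ atTop) (𝓝 0) := by
    refine Tendsto.congr' ?_ (hgt.mono_left inf_le_right)
    exact (hfae.filter_mono inf_le_left).symm
  have hlimsup : limsup f ((ae (volume : Measure ℝ)) ⊓ atTop) = 0 := hft.limsup_eq
  have hliminf : liminf f ((ae (volume : Measure ℝ)) ⊓ atTop) = 0 := hft.liminf_eq
  have h1 := omega_le_limsup hf
  have h2 := liminf_le_omega hf
  rw [hlimsup] at h1
  rw [hliminf] at h2
  linarith

lemma omega_compact {f : ℝ → ℝ}
    (hex : ∃ K : Set ℝ, IsCompact K ∧ ∀ᵐ x ∂(volume : Measure ℝ), x ∉ K → f x = 0) :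
    omegaFun f = 0 := by
  by_cases hf : MemLinf volume f
  · obtain ⟨Kc, hKc, hae⟩ := hex
    obtain ⟨r, hr⟩ := hKc.isBounded.subset_closedBall (0 : ℝ)
    have hev : ∀ᶠ x in ((ae (volume : Measure ℝ)) ⊓ atTop), f x = 0 := by
      rw [eventually_inf]
      refine ⟨{x | x ∉ Kc → f x = 0}, hae, Ioi r, Ioi_mem_atTop r, ?_⟩
      rintro x ⟨h1, h2⟩
      apply h1
      intro hxK
      have := hr hxK
      rw [Metric.mem_closedBall, Real.dist_eq, sub_zero] at this
      have : x ≤ r := le_trans (le_abs_self x) this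
      exact absurd h2 (by simpa using this)
    have h1 := claim_le hf (hev.mono fun x hx => le_of_eq hx)
    have h2 := claim_ge hf (hev.mono fun x hx => ge_of_eq hx)
    linarith
  · exact omega_zero_of_not hf
end OmegaAux

/-- There exists a state `ω̃` on `L^∞(ℝ)` which (1) vanishes on (classes of) functions in
`C₀(ℝ)`, (2) lies between the essential liminf and essential limsup at `+∞`,
(3) vanishes on functions with compact essential support, (4) is translation invariant,
(5) is dilation invariant, and (6) is invariant under the Hardy mean `H`. -/
theorem exists_state_on_Linf_real :
    ∃ ω : LinfState (volume : Measure ℝ),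
      (∀ f : ℝ → ℝ,
        (∃ g : ZeroAtInftyContinuousMap ℝ ℝ, ∀ᵐ x ∂(volume : Measure ℝ), f x = g x) →
          ω.toFun f = 0) ∧
      (∀ f : ℝ → ℝ, MemLinf volume f →
        Filter.liminf f ((ae (volume : Measure ℝ)) ⊓ atTop) ≤ ω.toFun f ∧
          ω.toFun f ≤ Filter.limsup f ((ae (volume : Measure ℝ)) ⊓ atTop)) ∧
      (∀ f : ℝ → ℝ,
        (∃ K : Set ℝ, IsCompact K ∧ ∀ᵐ x ∂(volume : Measure ℝ), x ∉ K → f x = 0) →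
          ω.toFun f = 0) ∧
      (∀ c : ℝ, ∀ f : ℝ → ℝ, MemLinf volume f →
        ω.toFun (fun x => f (x + c)) = ω.toFun f) ∧
      (∀ a : ℝ, 0 < a → ∀ f : ℝ → ℝ, MemLinf volume f →
        ω.toFun (fun x => f (a * x)) = ω.toFun f) ∧
      (∀ f : ℝ → ℝ, MemLinf volume f → ω.toFun (hardyMean f) = ω.toFun f) := by
  refine ⟨{ toFun := OmegaAux.omegaFun
            map_add := fun f g hf hg => OmegaAux.omega_add hf hg
            map_smul := fun c f hf => OmegaAux.omega_smul c hf
            congr_ae := fun f g h => OmegaAux.omega_congr h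
            nonneg := fun f hf h => OmegaAux.omega_nonneg hf h
            map_one := OmegaAux.omega_one }, ?_, ?_, ?_, ?_, ?_, ?_⟩
  · intro f hex
    exact OmegaAux.omega_c0 hex
  · intro f hf
    exact ⟨OmegaAux.liminf_le_omega hf, OmegaAux.omega_le_limsup hf⟩
  · intro f hex
    exact OmegaAux.omega_compact hex
  · intro c f hf
    exact OmegaAux.omega_translate c hf
  · intro a ha f hf
    exact OmegaAux.omega_dilate ha hf
  · intro f hf
    exact OmegaAux.omega_hardy hf
end
end

section
/- (Weak*-Karamata theorem.) Let ω̃ be a state on L^∞(ℝ) that is dilation invariant, i.e. ω̃(D_a f) = ω̃(f) for all a > 0 where D_a f(x) = f(ax). Let β : ℝ → ℝ be nondecreasing and right continuous with β(t) = 0 for all t ≤ 0, and let μ_β denote its Lebesgue–Stieltjes measure. Assume that h(r) := ∫_{[0,∞)} e^{−t/r} dμ_β(t) is finite for every r > 0, and that the function r ↦ h(r)/r (defined for r > 0 and extended by 0 for r ≤ 0) is bounded. Then the function t ↦ β(t)/t (for t > 0, extended by 0 for t ≤ 0) is bounded and ω̃(r ↦ h(r)/r) = ω̃(t ↦ β(t)/t).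 -/
open MeasureTheory Filter Set

noncomputable section

lemma memLinf_of_bound {μ : Measure ℝ} {f : ℝ → ℝ} (hf : Measurable f) {C : ℝ}
    (h : ∀ x, |f x| ≤ C) : MemLinf μ f :=
  memLp_top_of_bound hf.aestronglyMeasurable C
    (Eventually.of_forall (by simpa [Real.norm_eq_abs] using h))

lemma memLinf_const {μ : Measure ℝ} (c : ℝ) : MemLinf μ (fun _ => c) := memLp_top_const c

lemma MemLinf.add {μ : Measure ℝ} {f g : ℝ → ℝ} (hf : MemLinf μ f) (hg : MemLinf μ g) :
    MemLinf μ (f + g) := MemLp.add hf hg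

lemma MemLinf.smul {μ : Measure ℝ} {f : ℝ → ℝ} (hf : MemLinf μ f) (c : ℝ) :
    MemLinf μ (c • f) := MemLp.const_smul hf c

lemma LinfState.map_const {μ : Measure ℝ} (ω : LinfState μ) (c : ℝ) :
    ω.toFun (fun _ => c) = c := by
  have h1 : MemLinf μ (1 : ℝ → ℝ) := memLp_top_const 1
  have h := ω.map_smul c 1 h1
  have he : (c • (1 : ℝ → ℝ)) = fun _ => c := by
    funext x; simp
  rw [he, ω.map_one, mul_one] at h
  exact h

lemma LinfState.mono {μ : Measure ℝ} (ω : LinfState μ) {f g : ℝ → ℝ}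
    (hf : MemLinf μ f) (hg : MemLinf μ g) (h : ∀ x, f x ≤ g x) :
    ω.toFun f ≤ ω.toFun g := by
  have hgf : MemLinf μ (g + (-1 : ℝ) • f) := hg.add (hf.smul _)
  have h0 : 0 ≤ ω.toFun (g + (-1 : ℝ) • f) := by
    refine ω.nonneg _ hgf (Eventually.of_forall fun x => ?_)
    have := h x
    simp only [Pi.add_apply, Pi.smul_apply, smul_eq_mul, Pi.zero_apply]
    linarith
  rw [ω.map_add _ _ hg (hf.smul _), ω.map_smul _ _ hf] at h0
  linarith

lemma memLinf_sum {μ : Measure ℝ} {ι : Type*} (s : Finset ι) (g : ι → ℝ → ℝ)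
    (h : ∀ i ∈ s, MemLinf μ (g i)) :
    MemLinf μ (fun x => ∑ i ∈ s, g i x) := by
  classical
  induction s using Finset.induction with
  | empty => simpa using memLinf_const (μ := μ) 0
  | @insert a s ha ih =>
      have he : (fun x => ∑ i ∈ insert a s, g i x)
          = g a + fun x => ∑ i ∈ s, g i x := by
        funext x; simp [Finset.sum_insert ha]
      rw [he]
      exact (h a (Finset.mem_insert_self a s)).add
        (ih fun i hi => h i (Finset.mem_insert_of_mem hi))

lemma LinfState.map_sum {μ : Measure ℝ} (ω : LinfState μ) {ι : Type*} (s : Finset ι)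
    (g : ι → ℝ → ℝ) (h : ∀ i ∈ s, MemLinf μ (g i)) :
    ω.toFun (fun x => ∑ i ∈ s, g i x) = ∑ i ∈ s, ω.toFun (g i) := by
  classical
  induction s using Finset.induction with
  | empty => simpa using ω.map_const 0
  | @insert a s ha ih =>
      have he : (fun x => ∑ i ∈ insert a s, g i x)
          = g a + fun x => ∑ i ∈ s, g i x := by
        funext x; simp [Finset.sum_insert ha]
      rw [he, ω.map_add _ _ (h a (Finset.mem_insert_self a s))
        (memLinf_sum s g fun i hi => h i (Finset.mem_insert_of_mem hi)),
        ih fun i hi => h i (Finset.mem_insert_of_mem hi), Finset.sum_insert ha]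


variable (β : StieltjesFunction ℝ)

lemma beta_nonneg (hβ0 : ∀ t : ℝ, t ≤ 0 → β t = 0) (t : ℝ) : 0 ≤ β t := by
  rcases le_or_gt t 0 with h | h
  · exact (hβ0 t h).ge
  · have := β.mono h.le
    rw [hβ0 0 le_rfl] at this; exact this

lemma G_nonneg (r : ℝ) : 0 ≤ ∫ t in Ici (0:ℝ), Real.exp (-t/r) ∂β.measure :=
  setIntegral_nonneg measurableSet_Ici fun t _ => (Real.exp_pos _).le

lemma measure_singleton_zero (hβ0 : ∀ t : ℝ, t ≤ 0 → β t = 0) : β.measure {0} = 0 := by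
  rw [β.measure_singleton]
  have h1 : Function.leftLim (β : ℝ → ℝ) 0 ≤ 0 := by
    have := β.mono.leftLim_le (le_refl (0:ℝ))
    rwa [hβ0 0 le_rfl] at this
  have h2 : (0:ℝ) ≤ Function.leftLim (β : ℝ → ℝ) 0 := by
    have := β.mono.le_leftLim (show (-1:ℝ) < 0 by norm_num)
    rwa [hβ0 (-1) (by norm_num)] at this
  rw [hβ0 0 le_rfl, le_antisymm h1 h2]
  simp

lemma integral_Ici_eq_Ioi (hβ0 : ∀ t : ℝ, t ≤ 0 → β t = 0) (f : ℝ → ℝ) :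
    ∫ t in Ici (0:ℝ), f t ∂β.measure = ∫ t in Ioi (0:ℝ), f t ∂β.measure := by
  apply setIntegral_congr_set
  rw [MeasureTheory.ae_eq_set]
  constructor
  · rw [Set.Ici_sdiff_Ioi, Set.Icc_self]; exact measure_singleton_zero β hβ0
  · rw [Set.diff_eq_empty.2 Set.Ioi_subset_Ici_self]; simp

lemma measure_Ioc_toReal (a b : ℝ) (hab : a ≤ b) :
    (β.measure (Ioc a b)).toReal = β b - β a := by
  rw [β.measure_Ioc, ENNReal.toReal_ofReal (by linarith [β.mono hab])]

lemma integrableOn_sub (r : ℝ) (hr : 0 < r)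
    (hInt : IntegrableOn (fun t => Real.exp (-t / r)) (Set.Ici (0 : ℝ)) β.measure)
    {s : Set ℝ} (hs : s ⊆ Ici 0) :
    IntegrableOn (fun t => Real.exp (-t / r)) s β.measure :=
  hInt.mono_set hs

-- per-interval bounds
lemma interval_bounds (r : ℝ) (hr : 0 < r)
    (hInt : IntegrableOn (fun t => Real.exp (-t / r)) (Set.Ici (0 : ℝ)) β.measure)
    {a b c d : ℝ} (ha : 0 ≤ a) (hab : a ≤ b)
    (hc : Real.exp c = Real.exp (-(b/r)))   -- lower constant
    (hd : Real.exp d = Real.exp (-(a/r))) :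
    Real.exp c * (β b - β a) ≤ (∫ t in Ioc a b, Real.exp (-t/r) ∂β.measure) ∧
    (∫ t in Ioc a b, Real.exp (-t/r) ∂β.measure) ≤ Real.exp d * (β b - β a) := by
  have hIab : IntegrableOn (fun t => Real.exp (-t / r)) (Ioc a b) β.measure :=
    hInt.mono_set (fun t ht => le_trans ha ht.1.le)
  constructor
  · have h1 : (∫ t in Ioc a b, Real.exp c ∂β.measure) ≤
        ∫ t in Ioc a b, Real.exp (-t/r) ∂β.measure := by
      apply setIntegral_mono_on (integrableOn_const (by
        rw [β.measure_Ioc]; exact ENNReal.ofReal_ne_top)) hIab measurableSet_Ioc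
      intro t ht
      rw [hc]
      apply Real.exp_le_exp.2
      rw [neg_div]
      exact neg_le_neg (div_le_div_of_nonneg_right ht.2 hr.le) -- t ≤ b → t/r ≤ b/r ?
    calc Real.exp c * (β b - β a) = ∫ t in Ioc a b, Real.exp c ∂β.measure := by
          rw [setIntegral_const, measureReal_def, measure_Ioc_toReal β a b hab, smul_eq_mul, mul_comm]
      _ ≤ _ := h1
  · have h1 : (∫ t in Ioc a b, Real.exp (-t/r) ∂β.measure) ≤
        ∫ t in Ioc a b, Real.exp d ∂β.measure := by
      apply setIntegral_mono_on hIab (integrableOn_const (by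
        rw [β.measure_Ioc]; exact ENNReal.ofReal_ne_top)) measurableSet_Ioc
      intro t ht
      rw [hd]
      apply Real.exp_le_exp.2
      rw [neg_div]
      exact neg_le_neg (div_le_div_of_nonneg_right ht.1.le hr.le)
    calc (∫ t in Ioc a b, Real.exp (-t/r) ∂β.measure)
        ≤ ∫ t in Ioc a b, Real.exp d ∂β.measure := h1
      _ = Real.exp d * (β b - β a) := by
          rw [setIntegral_const, measureReal_def, measure_Ioc_toReal β a b hab, smul_eq_mul, mul_comm]

lemma partition_sum (r : ℝ) (hr : 0 < r) (n : ℕ) (hn : 1 ≤ n)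
    (hInt : IntegrableOn (fun t => Real.exp (-t / r)) (Set.Ici (0 : ℝ)) β.measure) :
    ∫ t in Ioc (0:ℝ) ((n:ℝ)*r), Real.exp (-t/r) ∂β.measure
      = ∑ k ∈ Finset.range (n^2),
          ∫ t in Ioc ((k:ℝ)/n*r) (((k:ℝ)+1)/n*r), Real.exp (-t/r) ∂β.measure := by
  have hn0 : (0:ℝ) < n := by exact_mod_cast hn
  set p : ℕ → ℝ := fun k => (k:ℝ)/n*r with hp
  have hpmono : ∀ k : ℕ, p k ≤ p (k+1) := by
    intro k
    apply mul_le_mul_of_nonneg_right _ hr.le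
    apply div_le_div_of_nonneg_right _ hn0.le
    push_cast; linarith
  have hppos : ∀ k : ℕ, 0 ≤ p k := by
    intro k; positivity
  have hii : ∀ k : ℕ, k < n^2 → IntervalIntegrable (fun t => Real.exp (-t/r)) β.measure (p k) (p (k+1)) := by
    intro k _
    rw [intervalIntegrable_iff_integrableOn_Ioc_of_le (hpmono k)]
    exact hInt.mono_set (fun t ht => le_trans (hppos k) ht.1.le)
  have := intervalIntegral.sum_integral_adjacent_intervals (μ := β.measure) (a := p) (n := n^2) hii
  have hp0 : p 0 = 0 := by simp [hp]
  have hpn : p (n^2) = (n:ℝ)*r := by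
    simp only [hp]
    push_cast
    field_simp
  rw [hp0, hpn] at this
  rw [intervalIntegral.integral_of_le (by positivity)] at this
  rw [← this]
  apply Finset.sum_congr rfl
  intro k _
  rw [intervalIntegral.integral_of_le (hpmono k),
    show p (k+1) = ((k:ℝ)+1)/n*r from by simp only [hp]; push_cast; ring,
    show p k = (k:ℝ)/n*r from rfl]

lemma tail_bound (r : ℝ) (hr : 0 < r) (n : ℕ) (hn : 1 ≤ n)
    (hInt : ∀ r : ℝ, 0 < r →
      IntegrableOn (fun t => Real.exp (-t / r)) (Set.Ici (0 : ℝ)) β.measure) :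
    ∫ t in Ioi ((n:ℝ)*r), Real.exp (-t/r) ∂β.measure
      ≤ Real.exp (-(n:ℝ)/2) * ∫ t in Ici (0:ℝ), Real.exp (-t/(2*r)) ∂β.measure := by
  have hn0 : (0:ℝ) < n := by exact_mod_cast hn
  have h2r : (0:ℝ) < 2*r := by linarith
  have hsub : Ioi ((n:ℝ)*r) ⊆ Ici (0:ℝ) := fun t ht => le_of_lt (lt_of_le_of_lt (by positivity : (0:ℝ) ≤ (n:ℝ)*r) ht)
  have hI1 : IntegrableOn (fun t => Real.exp (-t/r)) (Ioi ((n:ℝ)*r)) β.measure :=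
    (hInt r hr).mono_set hsub
  have hI2 : IntegrableOn (fun t => Real.exp (-(n:ℝ)/2) * Real.exp (-t/(2*r)))
      (Ioi ((n:ℝ)*r)) β.measure :=
    ((hInt (2*r) h2r).mono_set hsub).const_mul _
  have step1 : ∫ t in Ioi ((n:ℝ)*r), Real.exp (-t/r) ∂β.measure
      ≤ ∫ t in Ioi ((n:ℝ)*r), Real.exp (-(n:ℝ)/2) * Real.exp (-t/(2*r)) ∂β.measure := by
    apply setIntegral_mono_on hI1 hI2 measurableSet_Ioi
    intro t ht
    have h1 : Real.exp (-t/r) = Real.exp (-t/(2*r)) * Real.exp (-t/(2*r)) := by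
      rw [← Real.exp_add]
      congr 1
      field_simp
      ring
    rw [h1]
    apply mul_le_mul_of_nonneg_right _ (Real.exp_pos _).le
    apply Real.exp_le_exp.2
    rw [div_le_div_iff₀ h2r (by norm_num : (0:ℝ) < 2)] at *
    nlinarith [mem_Ioi.1 ht]
  have step2 : ∫ t in Ioi ((n:ℝ)*r), Real.exp (-(n:ℝ)/2) * Real.exp (-t/(2*r)) ∂β.measure
      ≤ Real.exp (-(n:ℝ)/2) * ∫ t in Ici (0:ℝ), Real.exp (-t/(2*r)) ∂β.measure := by
    rw [integral_const_mul]
    apply mul_le_mul_of_nonneg_left _ (Real.exp_pos _).le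
    apply setIntegral_mono_set (hInt (2*r) h2r)
      (Eventually.of_forall fun t => (Real.exp_pos _).le)
      (HasSubset.Subset.eventuallyLE hsub)
  linarith

lemma main_est (hβ0 : ∀ t : ℝ, t ≤ 0 → β t = 0)
    (hInt : ∀ r : ℝ, 0 < r →
      IntegrableOn (fun t => Real.exp (-t / r)) (Set.Ici (0 : ℝ)) β.measure)
    {r : ℝ} (hr : 0 < r) (n : ℕ) (hn : 1 ≤ n) :
    (∑ k ∈ Finset.range (n^2),
        (Real.exp (-((k:ℝ)/n)) - Real.exp (-(((k:ℝ)+1)/n))) * β ((k:ℝ)/n * r))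
      ≤ (∫ t in Ici (0:ℝ), Real.exp (-t/r) ∂β.measure) ∧
    (∫ t in Ici (0:ℝ), Real.exp (-t/r) ∂β.measure)
      ≤ Real.exp (-(n:ℝ)) * β ((n:ℝ) * r)
        + (∑ k ∈ Finset.range (n^2),
            (Real.exp (-((k:ℝ)/n)) - Real.exp (-(((k:ℝ)+1)/n))) * β (((k:ℝ)+1)/n * r))
        + Real.exp (-(n:ℝ)/2) * (∫ t in Ici (0:ℝ), Real.exp (-t/(2*r)) ∂β.measure) := by
  have hn0 : (0:ℝ) < n := by exact_mod_cast hn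
  set E : ℕ → ℝ := fun k => Real.exp (-((k:ℝ)/n)) with hE
  set p : ℕ → ℝ := fun k => (k:ℝ)/n*r with hp
  have hpmono : ∀ k : ℕ, p k ≤ p (k+1) := by
    intro k
    apply mul_le_mul_of_nonneg_right _ hr.le
    apply div_le_div_of_nonneg_right _ hn0.le
    push_cast; linarith
  have hppos : ∀ k : ℕ, 0 ≤ p k := by intro k; positivity
  have hpsucc : ∀ k : ℕ, p (k+1) = ((k:ℝ)+1)/n*r := by
    intro k; simp only [hp]; push_cast; ring
  have hpn : p (n^2) = (n:ℝ)*r := by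
    simp only [hp]; push_cast; field_simp
  -- per-interval bounds
  have hbounds : ∀ k : ℕ,
      E (k+1) * (β (p (k+1)) - β (p k))
        ≤ (∫ t in Ioc (p k) (p (k+1)), Real.exp (-t/r) ∂β.measure) ∧
      (∫ t in Ioc (p k) (p (k+1)), Real.exp (-t/r) ∂β.measure)
        ≤ E k * (β (p (k+1)) - β (p k)) := by
    intro k
    have hc : Real.exp (-(((k:ℝ)+1)/n)) = Real.exp (-(p (k+1)/r)) := by
      congr 1
      rw [hpsucc k]
      field_simp
    have hd : Real.exp (-((k:ℝ)/n)) = Real.exp (-(p k/r)) := by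
      congr 1
      simp only [hp]
      field_simp
    have := interval_bounds β r hr (hInt r hr) (hppos k) (hpmono k) hc hd
    constructor
    · have h := this.1
      simp only [hE]
      push_cast
      convert h using 3
    · exact this.2
  -- telescoping identities
  have hβp0 : β (p 0) = 0 := by
    have : p 0 = 0 := by simp [hp]
    rw [this]; exact hβ0 0 le_rfl
  set F : ℕ → ℝ := fun k => E k * β (p k) with hF
  have lower_sum :
      (∑ k ∈ Finset.range (n^2), (E k - E (k+1)) * β (p k))
        ≤ ∑ k ∈ Finset.range (n^2), (∫ t in Ioc (p k) (p (k+1)), Real.exp (-t/r) ∂β.measure) := by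
    have hid : ∀ k ∈ Finset.range (n^2),
        E (k+1) * (β (p (k+1)) - β (p k))
          = (F (k+1) - F k) + (E k - E (k+1)) * β (p k) := by
      intro k _; simp only [hF]; ring
    calc (∑ k ∈ Finset.range (n^2), (E k - E (k+1)) * β (p k))
        ≤ (F (n^2) - F 0) + ∑ k ∈ Finset.range (n^2), (E k - E (k+1)) * β (p k) := by
          have h1 : 0 ≤ F (n^2) := mul_nonneg (Real.exp_pos _).le (beta_nonneg β hβ0 _)
          have h2 : F 0 = 0 := by simp only [hF, hβp0, mul_zero]
          linarith
      _ = ∑ k ∈ Finset.range (n^2), E (k+1) * (β (p (k+1)) - β (p k)) := by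
          rw [Finset.sum_congr rfl hid, Finset.sum_add_distrib, Finset.sum_range_sub F]
      _ ≤ _ := Finset.sum_le_sum fun k _ => (hbounds k).1
  have upper_sum :
      (∑ k ∈ Finset.range (n^2), (∫ t in Ioc (p k) (p (k+1)), Real.exp (-t/r) ∂β.measure))
        ≤ Real.exp (-(n:ℝ)) * β ((n:ℝ)*r)
          + ∑ k ∈ Finset.range (n^2), (E k - E (k+1)) * β (p (k+1)) := by
    have hid : ∀ k ∈ Finset.range (n^2),
        E k * (β (p (k+1)) - β (p k))
          = (F (k+1) - F k) + (E k - E (k+1)) * β (p (k+1)) := by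
      intro k _; simp only [hF]; ring
    have hEn : E (n^2) = Real.exp (-(n:ℝ)) := by
      simp only [hE]
      congr 1
      push_cast
      field_simp
    calc (∑ k ∈ Finset.range (n^2), (∫ t in Ioc (p k) (p (k+1)), Real.exp (-t/r) ∂β.measure))
        ≤ ∑ k ∈ Finset.range (n^2), E k * (β (p (k+1)) - β (p k)) :=
          Finset.sum_le_sum fun k _ => (hbounds k).2
      _ = (F (n^2) - F 0) + ∑ k ∈ Finset.range (n^2), (E k - E (k+1)) * β (p (k+1)) := by
          rw [Finset.sum_congr rfl hid, Finset.sum_add_distrib, Finset.sum_range_sub F]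
      _ = Real.exp (-(n:ℝ)) * β ((n:ℝ)*r)
          + ∑ k ∈ Finset.range (n^2), (E k - E (k+1)) * β (p (k+1)) := by
          have h2 : F 0 = 0 := by simp only [hF, hβp0, mul_zero]
          rw [h2, sub_zero]
          congr 1
          simp only [hF, hEn, hpn]
  -- splitting the integral
  have hsplit : (∫ t in Ici (0:ℝ), Real.exp (-t/r) ∂β.measure)
      = (∫ t in Ioc (0:ℝ) ((n:ℝ)*r), Real.exp (-t/r) ∂β.measure)
        + ∫ t in Ioi ((n:ℝ)*r), Real.exp (-t/r) ∂β.measure := by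
    rw [integral_Ici_eq_Ioi β hβ0, ← Ioc_union_Ioi_eq_Ioi (by positivity : (0:ℝ) ≤ (n:ℝ)*r),
      setIntegral_union (Ioc_disjoint_Ioi le_rfl) measurableSet_Ioi
        ((hInt r hr).mono_set (fun t ht => ht.1.le))
        ((hInt r hr).mono_set (fun t ht => le_of_lt (lt_of_le_of_lt (by positivity : (0:ℝ) ≤ (n:ℝ)*r) ht)))]
  have hpart := partition_sum β r hr n hn (hInt r hr)
  have hpart' : (∫ t in Ioc (0:ℝ) ((n:ℝ)*r), Real.exp (-t/r) ∂β.measure)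
      = ∑ k ∈ Finset.range (n^2), (∫ t in Ioc (p k) (p (k+1)), Real.exp (-t/r) ∂β.measure) := by
    rw [hpart]
    apply Finset.sum_congr rfl
    intro k _
    rw [hpsucc k]
  have htail := tail_bound β r hr n hn hInt
  have htailpos : 0 ≤ ∫ t in Ioi ((n:ℝ)*r), Real.exp (-t/r) ∂β.measure :=
    setIntegral_nonneg measurableSet_Ioi fun t _ => (Real.exp_pos _).le
  constructor
  · calc (∑ k ∈ Finset.range (n^2),
        (Real.exp (-((k:ℝ)/n)) - Real.exp (-(((k:ℝ)+1)/n))) * β ((k:ℝ)/n * r))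
        = ∑ k ∈ Finset.range (n^2), (E k - E (k+1)) * β (p k) := by
          apply Finset.sum_congr rfl
          intro k _
          simp only [hE, hp]
          push_cast
          ring_nf
      _ ≤ ∑ k ∈ Finset.range (n^2), (∫ t in Ioc (p k) (p (k+1)), Real.exp (-t/r) ∂β.measure) :=
          lower_sum
      _ = ∫ t in Ioc (0:ℝ) ((n:ℝ)*r), Real.exp (-t/r) ∂β.measure := hpart'.symm
      _ ≤ _ := by rw [hsplit]; linarith
  · calc (∫ t in Ici (0:ℝ), Real.exp (-t/r) ∂β.measure)
        = (∑ k ∈ Finset.range (n^2), (∫ t in Ioc (p k) (p (k+1)), Real.exp (-t/r) ∂β.measure))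
          + ∫ t in Ioi ((n:ℝ)*r), Real.exp (-t/r) ∂β.measure := by rw [hsplit, hpart']
      _ ≤ (Real.exp (-(n:ℝ)) * β ((n:ℝ)*r)
            + ∑ k ∈ Finset.range (n^2), (E k - E (k+1)) * β (p (k+1)))
          + Real.exp (-(n:ℝ)/2) * (∫ t in Ici (0:ℝ), Real.exp (-t/(2*r)) ∂β.measure) := by
          linarith
      _ = _ := by
          have hS : (∑ k ∈ Finset.range (n^2), (E k - E (k+1)) * β (p (k+1)))
              = ∑ k ∈ Finset.range (n^2),
                  (Real.exp (-((k:ℝ)/n)) - Real.exp (-(((k:ℝ)+1)/n))) * β (((k:ℝ)+1)/n * r) := by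
            apply Finset.sum_congr rfl
            intro k _
            rw [hpsucc k]
            simp only [hE]
            push_cast
            ring_nf
          rw [hS]

lemma exp_neg_integral (a b : ℝ) :
    ∫ u in a..b, Real.exp (-u) = Real.exp (-a) - Real.exp (-b) := by
  have h : ∀ u ∈ uIcc a b, HasDerivAt (fun v : ℝ => -Real.exp (-v)) (Real.exp (-u)) u := by
    intro u _
    have h1 : HasDerivAt (fun v : ℝ => -v) (-1) u := (hasDerivAt_id u).neg
    have h2 := (Real.hasDerivAt_exp (-u)).comp u h1
    have h3 := h2.neg
    exact h3.congr_deriv (by simp)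
  have := intervalIntegral.integral_eq_sub_of_hasDerivAt h
    ((Real.continuous_exp.comp continuous_neg).intervalIntegrable a b)
  rw [this]; ring

lemma uexp_neg_integral (a b : ℝ) :
    ∫ u in a..b, u * Real.exp (-u) = (1+a)*Real.exp (-a) - (1+b)*Real.exp (-b) := by
  have h : ∀ u ∈ uIcc a b, HasDerivAt (fun v : ℝ => -((1+v) * Real.exp (-v)))
      (u * Real.exp (-u)) u := by
    intro u _
    have h1 : HasDerivAt (fun v : ℝ => -v) (-1) u := (hasDerivAt_id u).neg
    have h2 := (Real.hasDerivAt_exp (-u)).comp u h1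
    have h3 : HasDerivAt (fun v : ℝ => 1 + v) 1 u := (hasDerivAt_id u).const_add 1
    have h2' : HasDerivAt (fun v : ℝ => Real.exp (-v)) (Real.exp (-u) * -1) u := by
      simpa [Function.comp_def] using h2
    have h4 := (h3.mul h2').neg
    exact h4.congr_deriv (by ring)
  have := intervalIntegral.integral_eq_sub_of_hasDerivAt h
    ((continuous_id.mul (Real.continuous_exp.comp continuous_neg)).intervalIntegrable a b)
  rw [this]; ring

lemma coeff_bounds (n : ℕ) (hn : 1 ≤ n) :
    (1 - (1+(n:ℝ))*Real.exp (-(n:ℝ)) - 1/n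
      ≤ ∑ k ∈ Finset.range (n^2),
          (Real.exp (-((k:ℝ)/n)) - Real.exp (-(((k:ℝ)+1)/n))) * ((k:ℝ)/n)) ∧
    (∑ k ∈ Finset.range (n^2),
        (Real.exp (-((k:ℝ)/n)) - Real.exp (-(((k:ℝ)+1)/n))) * ((k:ℝ)/n) ≤ 1) ∧
    (∑ k ∈ Finset.range (n^2),
        (Real.exp (-((k:ℝ)/n)) - Real.exp (-(((k:ℝ)+1)/n))) * (((k:ℝ)+1)/n) ≤ 1 + 1/n) := by
  have hn0 : (0:ℝ) < n := by exact_mod_cast hn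
  set q : ℕ → ℝ := fun k => (k:ℝ)/n with hq
  have hqmono : ∀ k : ℕ, q k ≤ q (k+1) := by
    intro k
    apply div_le_div_of_nonneg_right _ hn0.le
    push_cast; linarith
  have hq0 : q 0 = 0 := by simp [hq]
  have hqn : q (n^2) = (n:ℝ) := by simp only [hq]; push_cast; field_simp
  have hqsucc : ∀ k : ℕ, q (k+1) = ((k:ℝ)+1)/n := by intro k; simp only [hq]; push_cast; ring
  have c1 : Continuous fun u:ℝ => u * Real.exp (-u) := by fun_prop
  have c2 : Continuous fun u:ℝ => 1/(n:ℝ) * Real.exp (-u) := by fun_prop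
  have c3 : Continuous fun u:ℝ => u * Real.exp (-u) - 1/(n:ℝ) * Real.exp (-u) := by fun_prop
  have cexp : Continuous fun u:ℝ => Real.exp (-u) := by fun_prop
  have hcoeff : ∀ k : ℕ, Real.exp (-((k:ℝ)/n)) - Real.exp (-(((k:ℝ)+1)/n))
      = ∫ u in q k..q (k+1), Real.exp (-u) := by
    intro k
    rw [exp_neg_integral, hqsucc k]
  have hIsum : ∀ (f : ℝ → ℝ), Continuous f →
      ∑ k ∈ Finset.range (n^2), (∫ u in q k..q (k+1), f u) = ∫ u in (0:ℝ)..(n:ℝ), f u := by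
    intro f hf
    have := intervalIntegral.sum_integral_adjacent_intervals (μ := volume) (a := q) (n := n^2)
      (fun k _ => (hf.intervalIntegrable _ _))
    rw [this, hq0, hqn]
  have key_low : ∀ k : ℕ,
      (∫ u in q k..q (k+1), (u * Real.exp (-u) - 1/n * Real.exp (-u)))
        ≤ (Real.exp (-((k:ℝ)/n)) - Real.exp (-(((k:ℝ)+1)/n))) * ((k:ℝ)/n) := by
    intro k
    rw [hcoeff k, mul_comm, ← intervalIntegral.integral_const_mul]
    apply intervalIntegral.integral_mono_on (hqmono k)
      (c3.intervalIntegrable _ _)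
      ((continuous_const.mul cexp).intervalIntegrable _ _)
    intro u hu
    have h2 : u ≤ ((k:ℝ)+1)/n := by rw [← hqsucc k]; exact hu.2
    have h3 : ((k:ℝ)+1)/n = (k:ℝ)/n + 1/n := by ring
    have h4 : u - 1/n ≤ (k:ℝ)/n := by linarith
    have h5 := (Real.exp_pos (-u)).le
    show u * Real.exp (-u) - 1/n * Real.exp (-u) ≤ (k:ℝ)/n * Real.exp (-u)
    nlinarith
  have key_up : ∀ k : ℕ,
      (Real.exp (-((k:ℝ)/n)) - Real.exp (-(((k:ℝ)+1)/n))) * ((k:ℝ)/n)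
        ≤ ∫ u in q k..q (k+1), u * Real.exp (-u) := by
    intro k
    rw [hcoeff k, mul_comm, ← intervalIntegral.integral_const_mul]
    apply intervalIntegral.integral_mono_on (hqmono k)
      ((continuous_const.mul cexp).intervalIntegrable _ _)
      (c1.intervalIntegrable _ _)
    intro u hu
    have h2 : (k:ℝ)/n ≤ u := hu.1
    have h5 := (Real.exp_pos (-u)).le
    show (k:ℝ)/n * Real.exp (-u) ≤ u * Real.exp (-u)
    nlinarith
  have hup : (∑ k ∈ Finset.range (n^2),
      (Real.exp (-((k:ℝ)/n)) - Real.exp (-(((k:ℝ)+1)/n))) * ((k:ℝ)/n))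
      ≤ 1 - (1+(n:ℝ))*Real.exp (-(n:ℝ)) := by
    calc _ ≤ ∑ k ∈ Finset.range (n^2), ∫ u in q k..q (k+1), u * Real.exp (-u) :=
          Finset.sum_le_sum fun k _ => key_up k
      _ = ∫ u in (0:ℝ)..(n:ℝ), u * Real.exp (-u) := hIsum _ c1
      _ = 1 - (1+(n:ℝ))*Real.exp (-(n:ℝ)) := by
          rw [uexp_neg_integral]; simp
  have hlow : 1 - (1+(n:ℝ))*Real.exp (-(n:ℝ)) - 1/n * (1 - Real.exp (-(n:ℝ)))
      ≤ ∑ k ∈ Finset.range (n^2),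
          (Real.exp (-((k:ℝ)/n)) - Real.exp (-(((k:ℝ)+1)/n))) * ((k:ℝ)/n) := by
    calc 1 - (1+(n:ℝ))*Real.exp (-(n:ℝ)) - 1/n * (1 - Real.exp (-(n:ℝ)))
        = ∫ u in (0:ℝ)..(n:ℝ), (u * Real.exp (-u) - 1/n * Real.exp (-u)) := by
          rw [intervalIntegral.integral_sub (c1.intervalIntegrable _ _)
            (c2.intervalIntegrable _ _),
            intervalIntegral.integral_const_mul, uexp_neg_integral, exp_neg_integral]
          simp
      _ = ∑ k ∈ Finset.range (n^2), ∫ u in q k..q (k+1),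
            (u * Real.exp (-u) - 1/n * Real.exp (-u)) :=
          (hIsum _ c3).symm
      _ ≤ _ := Finset.sum_le_sum fun k _ => key_low k
  have htel : (∑ k ∈ Finset.range (n^2),
      (Real.exp (-((k:ℝ)/n)) - Real.exp (-(((k:ℝ)+1)/n)))) = 1 - Real.exp (-(n:ℝ)) := by
    have := Finset.sum_range_sub (fun m : ℕ => -Real.exp (-((m:ℝ)/n))) (n^2)
    have heq : ∀ k ∈ Finset.range (n^2),
        (Real.exp (-((k:ℝ)/n)) - Real.exp (-(((k:ℝ)+1)/n)))
          = (fun m : ℕ => -Real.exp (-((m:ℝ)/n))) (k+1) - (fun m : ℕ => -Real.exp (-((m:ℝ)/n))) k := by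
      intro k _
      simp only
      push_cast
      ring
    rw [Finset.sum_congr rfl heq, this]
    have h1 : ((n^2 : ℕ):ℝ)/n = (n:ℝ) := by push_cast; field_simp
    rw [h1]
    simp
    ring
  have hexpn : 0 ≤ Real.exp (-(n:ℝ)) := (Real.exp_pos _).le
  have hexpn1 : Real.exp (-(n:ℝ)) ≤ 1 := Real.exp_le_one_iff.2 (neg_nonpos.2 hn0.le)
  refine ⟨?_, ?_, ?_⟩
  · have : 1/(n:ℝ) * (1 - Real.exp (-(n:ℝ))) ≤ 1/n := by
      have h1 : (0:ℝ) ≤ 1/n := by positivity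
      nlinarith
    linarith
  · nlinarith [Real.exp_pos (-(n:ℝ)), Real.exp_nonneg (-(n:ℝ)),
      mul_nonneg (le_of_lt (show (0:ℝ) < 1+(n:ℝ) by linarith)) hexpn]
  · have hsplit : (∑ k ∈ Finset.range (n^2),
        (Real.exp (-((k:ℝ)/n)) - Real.exp (-(((k:ℝ)+1)/n))) * (((k:ℝ)+1)/n))
        = (∑ k ∈ Finset.range (n^2),
            (Real.exp (-((k:ℝ)/n)) - Real.exp (-(((k:ℝ)+1)/n))) * ((k:ℝ)/n))
          + 1/n * ∑ k ∈ Finset.range (n^2),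
              (Real.exp (-((k:ℝ)/n)) - Real.exp (-(((k:ℝ)+1)/n))) := by
      rw [Finset.mul_sum, ← Finset.sum_add_distrib]
      apply Finset.sum_congr rfl
      intro k _
      field_simp
    rw [hsplit, htel]
    have h1 : (0:ℝ) ≤ 1/n := by positivity
    nlinarith [mul_nonneg (le_of_lt (show (0:ℝ) < 1+(n:ℝ) by linarith)) hexpn]

lemma beta_le_G (hβ0 : ∀ t : ℝ, t ≤ 0 → β t = 0)
    {r : ℝ} (hr : 0 < r)
    (hInt : IntegrableOn (fun t => Real.exp (-t / r)) (Set.Ici (0 : ℝ)) β.measure) :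
    β r ≤ Real.exp 1 * ∫ t in Ici (0:ℝ), Real.exp (-t/r) ∂β.measure := by
  have hc : Real.exp (-1) = Real.exp (-(r/r)) := by rw [div_self hr.ne']
  have hd : Real.exp 0 = Real.exp (-((0:ℝ)/r)) := by norm_num
  have h1 := (interval_bounds β r hr hInt le_rfl hr.le hc hd).1
  rw [hβ0 0 le_rfl, sub_zero] at h1
  have h2 : (∫ t in Ioc (0:ℝ) r, Real.exp (-t/r) ∂β.measure)
      ≤ ∫ t in Ici (0:ℝ), Real.exp (-t/r) ∂β.measure := by
    apply setIntegral_mono_set hInt (Eventually.of_forall fun t => (Real.exp_pos _).le)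
      (HasSubset.Subset.eventuallyLE (fun t ht => ht.1.le))
  have h3 : Real.exp (-1) * β r ≤ ∫ t in Ici (0:ℝ), Real.exp (-t/r) ∂β.measure := le_trans h1 h2
  have h4 : Real.exp 1 * Real.exp (-1) = 1 := by
    rw [← Real.exp_add]; norm_num
  calc β r = Real.exp 1 * (Real.exp (-1) * β r) := by rw [← mul_assoc, h4, one_mul]
    _ ≤ Real.exp 1 * ∫ t in Ici (0:ℝ), Real.exp (-t/r) ∂β.measure :=
        mul_le_mul_of_nonneg_left h3 (Real.exp_pos 1).le

lemma meas_helper (g : ℝ → ℝ) (hg : Monotone (fun t => if 0 < t then g t else 0)) :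
    Measurable (fun t => if 0 < t then g t / t else 0) := by
  have h2 := hg.measurable
  have h3 : Measurable fun t : ℝ => if 0 < t then t⁻¹ else 0 :=
    Measurable.ite (measurableSet_Ioi (a := (0:ℝ))) measurable_inv measurable_const
  have he : (fun t : ℝ => if 0 < t then g t / t else 0)
      = fun t => (if 0 < t then g t else 0) * (if 0 < t then t⁻¹ else 0) := by
    funext t; by_cases ht : 0 < t <;> simp [ht, div_eq_mul_inv]
  rw [he]; exact h2.mul h3

/-- **Weak*-Karamata theorem.** Let `ω̃` be a dilation-invariant state on `L^∞(ℝ)`.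
Let `β` be a nondecreasing right-continuous function (bundled as a `StieltjesFunction`)
vanishing on `(-∞, 0]`, whose Laplace–Stieltjes transform
`h(r) = ∫_{[0,∞)} e^{-t/r} dμ_β(t)` exists for every `r > 0`.  If `r ↦ h(r)/r`
(extended by `0` for `r ≤ 0`) is bounded, then `t ↦ β(t)/t` (extended by `0` for `t ≤ 0`)
is bounded and `ω̃(r ↦ h(r)/r) = ω̃(t ↦ β(t)/t)`. -/
theorem weak_star_karamata
    (ω : LinfState (volume : Measure ℝ))
    (hdil : ∀ a : ℝ, 0 < a → ∀ f : ℝ → ℝ, MemLinf volume f →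
      ω.toFun (fun x => f (a * x)) = ω.toFun f)
    (β : StieltjesFunction ℝ) (hβ0 : ∀ t : ℝ, t ≤ 0 → β t = 0)
    (hInt : ∀ r : ℝ, 0 < r →
      IntegrableOn (fun t => Real.exp (-t / r)) (Set.Ici (0 : ℝ)) β.measure)
    (H : ℝ → ℝ)
    (hH : H = fun r =>
      if 0 < r then (∫ t in Set.Ici (0 : ℝ), Real.exp (-t / r) ∂β.measure) / r else 0)
    (hHbdd : ∃ C : ℝ, ∀ r : ℝ, |H r| ≤ C)
    (B : ℝ → ℝ) (hB : B = fun t => if 0 < t then β t / t else 0) :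
    (∃ C : ℝ, ∀ t : ℝ, |B t| ≤ C) ∧ ω.toFun H = ω.toFun B := by
  obtain ⟨C, hC⟩ := hHbdd
  have hC0 : (0:ℝ) ≤ C := le_trans (abs_nonneg _) (hC 0)
  set M : ℝ := Real.exp 1 * C with hM
  clear_value M
  have hM0 : 0 ≤ M := by rw [hM]; exact mul_nonneg (Real.exp_pos 1).le hC0
  have hBnn : ∀ t, 0 ≤ B t := by
    intro t; rw [hB]
    by_cases ht : 0 < t
    · simp only [ht, if_true]
      exact div_nonneg (beta_nonneg β hβ0 t) ht.le
    · simp [ht]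
  have hBzero : ∀ t : ℝ, t ≤ 0 → B t = 0 := by
    intro t ht; rw [hB]; simp [not_lt.2 ht]
  have hHval : ∀ r : ℝ, 0 < r →
      H r = (∫ t in Set.Ici (0:ℝ), Real.exp (-t / r) ∂β.measure) / r := by
    intro r hr; rw [hH]; simp [hr]
  have hBM : ∀ t, B t ≤ M := by
    intro t
    by_cases ht : 0 < t
    · have h1 := beta_le_G β hβ0 ht (hInt t ht)
      have h2 : B t = β t / t := by rw [hB]; simp [ht]
      have h3 : H t ≤ C := le_trans (le_abs_self _) (hC t)
      have h4 := hHval t ht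
      rw [h2, hM, div_le_iff₀ ht]
      calc (β t : ℝ) ≤ Real.exp 1 * ∫ s in Ici (0:ℝ), Real.exp (-s/t) ∂β.measure := h1
        _ = Real.exp 1 * (((∫ s in Ici (0:ℝ), Real.exp (-s/t) ∂β.measure)/t) * t) := by
            field_simp
        _ = Real.exp 1 * (H t * t) := by rw [← h4]
        _ ≤ Real.exp 1 * (C * t) :=
            mul_le_mul_of_nonneg_left (mul_le_mul_of_nonneg_right h3 ht.le) (Real.exp_pos 1).le
        _ = Real.exp 1 * C * t := by ring
    · rw [hBzero t (not_lt.1 ht)]; exact hM0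
  have hBabs : ∀ t, |B t| ≤ M := fun t => by rw [abs_of_nonneg (hBnn t)]; exact hBM t
  have hBmeas : Measurable B := by
    rw [hB]
    apply meas_helper
    intro s t hst
    by_cases hs : 0 < s
    · have htp : 0 < t := lt_of_lt_of_le hs hst
      simp only [hs, htp, if_true]
      exact β.mono hst
    · by_cases htp : 0 < t
      · simp only [hs, htp, if_true, if_false]
        exact beta_nonneg β hβ0 t
      · simp [hs, htp]
  have hHmeas : Measurable H := by
    rw [hH]
    apply meas_helper
    intro s t hst
    by_cases hs : 0 < s
    · have htp : 0 < t := lt_of_lt_of_le hs hst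
      simp only [hs, htp, if_true]
      apply setIntegral_mono_on (hInt s hs) (hInt t htp) measurableSet_Ici
      intro x hx
      apply Real.exp_le_exp.2
      rw [neg_div, neg_div, neg_le_neg_iff]
      exact div_le_div_of_nonneg_left hx hs hst
    · by_cases htp : 0 < t
      · simp only [hs, htp, if_true, if_false]
        exact G_nonneg β t
      · simp [hs, htp]
  have hBmem : MemLinf volume B := memLinf_of_bound hBmeas hBabs
  have hHmem : MemLinf volume H := memLinf_of_bound hHmeas hC
  refine ⟨⟨M, hBabs⟩, ?_⟩
  have hωB0 : 0 ≤ ω.toFun B := ω.nonneg B hBmem (Eventually.of_forall hBnn)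
  have hωBM : ω.toFun B ≤ M := by
    have := ω.mono hBmem (memLinf_const M) hBM
    rwa [ω.map_const] at this
  set E : ℕ → ℝ := fun n => M*(1/(n:ℝ))
      + ((n:ℝ)*M*Real.exp (-(n:ℝ)) + 2*C*Real.exp (-(n:ℝ)/2))
      + (Real.exp (-(n:ℝ)) + (n:ℝ)*Real.exp (-(n:ℝ)) + 1/(n:ℝ))*M with hE
  clear_value E
  have key : ∀ n : ℕ, 1 ≤ n → |ω.toFun H - ω.toFun B| ≤ E n := by
    intro n hn
    have hn0 : (0:ℝ) < n := by exact_mod_cast hn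
    set ε : ℝ := (n:ℝ)*M*Real.exp (-(n:ℝ)) + 2*C*Real.exp (-(n:ℝ)/2) with hε
    clear_value ε
    have hε0 : 0 ≤ ε := by
      rw [hε]
      have : 0 ≤ (n:ℝ)*M*Real.exp (-(n:ℝ)) := by
        apply mul_nonneg (mul_nonneg hn0.le hM0) (Real.exp_pos _).le
      positivity
    set L : ℝ → ℝ := fun r => ∑ k ∈ Finset.range (n^2),
      (Real.exp (-((k:ℝ)/n)) - Real.exp (-(((k:ℝ)+1)/n))) * ((k:ℝ)/n) * B ((k:ℝ)/n * r) with hL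
    set U : ℝ → ℝ := fun r => ∑ k ∈ Finset.range (n^2),
      (Real.exp (-((k:ℝ)/n)) - Real.exp (-(((k:ℝ)+1)/n))) * (((k:ℝ)+1)/n)
        * B ((((k:ℝ)+1)/n) * r) with hU
    clear_value L U
    have hLapp : ∀ r, L r = ∑ k ∈ Finset.range (n^2),
        (Real.exp (-((k:ℝ)/n)) - Real.exp (-(((k:ℝ)+1)/n))) * ((k:ℝ)/n) * B ((k:ℝ)/n * r) :=
      fun r => by rw [hL]
    have hUapp : ∀ r, U r = ∑ k ∈ Finset.range (n^2),
        (Real.exp (-((k:ℝ)/n)) - Real.exp (-(((k:ℝ)+1)/n))) * (((k:ℝ)+1)/n)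
          * B ((((k:ℝ)+1)/n) * r) :=
      fun r => by rw [hU]
    have hval : ∀ a : ℝ, 0 ≤ a → ∀ r : ℝ, 0 < r → a * B (a*r) * r = β (a*r) := by
      intro a ha r hr
      rcases eq_or_lt_of_le ha with h | h
      · rw [← h]
        simp [hβ0 0 le_rfl]
      · have har : 0 < a*r := mul_pos h hr
        rw [hB]
        simp only [har, if_true]
        field_simp
    -- pointwise lower bound
    have hLH : ∀ r, L r ≤ H r := by
      intro r
      by_cases hr : 0 < r
      · rw [hHval r hr, hLapp r, le_div_iff₀ hr]
        have hterm : ∀ k ∈ Finset.range (n^2),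
            (Real.exp (-((k:ℝ)/n)) - Real.exp (-(((k:ℝ)+1)/n))) * ((k:ℝ)/n)
              * B ((k:ℝ)/n * r) * r
            = (Real.exp (-((k:ℝ)/n)) - Real.exp (-(((k:ℝ)+1)/n))) * β ((k:ℝ)/n * r) := by
          intro k _
          have h := hval ((k:ℝ)/n) (by positivity) r hr
          calc (Real.exp (-((k:ℝ)/n)) - Real.exp (-(((k:ℝ)+1)/n))) * ((k:ℝ)/n)
                * B ((k:ℝ)/n * r) * r
              = (Real.exp (-((k:ℝ)/n)) - Real.exp (-(((k:ℝ)+1)/n)))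
                * (((k:ℝ)/n) * B ((k:ℝ)/n * r) * r) := by ring
            _ = (Real.exp (-((k:ℝ)/n)) - Real.exp (-(((k:ℝ)+1)/n))) * β ((k:ℝ)/n * r) := by
                rw [h]
        have hsm : (∑ k ∈ Finset.range (n^2),
            (Real.exp (-((k:ℝ)/n)) - Real.exp (-(((k:ℝ)+1)/n))) * ((k:ℝ)/n)
              * B ((k:ℝ)/n * r)) * r
            = ∑ k ∈ Finset.range (n^2),
            (Real.exp (-((k:ℝ)/n)) - Real.exp (-(((k:ℝ)+1)/n))) * ((k:ℝ)/n)
              * B ((k:ℝ)/n * r) * r := Finset.sum_mul _ _ _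
        rw [hsm, Finset.sum_congr rfl hterm]
        exact (main_est β hβ0 hInt hr n hn).1
      · have hr' : r ≤ 0 := not_lt.1 hr
        have hL0 : L r = 0 := by
          rw [hLapp r]
          apply Finset.sum_eq_zero
          intro k _
          rw [hBzero _ (mul_nonpos_of_nonneg_of_nonpos (by positivity) hr'), mul_zero]
        rw [hL0, hH]
        simp [hr]
    -- pointwise upper bound
    have hHU : ∀ r, H r ≤ U r + ε := by
      intro r
      by_cases hr : 0 < r
      · rw [hHval r hr, div_le_iff₀ hr]
        have hme := (main_est β hβ0 hInt hr n hn).2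
        have hterm : ∀ k ∈ Finset.range (n^2),
            (Real.exp (-((k:ℝ)/n)) - Real.exp (-(((k:ℝ)+1)/n))) * β (((k:ℝ)+1)/n * r)
            = (Real.exp (-((k:ℝ)/n)) - Real.exp (-(((k:ℝ)+1)/n))) * (((k:ℝ)+1)/n)
                * B ((((k:ℝ)+1)/n) * r) * r := by
          intro k _
          have h := hval (((k:ℝ)+1)/n) (by positivity) r hr
          calc (Real.exp (-((k:ℝ)/n)) - Real.exp (-(((k:ℝ)+1)/n))) * β (((k:ℝ)+1)/n * r)
              = (Real.exp (-((k:ℝ)/n)) - Real.exp (-(((k:ℝ)+1)/n)))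
                * ((((k:ℝ)+1)/n) * B ((((k:ℝ)+1)/n) * r) * r) := by rw [h]
            _ = (Real.exp (-((k:ℝ)/n)) - Real.exp (-(((k:ℝ)+1)/n))) * (((k:ℝ)+1)/n)
                * B ((((k:ℝ)+1)/n) * r) * r := by ring
        have h1 : Real.exp (-(n:ℝ)) * β ((n:ℝ) * r) ≤ Real.exp (-(n:ℝ)) * ((n:ℝ) * M * r) := by
          apply mul_le_mul_of_nonneg_left _ (Real.exp_pos _).le
          have h := hval (n:ℝ) hn0.le r hr
          rw [← h]
          exact mul_le_mul_of_nonneg_right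
            (mul_le_mul_of_nonneg_left (hBM ((n:ℝ)*r)) hn0.le) hr.le
        have h2 : (∫ t in Ici (0:ℝ), Real.exp (-t/(2*r)) ∂β.measure) ≤ C * (2*r) := by
          have h4 := hHval (2*r) (by linarith)
          have h3 : H (2*r) ≤ C := le_trans (le_abs_self _) (hC _)
          rw [h4, div_le_iff₀ (by linarith : (0:ℝ) < 2*r)] at h3
          exact h3
        have h5 : Real.exp (-(n:ℝ)/2) * (∫ t in Ici (0:ℝ), Real.exp (-t/(2*r)) ∂β.measure)
            ≤ Real.exp (-(n:ℝ)/2) * (C * (2*r)) :=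
          mul_le_mul_of_nonneg_left h2 (Real.exp_pos _).le
        calc (∫ t in Ici (0:ℝ), Real.exp (-t/r) ∂β.measure)
            ≤ Real.exp (-(n:ℝ)) * β ((n:ℝ) * r)
              + (∑ k ∈ Finset.range (n^2),
                  (Real.exp (-((k:ℝ)/n)) - Real.exp (-(((k:ℝ)+1)/n))) * β (((k:ℝ)+1)/n * r))
              + Real.exp (-(n:ℝ)/2)
                * (∫ t in Ici (0:ℝ), Real.exp (-t/(2*r)) ∂β.measure) := hme
          _ ≤ Real.exp (-(n:ℝ)) * ((n:ℝ) * M * r)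
              + (∑ k ∈ Finset.range (n^2),
                  (Real.exp (-((k:ℝ)/n)) - Real.exp (-(((k:ℝ)+1)/n))) * (((k:ℝ)+1)/n)
                    * B ((((k:ℝ)+1)/n) * r) * r)
              + Real.exp (-(n:ℝ)/2) * (C * (2*r)) := by
              rw [Finset.sum_congr rfl hterm]
              exact add_le_add (add_le_add h1 le_rfl) h5
          _ = (U r + ε) * r := by
              have hsm : (∑ k ∈ Finset.range (n^2),
                  (Real.exp (-((k:ℝ)/n)) - Real.exp (-(((k:ℝ)+1)/n))) * (((k:ℝ)+1)/n)
                    * B ((((k:ℝ)+1)/n) * r)) * r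
                  = ∑ k ∈ Finset.range (n^2),
                  (Real.exp (-((k:ℝ)/n)) - Real.exp (-(((k:ℝ)+1)/n))) * (((k:ℝ)+1)/n)
                    * B ((((k:ℝ)+1)/n) * r) * r := Finset.sum_mul _ _ _
              rw [hUapp r, hε, add_mul, hsm]
              ring
      · have hr' : r ≤ 0 := not_lt.1 hr
        have hU0 : U r = 0 := by
          rw [hUapp r]
          apply Finset.sum_eq_zero
          intro k _
          rw [hBzero _ (mul_nonpos_of_nonneg_of_nonpos (by positivity) hr'), mul_zero]
        rw [hU0, hH]
        simp [hr, hε0]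
    -- MemLinf of the pieces
    have hinner : ∀ a : ℝ, MemLinf volume (fun r => B (a * r)) := fun a =>
      memLinf_of_bound (hBmeas.comp (measurable_const_mul a)) (fun x => hBabs _)
    have hgmem : ∀ (a d : ℝ), MemLinf volume (fun r => d * B (a * r)) := by
      intro a d
      refine memLinf_of_bound (C := |d| * M)
        ((hBmeas.comp (measurable_const_mul a)).const_mul d) (fun x => ?_)
      rw [abs_mul]
      exact mul_le_mul_of_nonneg_left (hBabs _) (abs_nonneg d)
    have hLmem : MemLinf volume L := by
      rw [hL]
      exact memLinf_sum _ _ (fun k _ => hgmem _ _)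
    have hUmem : MemLinf volume U := by
      rw [hU]
      exact memLinf_sum _ _ (fun k _ => hgmem _ _)
    -- ω of the comparison functions
    have homega : ∀ (a d : ℝ), 0 < a →
        ω.toFun (fun r => d * B (a * r)) = d * ω.toFun B := by
      intro a d ha
      have heq : (fun r => d * B (a * r)) = d • (fun r => B (a * r)) := by
        funext r; simp
      rw [heq, ω.map_smul d _ (hinner a), hdil a ha B hBmem]
    have hωL : ω.toFun L
        = (∑ k ∈ Finset.range (n^2),
            (Real.exp (-((k:ℝ)/n)) - Real.exp (-(((k:ℝ)+1)/n))) * ((k:ℝ)/n)) * ω.toFun B := by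
      rw [hL, ω.map_sum _ _ (fun (k : ℕ) _ => hgmem ((k:ℝ)/n) _), Finset.sum_mul]
      apply Finset.sum_congr rfl
      intro k _
      rcases Nat.eq_zero_or_pos k with hk | hk
      · subst hk
        simp only [Nat.cast_zero, zero_div, mul_zero, zero_mul]
        exact ω.map_const 0
      · exact homega _ _ (by positivity)
    have hωU : ω.toFun U
        = (∑ k ∈ Finset.range (n^2),
            (Real.exp (-((k:ℝ)/n)) - Real.exp (-(((k:ℝ)+1)/n))) * (((k:ℝ)+1)/n))
          * ω.toFun B := by
      rw [hU, ω.map_sum _ _ (fun (k : ℕ) _ => hgmem (((k:ℝ)+1)/n) _), Finset.sum_mul]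
      apply Finset.sum_congr rfl
      intro k _
      exact homega _ _ (by positivity)
    -- ω inequalities
    have hωLH : ω.toFun L ≤ ω.toFun H := ω.mono hLmem hHmem hLH
    have hωHU : ω.toFun H ≤ ω.toFun U + ε := by
      have hmem2 : MemLinf volume (U + fun _ => ε) := hUmem.add (memLinf_const ε)
      have h := ω.mono hHmem hmem2 (fun r => by
        simpa [Pi.add_apply] using hHU r)
      rwa [ω.map_add _ _ hUmem (memLinf_const ε), ω.map_const] at h
    obtain ⟨hS1, hS2, hS3⟩ := coeff_bounds n hn
    rw [hωL] at hωLH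
    rw [hωU] at hωHU
    -- final arithmetic
    have hup : ω.toFun H - ω.toFun B ≤ M*(1/(n:ℝ)) + ε := by
      have e1 : (∑ k ∈ Finset.range (n^2),
          (Real.exp (-((k:ℝ)/n)) - Real.exp (-(((k:ℝ)+1)/n))) * (((k:ℝ)+1)/n)) * ω.toFun B
          ≤ (1 + 1/(n:ℝ)) * ω.toFun B :=
        mul_le_mul_of_nonneg_right hS3 hωB0
      have e2 : (1/(n:ℝ)) * ω.toFun B ≤ (1/(n:ℝ)) * M :=
        mul_le_mul_of_nonneg_left hωBM (by positivity)
      have e3 : (1 + 1/(n:ℝ)) * ω.toFun B = ω.toFun B + (1/(n:ℝ)) * ω.toFun B := by ring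
      have e4 : M*(1/(n:ℝ)) = (1/(n:ℝ)) * M := by ring
      linarith only [hωHU, e1, e2, e3, e4]
    have hdown : ω.toFun B - ω.toFun H
        ≤ (Real.exp (-(n:ℝ)) + (n:ℝ)*Real.exp (-(n:ℝ)) + 1/(n:ℝ))*M := by
      set κ : ℝ := (1+(n:ℝ))*Real.exp (-(n:ℝ)) + 1/(n:ℝ) with hκ
      clear_value κ
      have hκ0 : 0 ≤ κ := by rw [hκ]; positivity
      have e1 : (1 - κ) * ω.toFun B ≤ (∑ k ∈ Finset.range (n^2),
          (Real.exp (-((k:ℝ)/n)) - Real.exp (-(((k:ℝ)+1)/n))) * ((k:ℝ)/n)) * ω.toFun B := by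
        apply mul_le_mul_of_nonneg_right _ hωB0
        rw [hκ]
        linarith
      have e2 : κ * ω.toFun B ≤ κ * M := mul_le_mul_of_nonneg_left hωBM hκ0
      have e3 : (1 - κ) * ω.toFun B = ω.toFun B - κ * ω.toFun B := by ring
      have e4 : κ * M = (Real.exp (-(n:ℝ)) + (n:ℝ)*Real.exp (-(n:ℝ)) + 1/(n:ℝ))*M := by
        rw [hκ]; ring
      linarith only [hωLH, e1, e2, e3, e4]
    have hEval : E n = M*(1/(n:ℝ))
        + ((n:ℝ)*M*Real.exp (-(n:ℝ)) + 2*C*Real.exp (-(n:ℝ)/2))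
        + (Real.exp (-(n:ℝ)) + (n:ℝ)*Real.exp (-(n:ℝ)) + 1/(n:ℝ))*M := by rw [hE]
    have hpos1 : 0 ≤ M*(1/(n:ℝ)) := mul_nonneg hM0 (by positivity)
    have hpos3 : 0 ≤ (Real.exp (-(n:ℝ)) + (n:ℝ)*Real.exp (-(n:ℝ)) + 1/(n:ℝ))*M :=
      mul_nonneg (by positivity) hM0
    rw [abs_sub_le_iff]
    constructor
    · rw [hEval]
      linarith only [hup, hpos3, hε]
    · rw [hEval]
      linarith only [hdown, hpos1, hε, hε0]
  -- the error bound tends to zero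
  have texp : Tendsto (fun n : ℕ => Real.exp (-(n:ℝ))) atTop (nhds 0) := by
    have h := Real.tendsto_exp_neg_atTop_nhds_zero.comp (tendsto_natCast_atTop_atTop (R := ℝ))
    simpa [Function.comp_def] using h
  have tnexp : Tendsto (fun n : ℕ => (n:ℝ)*Real.exp (-(n:ℝ))) atTop (nhds 0) := by
    have h := (Real.tendsto_pow_mul_exp_neg_atTop_nhds_zero 1).comp
      (tendsto_natCast_atTop_atTop (R := ℝ))
    simpa [Function.comp_def] using h
  have thalf : Tendsto (fun n : ℕ => Real.exp (-(n:ℝ)/2)) atTop (nhds 0) := by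
    have hdiv : Tendsto (fun n : ℕ => (n:ℝ)/2) atTop atTop :=
      (tendsto_natCast_atTop_atTop (R := ℝ)).atTop_div_const (by norm_num)
    have h := Real.tendsto_exp_neg_atTop_nhds_zero.comp hdiv
    simpa [Function.comp_def, neg_div] using h
  have tinv : Tendsto (fun n : ℕ => 1/(n:ℝ)) atTop (nhds 0) :=
    tendsto_one_div_atTop_nhds_zero_nat
  have htend : Tendsto E atTop (nhds 0) := by
    have tmid : Tendsto (fun n : ℕ => (n:ℝ)*M*Real.exp (-(n:ℝ))) atTop (nhds 0) := by
      have h := tnexp.const_mul M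
      rw [mul_zero] at h
      exact Filter.Tendsto.congr (fun n => by ring) h
    have h := ((tinv.const_mul M).add (tmid.add (thalf.const_mul (2*C)))).add
      (((texp.add tnexp).add tinv).mul_const M)
    rw [hE]
    simpa using h
  have habs : |ω.toFun H - ω.toFun B| ≤ 0 :=
    ge_of_tendsto htend (eventually_atTop.2 ⟨1, fun n hn => key n hn⟩)
  exact sub_eq_zero.1 (abs_eq_zero.1 (le_antisymm habs (abs_nonneg _)))
end
end
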